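/- arXiv:1308.1695 — 7 statements merged into one kernel-verified Lean document; each statement's English description precedes it below -/
import Mathlib

section
/- Let R be a commutative ℚ-algebra equipped with two derivations d₁, d₂ : R → R, let Γ ∈ R, and write D²x := d₂(d₂x) − Γ·d₂x. Let (F_g)_{g≥0} be a sequence in R and define U := d₂F₀, V := d₁F₁ − (1/2)·D²F₀, and W := d₁F₀ + (1/2)·(d₂F₀)². Then the master equation holds order by order in the string coupling for F = Σ_{g≥0} g_s^{2g−2} F_g — that is, for every g ≥ 0 one has d₁F_g + U·d₂F_g − (1/2)·D²F_{g−1} − (1/2)·Σ_{h=0}^{g} (d₂F_h)·(d₂F_{g−h}) = W·[g=0] + V·[g=1], with the convention F_{−1} := 0 and where [P] is 1 if P holds and 0 otherwise — if and only if the holomorphic anomaly equations hold: for every g ≥ 2, d₁F_g = (1/2)·( D²F_{g−1} + Σ_{h=1}^{g−1} (d₂F_{g−h})·(d₂F_h) ). -/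
private lemma sum_split {R : Type*} [CommRing R] (a : ℕ → R) (k : ℕ) :
    ∑ h ∈ Finset.range (k + 2 + 1), a h * a (k + 2 - h)
      = a 0 * a (k + 2) + a (k + 2) * a 0
        + ∑ h ∈ Finset.Icc 1 (k + 1), a (k + 2 - h) * a h := by
  rw [Finset.sum_range_succ, Finset.sum_range_succ', ← Finset.Ico_add_one_right_eq_Icc,
    Finset.sum_Ico_eq_sum_range]
  simp only [Nat.sub_self, Nat.sub_zero, Nat.add_sub_cancel, Nat.succ_sub_one]
  have : ∀ i ∈ Finset.range (k + 1),
      a (k + 2 - (1 + i)) * a (1 + i) = a (i + 1) * a (k + 2 - (i + 1)) := by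
    intro i _; rw [mul_comm, add_comm 1 i]
  rw [Finset.sum_congr rfl this]
  ring

private lemma half_add_half {R : Type*} [CommRing R] [Algebra ℚ R] :
    algebraMap ℚ R 2⁻¹ + algebraMap ℚ R 2⁻¹ = 1 := by
  rw [← map_add, ← map_one (algebraMap ℚ R)]
  norm_num

/-- The master equation for the full free energy `F = Σ_g g_s^{2g−2} F_g`, with
`U := d₂F₀`, `V := d₁F₁ − (1/2)D²F₀` and `W := d₁F₀ + (1/2)(d₂F₀)²`
(where `D²x := d₂(d₂x) − Γ·d₂x`), holds order by order in the string coupling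
if and only if the holomorphic anomaly equations hold for every genus `g ≥ 2`. -/
theorem master_equation_iff_holomorphic_anomaly
    {R : Type*} [CommRing R] [Algebra ℚ R]
    (d₁ d₂ : Derivation ℚ R R) (Γ : R) (F : ℕ → R) :
    (∀ g : ℕ,
        d₁ (F g) + d₂ (F 0) * d₂ (F g)
          - (2 : ℚ)⁻¹ • (d₂ (d₂ (if g = 0 then 0 else F (g - 1)))
              - Γ * d₂ (if g = 0 then 0 else F (g - 1)))
          - (2 : ℚ)⁻¹ • ∑ h ∈ Finset.range (g + 1), d₂ (F h) * d₂ (F (g - h))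
        = (if g = 0 then d₁ (F 0) + (2 : ℚ)⁻¹ • (d₂ (F 0) * d₂ (F 0)) else 0)
          + (if g = 1 then d₁ (F 1)
              - (2 : ℚ)⁻¹ • (d₂ (d₂ (F 0)) - Γ * d₂ (F 0)) else 0))
    ↔ (∀ g : ℕ, 2 ≤ g →
        d₁ (F g)
          = (2 : ℚ)⁻¹ • (d₂ (d₂ (F (g - 1))) - Γ * d₂ (F (g - 1))
              + ∑ h ∈ Finset.Icc 1 (g - 1), d₂ (F (g - h)) * d₂ (F h))) := by
  have h2 : algebraMap ℚ R 2⁻¹ + algebraMap ℚ R 2⁻¹ = 1 := half_add_half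
  constructor
  · intro H g hg
    obtain ⟨k, rfl⟩ : ∃ k, g = k + 2 := ⟨g - 2, (Nat.sub_add_cancel hg).symm⟩
    have h := H (k + 2)
    simp only [if_neg (by omega : ¬ k + 2 = 0), if_neg (by omega : ¬ k + 2 = 1),
      add_zero, show k + 2 - 1 = k + 1 from rfl,
      sum_split (fun n => d₂ (F n)) k, Algebra.smul_def] at h
    simp only [show k + 2 - 1 = k + 1 from rfl, Algebra.smul_def]
    linear_combination h + d₂ (F 0) * d₂ (F (k + 2)) * h2
  · intro H g
    match g with
    | 0 =>
      simp only [if_true, eq_self_iff_true, if_pos rfl, if_neg (by omega : ¬ (0:ℕ) = 1), map_zero, mul_zero,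
        zero_add, Finset.sum_range_one, Nat.sub_zero, add_zero, sub_zero, zero_sub, neg_zero,
        Algebra.smul_def]
      linear_combination - d₂ (F 0) * d₂ (F 0) * h2
    | 1 =>
      simp only [if_true, eq_self_iff_true, if_neg (by omega : ¬ (1:ℕ) = 0), if_pos rfl, Nat.sub_self,
        Finset.sum_range_succ, Finset.sum_range_one, Nat.sub_zero, zero_add,
        show (1:ℕ) - 1 = 0 from rfl, Algebra.smul_def]
      linear_combination - d₂ (F 0) * d₂ (F 1) * h2
    | (k + 2) =>
      have h := H (k + 2) (by omega)
      simp only [show k + 2 - 1 = k + 1 from rfl, Algebra.smul_def] at h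
      simp only [if_neg (by omega : ¬ k + 2 = 0), if_neg (by omega : ¬ k + 2 = 1),
        add_zero, show k + 2 - 1 = k + 1 from rfl,
        sum_split (fun n => d₂ (F n)) k, Algebra.smul_def]
      linear_combination h - d₂ (F 0) * d₂ (F (k + 2)) * h2
end

section
/- Let R be a commutative ℚ-algebra with a derivation δ : R → R, and fix C, f, f̃, α ∈ R. On the polynomial ring R[S], define D₁p := p^δ + (f − C·S²)·(dp/dS), where p^δ applies δ to each coefficient of p; define D₂p := D₁(D₁p) − (f̃ − C·S)·D₁p; and set q₁ := (1/2)·C·S + α. Suppose (F_g)_{g≥2} is a sequence in R[S] satisfying the holomorphic anomaly equations in propagator form: dF₂/dS = (1/2)·( D₁q₁ − (f̃ − C·S)·q₁ + q₁² ), and for every g ≥ 3: dF_g/dS = (1/2)·D₂F_{g−1} + q₁·D₁F_{g−1} + (1/2)·Σ_{h=2}^{g−2} (D₁F_{g−h})·(D₁F_h). Then for every g ≥ 2, the degree of F_g as a polynomial in S is at most 3g − 3. -/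
open Polynomial

/-- Coefficientwise application of a map `δ : R → R` to a polynomial (the operation
`p ↦ p^δ`). -/
noncomputable def coeffwise {R : Type*} [CommRing R] (δ : R → R) (p : Polynomial R) :
    Polynomial R :=
  p.sum fun i a => Polynomial.C (δ a) * Polynomial.X ^ i

/-- The covariant derivative `D₁ p = p^δ + (f − C·S²)·dp/dS` on `R[S]`. -/
noncomputable def covD1 {R : Type*} [CommRing R] (δ : R → R) (c f : R)
    (p : Polynomial R) : Polynomial R :=
  coeffwise δ p + (Polynomial.C f - Polynomial.C c * Polynomial.X ^ 2) * derivative p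

/-- The second covariant derivative `D₂ p = D₁(D₁ p) − (f̃ − C·S)·D₁ p` on `R[S]`. -/
noncomputable def covD2 {R : Type*} [CommRing R] (δ : R → R) (c f ft : R)
    (p : Polynomial R) : Polynomial R :=
  covD1 δ c f (covD1 δ c f p) - (Polynomial.C ft - Polynomial.C c * Polynomial.X) * covD1 δ c f p

lemma natDegree_coeffwise_le {R : Type*} [CommRing R] (δ : R → R) (p : Polynomial R) :
    (coeffwise δ p).natDegree ≤ p.natDegree := by
  unfold coeffwise
  rw [Polynomial.sum]
  refine Polynomial.natDegree_sum_le_of_forall_le _ _ fun i hi => ?_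
  refine (natDegree_mul_le).trans ?_
  have hx : (X ^ i : Polynomial R).natDegree ≤ i :=
    (natDegree_pow_le).trans (by simpa using Nat.mul_le_mul_left i natDegree_X_le)
  have := Polynomial.le_natDegree_of_mem_supp i hi
  simp only [natDegree_C, zero_add]
  omega

lemma natDegree_covD1_le {R : Type*} [CommRing R] (δ : R → R) (c f : R) (p : Polynomial R) :
    (covD1 δ c f p).natDegree ≤ p.natDegree + 1 := by
  unfold covD1
  refine (natDegree_add_le _ _).trans (max_le ((natDegree_coeffwise_le δ p).trans (by omega)) ?_)
  rcases Nat.eq_zero_or_pos p.natDegree with h0 | h0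
  · obtain ⟨a, rfl⟩ := Polynomial.natDegree_eq_zero.mp h0
    simp
  · refine natDegree_mul_le.trans ?_
    have hx : (X ^ 2 : Polynomial R).natDegree ≤ 2 :=
      (natDegree_pow_le).trans (by simpa using Nat.mul_le_mul_left 2 natDegree_X_le)
    have h1 : (Polynomial.C f - Polynomial.C c * Polynomial.X ^ 2).natDegree ≤ 2 := by
      refine (natDegree_sub_le _ _).trans (max_le (by simp) ?_)
      refine natDegree_mul_le.trans (by simp; omega)
    have h2 := Polynomial.natDegree_derivative_le p
    omega

lemma natDegree_covD2_le {R : Type*} [CommRing R] (δ : R → R) (c f ft : R) (p : Polynomial R) :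
    (covD2 δ c f ft p).natDegree ≤ p.natDegree + 2 := by
  unfold covD2
  refine (natDegree_sub_le _ _).trans (max_le ?_ ?_)
  · exact ((natDegree_covD1_le δ c f _).trans (by
      have := natDegree_covD1_le δ c f p; omega))
  · refine natDegree_mul_le.trans ?_
    have h1 : (Polynomial.C ft - Polynomial.C c * Polynomial.X).natDegree ≤ 1 := by
      refine (natDegree_sub_le _ _).trans
        (max_le (by simp) (natDegree_mul_le.trans (by simp [natDegree_X_le])))
    have := natDegree_covD1_le δ c f p
    omega

lemma natDegree_q1_le {R : Type*} [CommRing R] [Algebra ℚ R] (c al : R) :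
    ((2 : ℚ)⁻¹ • (Polynomial.C c * X) + Polynomial.C al : Polynomial R).natDegree ≤ 1 := by
  have h1 : ((2 : ℚ)⁻¹ • (Polynomial.C c * X) : Polynomial R).natDegree ≤ 1 := by
    rw [← algebraMap_smul R ((2 : ℚ)⁻¹), Polynomial.smul_eq_C_mul]
    refine natDegree_mul_le.trans ?_
    have := natDegree_mul_le (p := (Polynomial.C c : Polynomial R)) (q := X)
    simp only [natDegree_C, zero_add] at this ⊢
    have hx := natDegree_X_le (R := R)
    omega
  exact (natDegree_add_le _ _).trans (max_le h1 (by simp))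

lemma natDegree_le_of_derivative {R : Type*} [CommRing R] [Algebra ℚ R] (p : Polynomial R)
    (n : ℕ) (h : (derivative p).natDegree ≤ n) : p.natDegree ≤ n + 1 := by
  rw [Polynomial.natDegree_le_iff_coeff_eq_zero]
  intro m hm
  obtain ⟨k, rfl⟩ : ∃ k, m = k + 1 := ⟨m - 1, by omega⟩
  have hc : (derivative p).coeff k = 0 :=
    Polynomial.coeff_eq_zero_of_natDegree_lt (by omega)
  rw [Polynomial.coeff_derivative] at hc
  have hcast : ((k : R) + 1) = algebraMap ℚ R ((k : ℚ) + 1) := by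
    rw [map_add, map_natCast, map_one]
  have hne : ((k : ℚ) + 1) ≠ 0 := by positivity
  have h2 := congrArg (· * algebraMap ℚ R ((k : ℚ) + 1)⁻¹) hc
  simp only [zero_mul, mul_assoc, hcast, ← map_mul, mul_inv_cancel₀ hne, map_one, mul_one] at h2
  exact h2

lemma natDegree_qsmul_le {R : Type*} [CommRing R] [Algebra ℚ R] (q : ℚ) (p : Polynomial R) :
    (q • p).natDegree ≤ p.natDegree := by
  rw [← algebraMap_smul R q, Polynomial.smul_eq_C_mul]
  exact natDegree_mul_le.trans (by rw [natDegree_C, zero_add])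

lemma natDegree_linC_le {R : Type*} [CommRing R] (ft c : R) :
    (Polynomial.C ft - Polynomial.C c * Polynomial.X : Polynomial R).natDegree ≤ 1 := by
  refine (natDegree_sub_le _ _).trans
    (max_le (by simp) (natDegree_mul_le.trans (by simp [natDegree_X_le])))

/-- The perturbative free energies, as solutions of the holomorphic anomaly equations in
propagator form, are polynomials of degree at most `3g − 3` in the propagator. -/
theorem perturbative_free_energy_degree
    {R : Type*} [CommRing R] [Algebra ℚ R] (δ : Derivation ℚ R R) (c f ft al : R)
    (F : ℕ → Polynomial R)
    (h2 : derivative (F 2)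
      = (2 : ℚ)⁻¹ • (covD1 (⇑δ) c f ((2 : ℚ)⁻¹ • (Polynomial.C c * X) + Polynomial.C al)
          - (Polynomial.C ft - Polynomial.C c * X)
              * ((2 : ℚ)⁻¹ • (Polynomial.C c * X) + Polynomial.C al)
          + ((2 : ℚ)⁻¹ • (Polynomial.C c * X) + Polynomial.C al) ^ 2))
    (hg : ∀ g : ℕ, 3 ≤ g → derivative (F g)
      = (2 : ℚ)⁻¹ • covD2 (⇑δ) c f ft (F (g - 1))
        + ((2 : ℚ)⁻¹ • (Polynomial.C c * X) + Polynomial.C al) * covD1 (⇑δ) c f (F (g - 1))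
        + (2 : ℚ)⁻¹ • ∑ h ∈ Finset.Icc 2 (g - 2), covD1 (⇑δ) c f (F (g - h)) * covD1 (⇑δ) c f (F h)) :
    ∀ g : ℕ, 2 ≤ g → (F g).natDegree ≤ 3 * g - 3 := by
  have hq1 := natDegree_q1_le (R := R) c al
  intro g
  induction g using Nat.strong_induction_on with
  | _ g ih =>
    intro hg2
    rcases eq_or_lt_of_le hg2 with h | h
    · -- g = 2
      rw [← h]
      have : (derivative (F 2)).natDegree ≤ 2 := by
        rw [h2]
        refine (natDegree_qsmul_le _ _).trans ?_
        refine (natDegree_add_le _ _).trans (max_le ((natDegree_sub_le _ _).trans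
          (max_le ((natDegree_covD1_le _ _ _ _).trans (by omega))
            (natDegree_mul_le.trans (by have := natDegree_linC_le (R := R) ft c; omega)))) ?_)
        rw [sq]
        exact natDegree_mul_le.trans (by omega)
      have := natDegree_le_of_derivative _ _ this
      omega
    · -- g ≥ 3
      have hg3 : 3 ≤ g := h
      have ih1 : (F (g - 1)).natDegree ≤ 3 * (g - 1) - 3 := ih (g - 1) (by omega) (by omega)
      have key : (derivative (F g)).natDegree ≤ 3 * g - 4 := by
        rw [hg g hg3]
        refine (natDegree_add_le _ _).trans (max_le ((natDegree_add_le _ _).trans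
          (max_le ?_ ?_)) ?_)
        · refine (natDegree_qsmul_le _ _).trans ((natDegree_covD2_le _ _ _ _ _).trans ?_)
          omega
        · refine natDegree_mul_le.trans ?_
          have := natDegree_covD1_le (⇑δ) c f (F (g - 1))
          omega
        · refine (natDegree_qsmul_le _ _).trans
            (Polynomial.natDegree_sum_le_of_forall_le _ _ fun j hj => ?_)
          simp only [Finset.mem_Icc] at hj
          have ihj : (F j).natDegree ≤ 3 * j - 3 := ih j (by omega) hj.1
          have ihgj : (F (g - j)).natDegree ≤ 3 * (g - j) - 3 := ih (g - j) (by omega) (by omega)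
          refine natDegree_mul_le.trans ?_
          have h1 := natDegree_covD1_le (⇑δ) c f (F (g - j))
          have h2 := natDegree_covD1_le (⇑δ) c f (F j)
          omega
      have := natDegree_le_of_derivative _ _ key
      omega
end

section
/- In the transseries model described in the context, suppose the family (F^{(n)}_g)_{n≥1,g≥0} satisfies the nonperturbative holomorphic anomaly equations. Then for every g ≥ 0 the one-instanton free energy is an exponential times a polynomial of degree at most 3g: F^{(1)}_g = T·p for some p ∈ R[S] with deg_S p ≤ 3g. -/
open Polynomial

noncomputable section

/-- The ring `M = R[S,T]`: polynomials in the propagator `S` (inner variable) and the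
instanton exponential `T` (outer variable). -/
abbrev TS (R : Type*) [CommRing R] : Type _ := Polynomial (Polynomial R)

/-- The propagator `S = S^{zz}` inside `R[S,T]`. -/
def Sv {R : Type*} [CommRing R] : TS R := Polynomial.C Polynomial.X

/-- The instanton exponential `T = exp((1/2)(δA)²S)` inside `R[S,T]`. -/
def Tv {R : Type*} [CommRing R] : TS R := Polynomial.X

/-- The embedding `R → R[S,T]`. -/
def cc {R : Type*} [CommRing R] (r : R) : TS R := Polynomial.C (Polynomial.C r)

/-- The operators `𝒟^{(n)}_h` of the nonperturbative holomorphic anomaly equations: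
`𝒟^{(n)}_1 x = (n/2)(δ(δA) − (f̃ − CS)δA)x + n(δA)(𝔇x + q₁x)`,
`𝒟^{(n)}_2 x = −(1/2)D²x − q₁𝔇x`, and for `h ≥ 2`,
`𝒟^{(n)}_{2h−1} x = n(δA)p_h x`, `𝒟^{(n)}_{2h} x = −p_h 𝔇x`,
with `q₁ = (1/2)CS + α` and `D²x = 𝔇(𝔇x) − (f̃ − CS)𝔇x`. -/
def Dop {R : Type*} [CommRing R] [Algebra ℚ R] (δ : Derivation ℚ R R)
    (c ft al A : R) (p : ℕ → Polynomial R) (Dh : Derivation ℚ (TS R) (TS R))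
    (n h : ℕ) (x : TS R) : TS R :=
  if h = 1 then
    (2 : ℚ)⁻¹ • ((n : TS R) * (cc (δ (δ A)) - (cc ft - cc c * Sv) * cc (δ A)) * x)
      + (n : TS R) * cc (δ A) * (Dh x + ((2 : ℚ)⁻¹ • (cc c * Sv) + cc al) * x)
  else if h = 2 then
    -((2 : ℚ)⁻¹ • (Dh (Dh x) - (cc ft - cc c * Sv) * Dh x))
      - ((2 : ℚ)⁻¹ • (cc c * Sv) + cc al) * Dh x
  else if h % 2 = 1 then
    (n : TS R) * cc (δ A) * Polynomial.C (p ((h + 1) / 2)) * x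
  else
    -(Polynomial.C (p (h / 2)) * Dh x)

set_option linter.unusedSectionVars false
section Aux
variable {R : Type*} [CommRing R] [IsDomain R] [Algebra ℚ R]

theorem aux_charZero : CharZero R :=
  charZero_of_injective_algebraMap (algebraMap ℚ R).injective

theorem aux_nzsd : NoZeroSMulDivisors ℕ R := by
  haveI := aux_charZero (R := R)
  refine ⟨fun {n r} h => ?_⟩
  rw [nsmul_eq_mul] at h
  rcases mul_eq_zero.mp h with h | h
  · exact Or.inl (by exact_mod_cast h)
  · exact Or.inr h

theorem qsmul_TS (x : ℚ) (z : TS R) : x • z = cc (algebraMap ℚ R x) * z := by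
  rw [Algebra.smul_def]
  congr 1

theorem qsmul_P (x : ℚ) (a : Polynomial R) :
    x • a = Polynomial.C (algebraMap ℚ R x) * a := by
  rw [Algebra.smul_def, Polynomial.algebraMap_apply]

theorem poly_ode_zero {w : R} (hw : w ≠ 0) {a : Polynomial R}
    (h : derivative a = Polynomial.C w * a) : a = 0 := by
  by_contra ha
  have h1 := congrArg (fun p : Polynomial R => p.coeff a.natDegree) h
  simp only [coeff_derivative, coeff_C_mul] at h1
  rw [Polynomial.coeff_eq_zero_of_natDegree_lt (lt_add_one a.natDegree), zero_mul] at h1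
  rcases mul_eq_zero.mp h1.symm with h2 | h2
  · exact hw h2
  · exact ha (leadingCoeff_eq_zero.mp h2)

theorem natDegree_le_succ_of_derivative_eq {a r : Polynomial R} (h : derivative a = r)
    {e : ℕ} (he : r.natDegree ≤ e) : a.natDegree ≤ e + 1 := by
  haveI := aux_charZero (R := R)
  haveI := aux_nzsd (R := R)
  by_cases h0 : a.natDegree = 0
  · omega
  · have hd : (derivative a).degree = ((a.natDegree - 1 : ℕ) : WithBot ℕ) :=
      Polynomial.degree_derivative_eq a (Nat.pos_of_ne_zero h0)
    have := Polynomial.natDegree_eq_of_degree_eq_some hd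
    rw [h] at this
    omega

theorem dp_C_eq (Dp : Derivation ℚ (TS R) (TS R))
    (hDpC : ∀ r : R, Dp (cc r) = 0) (hDpS : Dp (Sv (R := R)) = 1)
    (a : Polynomial R) : Dp (Polynomial.C a) = Polynomial.C (derivative a) := by
  induction a using Polynomial.induction_on' with
  | add p q hp hq => simp [hp, hq]
  | monomial n r =>
    have h1 : (Polynomial.C ((monomial n) r) : TS R) = cc r * Sv ^ n := by
      rw [← Polynomial.C_mul_X_pow_eq_monomial]
      simp [cc, Sv]
    have h2 : (Polynomial.C (derivative ((monomial n) r)) : TS R)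
        = cc (r * n) * Sv ^ (n - 1) := by
      rw [derivative_monomial, ← Polynomial.C_mul_X_pow_eq_monomial]
      simp [cc, Sv]
    rw [h1, h2, Derivation.leibniz, Derivation.leibniz_pow, hDpC, hDpS]
    simp only [smul_eq_mul, nsmul_eq_mul, mul_one, smul_zero, add_zero]
    have h3 : (cc (r * (n : R)) : TS R) = (n : TS R) * cc r := by
      simp [cc]
      ring
    rw [h3]
    ring

theorem dp_coeff (Dp : Derivation ℚ (TS R) (TS R)) (u : R)
    (hDpC : ∀ r : R, Dp (cc r) = 0) (hDpS : Dp (Sv (R := R)) = 1)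
    (hDpT : Dp (Tv (R := R)) = (2 : ℚ)⁻¹ • (cc u ^ 2 * Tv))
    (G : TS R) (k : ℕ) :
    (Dp G).coeff k = derivative (G.coeff k)
      + Polynomial.C ((k : R) * (algebraMap ℚ R (2 : ℚ)⁻¹ * u ^ 2)) * G.coeff k := by
  induction G using Polynomial.induction_on' with
  | add p q hp hq =>
    simp only [map_add, coeff_add, hp, hq]
    ring
  | monomial n a =>
    have key : Dp ((monomial n) a) = Polynomial.C (derivative a) * Tv ^ n
        + Polynomial.C (Polynomial.C ((n : R) * (algebraMap ℚ R (2 : ℚ)⁻¹ * u ^ 2)))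
            * ((monomial n) a) := by
      rw [← Polynomial.C_mul_X_pow_eq_monomial, show (Polynomial.X : TS R) = Tv from rfl,
        Derivation.leibniz, Derivation.leibniz_pow, hDpT, dp_C_eq Dp hDpC hDpS, qsmul_TS]
      cases n with
      | zero => simp
      | succ m =>
        simp only [smul_eq_mul, nsmul_eq_mul, Nat.add_sub_cancel, pow_succ, map_mul,
          map_natCast, Nat.cast_succ, map_add, map_one, pow_zero, one_mul, mul_one, cc]
        ring
    rw [key, show Tv = (Polynomial.X : TS R) from rfl, Polynomial.C_mul_X_pow_eq_monomial]
    simp only [coeff_add, coeff_monomial, coeff_C_mul]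
    by_cases hnk : n = k
    · subst hnk
      simp only [eq_self_iff_true, if_true]
    · simp only [if_neg hnk, mul_zero, add_zero, derivative_zero, zero_add]

theorem line_of_ode (Dp : Derivation ℚ (TS R) (TS R)) (u : R) (hu : u ≠ 0)
    (hDpC : ∀ r : R, Dp (cc r) = 0) (hDpS : Dp (Sv (R := R)) = 1)
    (hDpT : Dp (Tv (R := R)) = (2 : ℚ)⁻¹ • (cc u ^ 2 * Tv))
    (G : TS R) (r : Polynomial R)
    (h : Dp G - (2 : ℚ)⁻¹ • (cc u ^ 2 * G) = Tv * Polynomial.C r) :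
    ∃ q : Polynomial R, derivative q = r ∧ G = Tv * Polynomial.C q := by
  haveI := aux_charZero (R := R)
  set hf : R := algebraMap ℚ R (2 : ℚ)⁻¹ with hhf
  have hfne : hf ≠ 0 := fun hc => by
    have := (algebraMap ℚ R).injective (hc.trans (map_zero _).symm)
    norm_num at this
  have hsm : (2 : ℚ)⁻¹ • (cc u ^ 2 * G) = Polynomial.C (Polynomial.C (hf * u ^ 2)) * G := by
    rw [qsmul_TS]
    simp only [cc, map_mul, map_pow]
    ring
  have hTr : Tv * Polynomial.C r = monomial 1 r := by
    rw [show Tv = (Polynomial.X : TS R) from rfl, mul_comm, Polynomial.C_mul_X_eq_monomial]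
  have hco : ∀ k : ℕ, derivative (G.coeff k)
      + Polynomial.C ((k : R) * (hf * u ^ 2)) * G.coeff k
      - Polynomial.C (hf * u ^ 2) * G.coeff k = if 1 = k then r else 0 := by
    intro k
    have h2 := congrArg (fun z : TS R => z.coeff k) h
    simp only [coeff_sub] at h2
    rw [dp_coeff Dp u hDpC hDpS hDpT, hsm, coeff_C_mul, hTr, coeff_monomial] at h2
    rw [← hhf] at h2
    exact h2
  have hzero : ∀ k : ℕ, k ≠ 1 → G.coeff k = 0 := by
    intro k hk
    have h2 := hco k
    rw [if_neg (fun hc => hk hc.symm)] at h2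
    have h3 : derivative (G.coeff k) = Polynomial.C ((1 - (k : R)) * (hf * u ^ 2)) * G.coeff k := by
      have : Polynomial.C ((1 - (k : R)) * (hf * u ^ 2))
          = Polynomial.C (hf * u ^ 2) - Polynomial.C ((k : R) * (hf * u ^ 2)) := by
        rw [← map_sub]
        ring_nf
      rw [this]
      linear_combination h2
    refine poly_ode_zero ?_ h3
    refine mul_ne_zero ?_ (mul_ne_zero hfne (pow_ne_zero _ hu))
    have : (k : R) ≠ 1 := by
      rw [show (1 : R) = ((1 : ℕ) : R) by norm_num]
      exact fun hc => hk (Nat.cast_injective hc)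
    intro hc
    exact this (sub_eq_zero.mp hc).symm
  refine ⟨G.coeff 1, ?_, ?_⟩
  · have h2 := hco 1
    rw [if_pos rfl] at h2
    rw [Nat.cast_one, one_mul] at h2
    linear_combination h2
  · have hTq : Tv * Polynomial.C (G.coeff 1) = monomial 1 (G.coeff 1) := by
      rw [show Tv = (Polynomial.X : TS R) from rfl, mul_comm, Polynomial.C_mul_X_eq_monomial]
    rw [hTq]
    ext k
    rw [coeff_monomial]
    by_cases hk : k = 1
    · subst hk
      simp
    · rw [if_neg (fun hc => hk hc.symm), hzero k hk]

/-- The holomorphic derivative acting on the inner polynomial ring `R[S]`. -/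
def dI (δ : Derivation ℚ R R) (c f : R) (a : Polynomial R) : Polynomial R :=
  a.sum (fun i r => Polynomial.C (δ r) * Polynomial.X ^ i)
    + (Polynomial.C f - Polynomial.C c * Polynomial.X ^ 2) * derivative a

theorem dI_add (δ : Derivation ℚ R R) (c f : R) (a b : Polynomial R) :
    dI δ c f (a + b) = dI δ c f a + dI δ c f b := by
  unfold dI
  rw [Polynomial.sum_add_index, map_add]
  · ring
  · intro i
    simp
  · intro i x y
    rw [map_add, map_add, add_mul]

theorem dI_natDegree (δ : Derivation ℚ R R) (c f : R) (a : Polynomial R) :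
    (dI δ c f a).natDegree ≤ a.natDegree + 2 := by
  unfold dI
  apply (natDegree_add_le _ _).trans
  rw [max_le_iff]
  constructor
  · refine le_trans ?_ (Nat.le_add_right _ 2)
    rw [Polynomial.sum_def]
    apply Polynomial.natDegree_sum_le_of_forall_le
    intro i hi
    apply (natDegree_C_mul_le _ _).trans
    rw [natDegree_X_pow]
    exact le_natDegree_of_mem_supp i hi
  · apply le_trans natDegree_mul_le
    have h1 : (Polynomial.C f - Polynomial.C c * Polynomial.X ^ 2 : Polynomial R).natDegree ≤ 2 := by
      compute_degree
    have h2 := natDegree_derivative_le a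
    omega

theorem dh_C_eq (δ : Derivation ℚ R R) (c f : R) (Dh : Derivation ℚ (TS R) (TS R))
    (hDhC : ∀ r : R, Dh (cc r) = cc (δ r)) (hDhS : Dh (Sv (R := R)) = cc f - cc c * Sv ^ 2)
    (a : Polynomial R) : Dh (Polynomial.C a) = Polynomial.C (dI δ c f a) := by
  induction a using Polynomial.induction_on' with
  | add p q hp hq => simp [dI_add, hp, hq]
  | monomial n r =>
    have h1 : (Polynomial.C ((monomial n) r) : TS R) = cc r * Sv ^ n := by
      rw [← Polynomial.C_mul_X_pow_eq_monomial]
      simp [cc, Sv]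
    have h2 : dI δ c f ((monomial n) r) = Polynomial.C (δ r) * Polynomial.X ^ n
        + (Polynomial.C f - Polynomial.C c * Polynomial.X ^ 2) * (monomial (n - 1)) (r * n) := by
      unfold dI
      rw [Polynomial.sum_monomial_index, derivative_monomial]
      simp
    have h3 : (Polynomial.C ((monomial (n - 1)) (r * (n : R))) : TS R)
        = (n : TS R) * cc r * Sv ^ (n - 1) := by
      rw [← Polynomial.C_mul_X_pow_eq_monomial]
      simp only [map_mul, map_pow, map_natCast, cc, Sv]
      ring
    rw [h1, h2, Derivation.leibniz, Derivation.leibniz_pow, hDhC, hDhS]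
    rw [map_add, map_mul, map_mul, map_pow, h3]
    have h4 : (Polynomial.C (Polynomial.C (δ r)) : TS R) = cc (δ r) := rfl
    have h5 : (Polynomial.C (Polynomial.X : Polynomial R) : TS R) = Sv := rfl
    have h6 : (Polynomial.C (Polynomial.C f - Polynomial.C c * Polynomial.X ^ 2) : TS R)
        = cc f - cc c * Sv ^ 2 := by
      simp only [map_sub, map_mul, map_pow, cc, Sv]
    rw [h4, h5, h6]
    simp only [smul_eq_mul, nsmul_eq_mul]
    ring

/-- The polynomial `β` with `𝔇 T = C β · T`. -/
def bet (δ : Derivation ℚ R R) (c f A : R) : Polynomial R :=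
  Polynomial.C (δ A * δ (δ A)) * Polynomial.X
    + Polynomial.C (algebraMap ℚ R (2 : ℚ)⁻¹ * δ A ^ 2)
        * (Polynomial.C f - Polynomial.C c * Polynomial.X ^ 2)

theorem bet_natDegree (δ : Derivation ℚ R R) (c f A : R) : (bet δ c f A).natDegree ≤ 2 := by
  unfold bet
  compute_degree

theorem C_bet (δ : Derivation ℚ R R) (c f A : R) :
    (Polynomial.C (bet δ c f A) : TS R)
      = cc (δ A) * cc (δ (δ A)) * Sv + (2 : ℚ)⁻¹ • (cc (δ A) ^ 2 * (cc f - cc c * Sv ^ 2)) := by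
  rw [qsmul_TS]
  simp only [bet, map_add, map_mul, map_sub, map_pow, cc, Sv]
  ring

/-- The action of `𝔇` on the coefficient of `T`. -/
def lineOp (δ : Derivation ℚ R R) (c f A : R) (q : Polynomial R) : Polynomial R :=
  bet δ c f A * q + dI δ c f q

theorem lineOp_natDegree (δ : Derivation ℚ R R) (c f A : R) (q : Polynomial R) :
    (lineOp δ c f A q).natDegree ≤ q.natDegree + 2 := by
  unfold lineOp
  apply (natDegree_add_le _ _).trans
  rw [max_le_iff]
  refine ⟨le_trans natDegree_mul_le ?_, dI_natDegree δ c f q⟩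
  have := bet_natDegree δ c f A
  omega

theorem dh_line (δ : Derivation ℚ R R) (c f A : R) (Dh : Derivation ℚ (TS R) (TS R))
    (hDhC : ∀ r : R, Dh (cc r) = cc (δ r)) (hDhS : Dh (Sv (R := R)) = cc f - cc c * Sv ^ 2)
    (hDhT : Dh (Tv (R := R)) = (cc (δ A) * cc (δ (δ A)) * Sv
        + (2 : ℚ)⁻¹ • (cc (δ A) ^ 2 * (cc f - cc c * Sv ^ 2))) * Tv)
    (q : Polynomial R) :
    Dh (Tv * Polynomial.C q) = Tv * Polynomial.C (lineOp δ c f A q) := by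
  rw [Derivation.leibniz, dh_C_eq δ c f Dh hDhC hDhS, hDhT, ← C_bet δ c f A]
  simp only [lineOp, map_add, map_mul, smul_eq_mul]
  ring

theorem dop_line (δ : Derivation ℚ R R) (c f ft al A : R)
    (p : ℕ → Polynomial R) (hp : ∀ h : ℕ, 2 ≤ h → (p h).natDegree ≤ 3 * h - 2)
    (Dh : Derivation ℚ (TS R) (TS R))
    (hDhC : ∀ r : R, Dh (cc r) = cc (δ r)) (hDhS : Dh (Sv (R := R)) = cc f - cc c * Sv ^ 2)
    (hDhT : Dh (Tv (R := R)) = (cc (δ A) * cc (δ (δ A)) * Sv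
        + (2 : ℚ)⁻¹ • (cc (δ A) ^ 2 * (cc f - cc c * Sv ^ 2))) * Tv)
    (h : ℕ) (hh : 1 ≤ h) (q : Polynomial R) :
    ∃ b : Polynomial R, Dop δ c ft al A p Dh 1 h (Tv * Polynomial.C q) = Tv * Polynomial.C b
      ∧ b.natDegree ≤ q.natDegree + (3 * h - 1) := by
  have hL := dh_line δ c f A Dh hDhC hDhS hDhT
  have hLd := lineOp_natDegree δ c f A
  by_cases h1 : h = 1
  · subst h1
    refine ⟨Polynomial.C (algebraMap ℚ R (2 : ℚ)⁻¹)
        * ((Polynomial.C (δ (δ A)) - (Polynomial.C ft - Polynomial.C c * Polynomial.X)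
            * Polynomial.C (δ A)) * q)
      + Polynomial.C (δ A) * (lineOp δ c f A q
          + (Polynomial.C (algebraMap ℚ R (2 : ℚ)⁻¹) * (Polynomial.C c * Polynomial.X)
              + Polynomial.C al) * q), ?_, ?_⟩
    · simp only [Dop, if_pos rfl, if_true, Nat.cast_one, one_mul]
      rw [hL]
      simp only [qsmul_TS]
      simp only [cc, Sv, map_add, map_mul, map_sub]
      ring
    · have hw1 : (Polynomial.C (δ (δ A)) - (Polynomial.C ft - Polynomial.C c * Polynomial.X)
          * Polynomial.C (δ A) : Polynomial R).natDegree ≤ 1 := by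
        compute_degree
      have hw2 : (Polynomial.C (algebraMap ℚ R (2 : ℚ)⁻¹) * (Polynomial.C c * Polynomial.X)
          + Polynomial.C al : Polynomial R).natDegree ≤ 1 := by
        compute_degree
      have hb := natDegree_add_le_of_le
        (natDegree_mul_le_of_le (natDegree_C (algebraMap ℚ R (2 : ℚ)⁻¹)).le
          (natDegree_mul_le_of_le hw1 (le_refl q.natDegree)))
        (natDegree_mul_le_of_le (natDegree_C (δ A)).le
          (natDegree_add_le_of_le (hLd q)
            (natDegree_mul_le_of_le hw2 (le_refl q.natDegree))))
      exact hb.trans (by omega)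
  · by_cases h2 : h = 2
    · subst h2
      refine ⟨-(Polynomial.C (algebraMap ℚ R (2 : ℚ)⁻¹)
            * (lineOp δ c f A (lineOp δ c f A q)
              - (Polynomial.C ft - Polynomial.C c * Polynomial.X) * lineOp δ c f A q))
        - (Polynomial.C (algebraMap ℚ R (2 : ℚ)⁻¹) * (Polynomial.C c * Polynomial.X)
            + Polynomial.C al) * lineOp δ c f A q, ?_, ?_⟩
      · simp only [Dop, if_neg (by norm_num : (2 : ℕ) ≠ 1), if_pos rfl, if_true]
        rw [hL, hL]
        simp only [qsmul_TS]
        simp only [cc, Sv, map_add, map_mul, map_sub, map_neg]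
        ring
      · have hw1 : (Polynomial.C ft - Polynomial.C c * Polynomial.X : Polynomial R).natDegree ≤ 1 := by
          compute_degree
        have hw2 : (Polynomial.C (algebraMap ℚ R (2 : ℚ)⁻¹) * (Polynomial.C c * Polynomial.X)
            + Polynomial.C al : Polynomial R).natDegree ≤ 1 := by
          compute_degree
        have hq2 : (lineOp δ c f A (lineOp δ c f A q)).natDegree ≤ q.natDegree + 4 :=
          (hLd _).trans (by have := hLd q; omega)
        have hb := natDegree_sub_le_of_le
          (natDegree_neg_le_of_le (natDegree_mul_le_of_le
            (natDegree_C (algebraMap ℚ R (2 : ℚ)⁻¹)).le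
            (natDegree_sub_le_of_le hq2 (natDegree_mul_le_of_le hw1 (hLd q)))))
          (natDegree_mul_le_of_le hw2 (hLd q))
        exact hb.trans (by omega)
    · have h3 : 3 ≤ h := by omega
      rcases Nat.mod_two_eq_zero_or_one h with hpar | hpar
      · -- even, h ≥ 4
        refine ⟨-(p (h / 2) * lineOp δ c f A q), ?_, ?_⟩
        · simp only [Dop, if_neg h1, if_neg h2, hpar, if_neg (by norm_num : (0 : ℕ) ≠ 1), if_true]
          rw [hL, map_neg, map_mul]
          ring
        · have hpj := hp (h / 2) (by omega)
          have hb := natDegree_neg_le_of_le (natDegree_mul_le_of_le hpj (hLd q))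
          exact hb.trans (by omega)
      · -- odd, h ≥ 3
        refine ⟨Polynomial.C (δ A) * p ((h + 1) / 2) * q, ?_, ?_⟩
        · simp only [Dop, if_neg h1, if_neg h2, hpar, if_pos rfl, if_true, Nat.cast_one, one_mul]
          simp only [cc, map_mul]
          ring
        · have hpj := hp ((h + 1) / 2) (by omega)
          have hb := natDegree_mul_le_of_le
            (natDegree_mul_le_of_le (natDegree_C (δ A)).le hpj) (le_refl q.natDegree)
          exact hb.trans (by omega)

end Aux

/-- One-instanton structure of transseries solutions of the nonperturbative holomorphic
anomaly equations: for every `g`, the one-instanton free energy `F^{(1)}_g` is the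
exponential `T` times a polynomial in the propagator `S` of degree at most `3g`. -/
theorem one_instanton_structure
    {R : Type*} [CommRing R] [IsDomain R] [Algebra ℚ R]
    (δ : Derivation ℚ R R) (c f ft al A : R) (hA : δ A ≠ 0)
    (p : ℕ → Polynomial R) (hp : ∀ h : ℕ, 2 ≤ h → (p h).natDegree ≤ 3 * h - 2)
    (Dp Dh : Derivation ℚ (TS R) (TS R))
    (hDpC : ∀ r : R, Dp (cc r) = 0)
    (hDpS : Dp (Sv (R := R)) = 1)
    (hDpT : Dp (Tv (R := R)) = (2 : ℚ)⁻¹ • (cc (δ A) ^ 2 * Tv))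
    (hDhC : ∀ r : R, Dh (cc r) = cc (δ r))
    (hDhS : Dh (Sv (R := R)) = cc f - cc c * Sv ^ 2)
    (hDhT : Dh (Tv (R := R)) = (cc (δ A) * cc (δ (δ A)) * Sv
        + (2 : ℚ)⁻¹ • (cc (δ A) ^ 2 * (cc f - cc c * Sv ^ 2))) * Tv)
    (F : ℕ → ℤ → TS R)
    (hFneg : ∀ (n : ℕ) (j : ℤ), j < 0 → F n j = 0)
    (heq : ∀ n : ℕ, 1 ≤ n → ∀ g : ℕ,
      Dp (F n (g : ℤ)) - (2 : ℚ)⁻¹ • ((n : TS R) ^ 2 * cc (δ A) ^ 2 * F n (g : ℤ))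
        = -(∑ h ∈ Finset.Icc 1 g, Dop δ c ft al A p Dh n h (F n ((g : ℤ) - (h : ℤ))))
          + (2 : ℚ)⁻¹ • ∑ m ∈ Finset.Icc 1 (n - 1), ∑ h ∈ Finset.range g,
              (Dh (F m ((h : ℤ) - 1)) - (m : TS R) * cc (δ A) * F m (h : ℤ))
              * (Dh (F (n - m) ((g : ℤ) - 2 - (h : ℤ)))
                  - ((n - m : ℕ) : TS R) * cc (δ A) * F (n - m) ((g : ℤ) - 1 - (h : ℤ)))) :
    ∀ g : ℕ, ∃ q : Polynomial R, q.natDegree ≤ 3 * g ∧ F 1 (g : ℤ) = Tv * Polynomial.C q := by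
  intro g
  induction g using Nat.strong_induction_on with
  | _ g ih =>
    have hmain := heq 1 le_rfl g
    rw [Nat.sub_self, Finset.Icc_eq_empty (by norm_num : ¬(1 : ℕ) ≤ 0),
      Finset.sum_empty, smul_zero, add_zero, Nat.cast_one, one_pow,
      one_mul] at hmain
    have hterm : ∀ h : ℕ, ∃ b : Polynomial R,
        h ∈ Finset.Icc 1 g →
          Dop δ c ft al A p Dh 1 h (F 1 ((g : ℤ) - (h : ℤ))) = Tv * Polynomial.C b
            ∧ b.natDegree < 3 * g := by
      intro h
      by_cases hmem : h ∈ Finset.Icc 1 g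
      · obtain ⟨hh1, hhg⟩ := Finset.mem_Icc.mp hmem
        obtain ⟨qh, hq1, hq2⟩ := ih (g - h) (by omega)
        have hcast : (g : ℤ) - (h : ℤ) = ((g - h : ℕ) : ℤ) := by
          rw [Nat.cast_sub hhg]
        obtain ⟨b, hb1, hb2⟩ := dop_line δ c f ft al A p hp Dh hDhC hDhS hDhT h hh1 qh
        refine ⟨b, fun _ => ⟨?_, ?_⟩⟩
        · rw [hcast, hq2, hb1]
        · omega
      · exact ⟨0, fun hc => absurd hc hmem⟩
    choose b hb using hterm
    have hsum : (∑ h ∈ Finset.Icc 1 g, Dop δ c ft al A p Dh 1 h (F 1 ((g : ℤ) - (h : ℤ))))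
        = Tv * Polynomial.C (∑ h ∈ Finset.Icc 1 g, b h) := by
      rw [Finset.sum_congr rfl (fun h hh => (hb h hh).1), map_sum, Finset.mul_sum]
    rw [hsum] at hmain
    have hmain2 : Dp (F 1 (g : ℤ)) - (2 : ℚ)⁻¹ • (cc (δ A) ^ 2 * F 1 (g : ℤ))
        = Tv * Polynomial.C (-(∑ h ∈ Finset.Icc 1 g, b h)) := by
      rw [hmain, map_neg]
      ring
    obtain ⟨q, hq, hFq⟩ := line_of_ode Dp (δ A) hA hDpC hDpS hDpT _ _ hmain2
    refine ⟨q, ?_, hFq⟩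
    by_cases hg : g = 0
    · subst hg
      rw [Finset.Icc_eq_empty (by norm_num : ¬(1 : ℕ) ≤ 0), Finset.sum_empty, neg_zero] at hq
      haveI := aux_nzsd (R := R)
      haveI := aux_charZero (R := R)
      have h0 := Polynomial.natDegree_eq_zero_of_derivative_eq_zero hq
      omega
    · have hr : (-(∑ h ∈ Finset.Icc 1 g, b h)).natDegree ≤ 3 * g - 1 := by
        rw [natDegree_neg]
        apply Polynomial.natDegree_sum_le_of_forall_le
        intro h hh
        have := (hb h hh).2
        omega
      have := natDegree_le_succ_of_derivative_eq hq hr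
      omega


end
end

section
/- In the transseries model described in the context, suppose the family (F^{(n)}_g)_{n≥1,g≥0} satisfies the nonperturbative holomorphic anomaly equations. Then for every n ≥ 1 and g ≥ 0, F^{(n)}_g lies in the R-submodule Σ_π T^{Σ_i π_i²} · { p ∈ R[S] : deg_S p ≤ 3(g + 1 − ℓ(π)) }, the sum running over all integer partitions π of n, with parts π_i counted with multiplicity and ℓ(π) the total number of parts; summands with 3(g + 1 − ℓ(π)) < 0 are understood to be zero. In particular the anti-holomorphic dependence of every multi-instanton free energy is a finite sum of exponentials of the propagator multiplied by polynomials of controlled degree. -/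
open Polynomial

noncomputable section

namespace MIS

/-- sum of squares of the parts -/
def pk {n : ℕ} (π : Nat.Partition n) : ℕ := (π.parts.map fun i => i ^ 2).sum

/-- combine two partitions -/
def pcomb {a b : ℕ} (π : Nat.Partition a) (ρ : Nat.Partition b) : Nat.Partition (a + b) where
  parts := π.parts + ρ.parts
  parts_pos := fun hi => by
    rcases Multiset.mem_add.mp hi with h | h
    · exact π.parts_pos h
    · exact ρ.parts_pos h
  parts_sum := by rw [Multiset.sum_add, π.parts_sum, ρ.parts_sum]

lemma pk_pcomb {a b : ℕ} (π : Nat.Partition a) (ρ : Nat.Partition b) :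
    pk (pcomb π ρ) = pk π + pk ρ := by
  simp [pk, pcomb]

lemma card_pcomb {a b : ℕ} (π : Nat.Partition a) (ρ : Nat.Partition b) :
    (pcomb π ρ).parts.card = π.parts.card + ρ.parts.card := by
  simp [pcomb]

lemma card_pos_of_pos {n : ℕ} (hn : 1 ≤ n) (π : Nat.Partition n) : 1 ≤ π.parts.card := by
  rw [Nat.one_le_iff_ne_zero, Ne, Multiset.card_eq_zero]
  intro h
  have := π.parts_sum
  rw [h] at this
  simp at this
  omega

lemma sq_sum_le (s : Multiset ℕ) : (s.map fun i => i ^ 2).sum ≤ s.sum ^ 2 := by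
  induction s using Multiset.induction_on with
  | empty => simp
  | cons a s ih =>
      simp only [Multiset.map_cons, Multiset.sum_cons]
      have : (a + s.sum) ^ 2 = a ^ 2 + (2 * a * s.sum + s.sum ^ 2) := by ring
      rw [this]
      omega

lemma multiset_card_le_one {s : Multiset ℕ} (hpos : ∀ i ∈ s, 0 < i)
    (h : (s.map fun i => i ^ 2).sum = s.sum ^ 2) : Multiset.card s ≤ 1 := by
  induction s using Multiset.induction_on with
  | empty => simp
  | cons a s ih =>
      simp only [Multiset.map_cons, Multiset.sum_cons] at h
      have hs2 : (s.map fun i => i ^ 2).sum ≤ s.sum ^ 2 := sq_sum_le s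
      have ha0 : 0 < a := hpos a (Multiset.mem_cons_self a s)
      have hexp : (a + s.sum) ^ 2 = a ^ 2 + (2 * a * s.sum + s.sum ^ 2) := by ring
      rw [hexp] at h
      have h2 : 2 * a * s.sum = 0 := by omega
      have hS : s.sum = 0 := by
        rcases Nat.mul_eq_zero.mp h2 with h' | h'
        · omega
        · exact h'
      have hs0 : s = 0 := by
        by_contra hne
        obtain ⟨x, hx⟩ := Multiset.exists_mem_of_ne_zero hne
        have hx0 : 0 < x := hpos x (Multiset.mem_cons_of_mem hx)
        have : x ≤ s.sum := Multiset.single_le_sum (fun y _ => Nat.zero_le y) x hx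
        omega
      simp [hs0]

/-- the only partition of `n ≥ 1` with sum of squares `n ^ 2` is the one-part partition -/
lemma card_eq_one_of_pk_sq {n : ℕ} (hn : 1 ≤ n) (π : Nat.Partition n) (h : pk π = n ^ 2) :
    π.parts.card = 1 := by
  have hsum := π.parts_sum
  have hle : Multiset.card π.parts ≤ 1 := by
    apply multiset_card_le_one (fun i hi => π.parts_pos hi)
    rw [hsum]
    exact h
  have := card_pos_of_pos hn π
  omega

lemma pk_indiscrete {n : ℕ} (hn : 1 ≤ n) : pk (Nat.Partition.indiscrete n) = n ^ 2 := by
  rw [pk, Nat.Partition.indiscrete_parts (Nat.one_le_iff_ne_zero.mp hn)]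
  simp

lemma card_indiscrete {n : ℕ} (hn : 1 ≤ n) : (Nat.Partition.indiscrete n).parts.card = 1 := by
  rw [Nat.Partition.indiscrete_parts (Nat.one_le_iff_ne_zero.mp hn)]
  simp

/-- existence of a partition of `n` with sum of squares `k` -/
def OkP (n k : ℕ) : Prop := ∃ π : Nat.Partition n, pk π = k

/-- minimal number of parts among partitions of `n` with sum of squares `k` -/
def mc (n k : ℕ) : ℕ := sInf {c : ℕ | ∃ π : Nat.Partition n, pk π = k ∧ π.parts.card = c}

lemma mc_spec {n k : ℕ} (h : OkP n k) :
    ∃ π : Nat.Partition n, pk π = k ∧ π.parts.card = mc n k := by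
  obtain ⟨π, hπ⟩ := h
  have hne : {c : ℕ | ∃ π : Nat.Partition n, pk π = k ∧ π.parts.card = c}.Nonempty :=
    ⟨π.parts.card, π, hπ, rfl⟩
  obtain ⟨ρ, hρ1, hρ2⟩ := Nat.sInf_mem hne
  exact ⟨ρ, hρ1, hρ2⟩

lemma mc_le {n k : ℕ} (π : Nat.Partition n) (h : pk π = k) : mc n k ≤ π.parts.card :=
  Nat.sInf_le ⟨π, h, rfl⟩

lemma okp_add {n₁ n₂ i j : ℕ} (h₁ : OkP n₁ i) (h₂ : OkP n₂ j) : OkP (n₁ + n₂) (i + j) := by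
  obtain ⟨π, hπ⟩ := h₁; obtain ⟨ρ, hρ⟩ := h₂
  exact ⟨pcomb π ρ, by rw [pk_pcomb, hπ, hρ]⟩

lemma mc_add_le {n₁ n₂ i j : ℕ} (h₁ : OkP n₁ i) (h₂ : OkP n₂ j) :
    mc (n₁ + n₂) (i + j) ≤ mc n₁ i + mc n₂ j := by
  obtain ⟨π, hπ1, hπ2⟩ := mc_spec h₁
  obtain ⟨ρ, hρ1, hρ2⟩ := mc_spec h₂
  calc mc (n₁ + n₂) (i + j) ≤ (pcomb π ρ).parts.card := mc_le _ (by rw [pk_pcomb, hπ1, hρ1])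
  _ = _ := by rw [card_pcomb, hπ2, hρ2]

lemma okp_zero : OkP 0 0 := ⟨⟨0, fun h => absurd h (by simp), rfl⟩, rfl⟩

lemma mc_zero : mc 0 0 = 0 := Nat.le_zero.mp (mc_le ⟨0, fun h => absurd h (by simp), rfl⟩ rfl)

lemma mc_sq {n : ℕ} (hn : 1 ≤ n) (h : OkP n (n ^ 2)) : mc n (n ^ 2) = 1 := by
  obtain ⟨π, hπ1, hπ2⟩ := mc_spec h
  rw [← hπ2, card_eq_one_of_pk_sq hn π hπ1]


section Adm

variable {R : Type*} [CommRing R]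

/-- admissibility: every nonzero `T`-coefficient sits at an exponent which is a sum of squares
of the parts of a partition of `n`, with `S`-degree at most `d - 3 * (minimal number of parts)`. -/
def Adm (n : ℕ) (d : ℤ) (x : TS R) : Prop :=
  ∀ k : ℕ, x.coeff k ≠ 0 → OkP n k ∧ ((x.coeff k).natDegree : ℤ) + 3 * mc n k ≤ d

lemma adm_zero {n : ℕ} {d : ℤ} : Adm n d (0 : TS R) := by
  intro k hk
  simp at hk

lemma adm_mono {n : ℕ} {d d' : ℤ} {x : TS R} (h : Adm n d x) (hd : d ≤ d') : Adm n d' x :=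
  fun k hk => ⟨(h k hk).1, le_trans (h k hk).2 hd⟩

lemma adm_add {n : ℕ} {d : ℤ} {x y : TS R} (hx : Adm n d x) (hy : Adm n d y) :
    Adm n d (x + y) := by
  intro k hk
  rw [Polynomial.coeff_add] at hk ⊢
  by_cases h1 : x.coeff k = 0
  · rw [h1, zero_add] at hk ⊢
    exact hy k hk
  by_cases h2 : y.coeff k = 0
  · rw [h2, add_zero] at hk ⊢
    exact hx k hk
  refine ⟨(hx k h1).1, ?_⟩
  have b1 := (hx k h1).2
  have b2 := (hy k h2).2
  have hmax := Polynomial.natDegree_add_le (x.coeff k) (y.coeff k)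
  rcases le_total (x.coeff k).natDegree (y.coeff k).natDegree with hab | hab
  · rw [max_eq_right hab] at hmax; omega
  · rw [max_eq_left hab] at hmax; omega

lemma adm_neg {n : ℕ} {d : ℤ} {x : TS R} (hx : Adm n d x) : Adm n d (-x) := by
  intro k hk
  rw [Polynomial.coeff_neg] at hk ⊢
  rw [Polynomial.natDegree_neg]
  exact hx k (fun h => hk (by rw [h, neg_zero]))

lemma adm_sub {n : ℕ} {d : ℤ} {x y : TS R} (hx : Adm n d x) (hy : Adm n d y) :
    Adm n d (x - y) := by
  rw [sub_eq_add_neg]; exact adm_add hx (adm_neg hy)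

lemma adm_sum {n : ℕ} {d : ℤ} {ι : Type*} {s : Finset ι} {f : ι → TS R}
    (h : ∀ i ∈ s, Adm n d (f i)) : Adm n d (∑ i ∈ s, f i) := by
  classical
  induction s using Finset.induction_on with
  | empty => simpa using adm_zero
  | insert _ _ hni ih =>
      rw [Finset.sum_insert hni]
      exact adm_add (h _ (Finset.mem_insert_self _ _))
        (ih fun i hi => h i (Finset.mem_insert_of_mem hi))

lemma natDegree_qsmul_le [Algebra ℚ R] (q : ℚ) (v : Polynomial R) :
    (q • v).natDegree ≤ v.natDegree := by
  rw [Algebra.smul_def, Polynomial.algebraMap_apply]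
  refine le_trans Polynomial.natDegree_mul_le ?_
  rw [Polynomial.natDegree_C, zero_add]

lemma adm_qsmul [Algebra ℚ R] {n : ℕ} {d : ℤ} {x : TS R} (q : ℚ) (hx : Adm n d x) :
    Adm n d (q • x) := by
  intro k hk
  rw [Polynomial.coeff_smul] at hk ⊢
  have h1 : x.coeff k ≠ 0 := fun h => hk (by rw [h, smul_zero])
  refine ⟨(hx k h1).1, ?_⟩
  have := natDegree_qsmul_le q (x.coeff k)
  have := (hx k h1).2
  omega

lemma adm_mul {n₁ n₂ n₃ : ℕ} {d₁ d₂ d₃ : ℤ} {x y : TS R}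
    (hx : Adm n₁ d₁ x) (hy : Adm n₂ d₂ y) (hn : n₁ + n₂ = n₃) (hd : d₁ + d₂ ≤ d₃) :
    Adm n₃ d₃ (x * y) := by
  subst hn
  intro k hk
  rw [Polynomial.coeff_mul] at hk ⊢
  obtain ⟨ij, hijmem, hij⟩ := Finset.exists_ne_zero_of_sum_ne_zero hk
  have hx0 : x.coeff ij.1 ≠ 0 := fun h => hij (by rw [h, zero_mul])
  have hy0 : y.coeff ij.2 ≠ 0 := fun h => hij (by rw [h, mul_zero])
  have hk0 : ij.1 + ij.2 = k := Finset.HasAntidiagonal.mem_antidiagonal.mp hijmem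
  have hok : OkP (n₁ + n₂) k := hk0 ▸ okp_add (hx _ hx0).1 (hy _ hy0).1
  refine ⟨hok, ?_⟩
  -- uniform bound on all summands
  have hBnn : (0:ℤ) ≤ d₁ + d₂ - 3 * mc (n₁ + n₂) k := by
    have b1 := (hx _ hx0).2
    have b2 := (hy _ hy0).2
    have hmc : (mc (n₁ + n₂) k : ℤ) ≤ mc n₁ ij.1 + mc n₂ ij.2 := by
      exact_mod_cast hk0 ▸ mc_add_le (hx _ hx0).1 (hy _ hy0).1
    omega
  have hterm : ∀ ij' ∈ Finset.HasAntidiagonal.antidiagonal k,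
      (x.coeff ij'.1 * y.coeff ij'.2).natDegree ≤ (d₁ + d₂ - 3 * mc (n₁ + n₂) k).toNat := by
    intro ij' hmem
    by_cases h0 : x.coeff ij'.1 * y.coeff ij'.2 = 0
    · simp [h0]
    have hx0' : x.coeff ij'.1 ≠ 0 := fun h => h0 (by rw [h, zero_mul])
    have hy0' : y.coeff ij'.2 ≠ 0 := fun h => h0 (by rw [h, mul_zero])
    have hk0' : ij'.1 + ij'.2 = k := Finset.HasAntidiagonal.mem_antidiagonal.mp hmem
    have b1 := (hx _ hx0').2
    have b2 := (hy _ hy0').2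
    have hmc : (mc (n₁ + n₂) k : ℤ) ≤ mc n₁ ij'.1 + mc n₂ ij'.2 := by
      exact_mod_cast hk0' ▸ mc_add_le (hx _ hx0').1 (hy _ hy0').1
    have hdeg : (x.coeff ij'.1 * y.coeff ij'.2).natDegree ≤
        (x.coeff ij'.1).natDegree + (y.coeff ij'.2).natDegree := Polynomial.natDegree_mul_le
    omega
  have hsum := Polynomial.natDegree_sum_le_of_forall_le (Finset.HasAntidiagonal.antidiagonal k)
      (fun ij' => x.coeff ij'.1 * y.coeff ij'.2) hterm
  omega

lemma adm_C {e : ℤ} {w : Polynomial R} (h : (w.natDegree : ℤ) ≤ e) :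
    Adm 0 e (Polynomial.C w : TS R) := by
  intro k hk
  rw [Polynomial.coeff_C] at hk ⊢
  by_cases h0 : k = 0
  · subst h0
    simp only [if_pos rfl]
    exact ⟨okp_zero, by rw [mc_zero]; simpa using h⟩
  · simp [h0] at hk

lemma adm_cc (r : R) : Adm 0 0 (cc r) := by
  have : cc r = Polynomial.C (Polynomial.C r) := rfl
  rw [this]
  exact adm_C (by simp)

lemma adm_Sv : Adm 0 1 (Sv : TS R) := by
  have : (Sv : TS R) = Polynomial.C Polynomial.X := rfl
  rw [this]
  exact adm_C (by simp [Polynomial.natDegree_X_le])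

lemma adm_natCast (j : ℕ) : Adm 0 0 ((j : TS R)) := by
  rw [← map_natCast (Polynomial.C : Polynomial R →+* TS R) j]
  exact adm_C (by simp [Polynomial.natDegree_natCast])

end Adm


section Deriv

variable {R : Type*} [CommRing R] [Algebra ℚ R]

/-- apply `δ` to the coefficients of a polynomial -/
def dmap (δ : Derivation ℚ R R) (g : Polynomial R) : Polynomial R :=
  g.sum fun i a => Polynomial.C (δ a) * Polynomial.X ^ i

lemma dmap_zero (δ : Derivation ℚ R R) : dmap δ 0 = 0 := by simp [dmap]

lemma dmap_add (δ : Derivation ℚ R R) (g₁ g₂ : Polynomial R) :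
    dmap δ (g₁ + g₂) = dmap δ g₁ + dmap δ g₂ := by
  rw [dmap, dmap, dmap]
  exact Polynomial.sum_add_index g₁ g₂ _ (fun i => by simp) (fun i a b => by simp [add_mul])

lemma dmap_monomial (δ : Derivation ℚ R R) (i : ℕ) (a : R) :
    dmap δ (Polynomial.monomial i a) = Polynomial.C (δ a) * Polynomial.X ^ i := by
  rw [dmap]
  exact Polynomial.sum_monomial_index a _ (by simp)

lemma natDegree_dmap_le (δ : Derivation ℚ R R) (g : Polynomial R) :
    (dmap δ g).natDegree ≤ g.natDegree := by
  rw [dmap, Polynomial.sum]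
  apply Polynomial.natDegree_sum_le_of_forall_le
  intro i hi
  refine le_trans Polynomial.natDegree_mul_le ?_
  rw [Polynomial.natDegree_C, zero_add]
  exact le_trans (Polynomial.natDegree_X_pow_le i) (Polynomial.le_natDegree_of_mem_supp i hi)

/-- `z`-derivative on the propagator-polynomial level -/
def dH (δ : Derivation ℚ R R) (f c : R) (g : Polynomial R) : Polynomial R :=
  dmap δ g + (Polynomial.C f - Polynomial.C c * Polynomial.X ^ 2) * Polynomial.derivative g

lemma dH_zero (δ : Derivation ℚ R R) (f c : R) : dH δ f c 0 = 0 := by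
  simp [dH, dmap_zero]

lemma dH_add (δ : Derivation ℚ R R) (f c : R) (g₁ g₂ : Polynomial R) :
    dH δ f c (g₁ + g₂) = dH δ f c g₁ + dH δ f c g₂ := by
  simp [dH, dmap_add, mul_add]
  ring

lemma natDegree_dH_le (δ : Derivation ℚ R R) (f c : R) (g : Polynomial R) :
    (dH δ f c g).natDegree ≤ g.natDegree + 2 := by
  rw [dH]
  refine le_trans (Polynomial.natDegree_add_le _ _) (max_le ?_ ?_)
  · exact le_trans (natDegree_dmap_le δ g) (by omega)
  · refine le_trans Polynomial.natDegree_mul_le ?_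
    have h1 : (Polynomial.C f - Polynomial.C c * Polynomial.X ^ 2).natDegree ≤ 2 := by
      refine le_trans (Polynomial.natDegree_sub_le _ _) (max_le (by simp) ?_)
      refine le_trans Polynomial.natDegree_mul_le ?_
      have := Polynomial.natDegree_X_pow_le (R := R) 2
      simp only [Polynomial.natDegree_C, zero_add]
      omega
    by_cases h : g.natDegree = 0
    · obtain ⟨a, rfl⟩ := Polynomial.natDegree_eq_zero.mp h
      simp only [Polynomial.derivative_C, Polynomial.natDegree_zero, add_zero,
        Polynomial.natDegree_C]
      omega
    · have h2 := Polynomial.natDegree_derivative_le g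
      omega

/-- the `T`-part multiplier for `Dh` -/
def gam (δ : Derivation ℚ R R) (f c A : R) : Polynomial R :=
  Polynomial.C (δ A * δ (δ A)) * Polynomial.X
    + (2 : ℚ)⁻¹ • (Polynomial.C (δ A) ^ 2 * (Polynomial.C f - Polynomial.C c * Polynomial.X ^ 2))

lemma natDegree_gam_le (δ : Derivation ℚ R R) (f c A : R) : (gam δ f c A).natDegree ≤ 2 := by
  rw [gam]
  refine le_trans (Polynomial.natDegree_add_le _ _) (max_le ?_ ?_)
  · refine le_trans Polynomial.natDegree_mul_le ?_
    have := Polynomial.natDegree_X_le (R := R)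
    simp only [Polynomial.natDegree_C, zero_add]
    omega
  · refine le_trans (natDegree_qsmul_le _ _) ?_
    refine le_trans Polynomial.natDegree_mul_le ?_
    have h0 : (Polynomial.C (δ A) ^ 2).natDegree ≤ 0 := by
      refine le_trans (Polynomial.natDegree_pow_le) (by simp)
    have h1 : (Polynomial.C f - Polynomial.C c * Polynomial.X ^ 2).natDegree ≤ 2 := by
      refine le_trans (Polynomial.natDegree_sub_le _ _) (max_le (by simp) ?_)
      refine le_trans Polynomial.natDegree_mul_le ?_
      have := Polynomial.natDegree_X_pow_le (R := R) 2
      simp only [Polynomial.natDegree_C, zero_add]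
      omega
    omega

/-- hypotheses on the holomorphic derivation -/
structure DhGood (δ : Derivation ℚ R R) (c f A : R) (Dh : Derivation ℚ (TS R) (TS R)) :
    Prop where
  hC : ∀ r : R, Dh (cc r) = cc (δ r)
  hS : Dh (Sv (R := R)) = cc f - cc c * Sv ^ 2
  hT : Dh (Tv (R := R)) = (cc (δ A) * cc (δ (δ A)) * Sv
      + (2 : ℚ)⁻¹ • (cc (δ A) ^ 2 * (cc f - cc c * Sv ^ 2))) * Tv

/-- hypotheses on the propagator derivation -/
structure DpGood (δ : Derivation ℚ R R) (A : R) (Dp : Derivation ℚ (TS R) (TS R)) :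
    Prop where
  hC : ∀ r : R, Dp (cc r) = 0
  hS : Dp (Sv (R := R)) = 1
  hT : Dp (Tv (R := R)) = (2 : ℚ)⁻¹ • (cc (δ A) ^ 2 * Tv)

lemma C_monomial (i : ℕ) (a : R) :
    (Polynomial.C (Polynomial.monomial i a) : TS R) = cc a * Sv ^ i := by
  rw [← Polynomial.C_mul_X_pow_eq_monomial]
  simp [cc, Sv]

lemma Dh_C {δ : Derivation ℚ R R} {c f A : R} {Dh : Derivation ℚ (TS R) (TS R)}
    (HD : DhGood δ c f A Dh) (g : Polynomial R) :
    Dh (Polynomial.C g) = Polynomial.C (dH δ f c g) := by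
  induction g using Polynomial.induction_on' with
  | add p q hp hq => rw [map_add, map_add, hp, hq, dH_add, map_add]
  | monomial i a =>
      rw [C_monomial, Derivation.leibniz, Derivation.leibniz_pow, HD.hC, HD.hS]
      rw [dH, dmap_monomial, Polynomial.derivative_monomial,
        ← Polynomial.C_mul_X_pow_eq_monomial]
      simp only [map_add, map_mul, map_pow, map_sub, map_natCast, cc, Sv,
        smul_eq_mul, nsmul_eq_mul]
      ring

lemma Dp_C {δ : Derivation ℚ R R} {A : R} {Dp : Derivation ℚ (TS R) (TS R)}
    (HP : DpGood δ A Dp) (g : Polynomial R) :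
    Dp (Polynomial.C g) = Polynomial.C (Polynomial.derivative g) := by
  induction g using Polynomial.induction_on' with
  | add p q hp hq => simp [map_add, hp, hq]
  | monomial i a =>
      rw [C_monomial, Derivation.leibniz, Derivation.leibniz_pow, HP.hC, HP.hS]
      rw [Polynomial.derivative_monomial, ← Polynomial.C_mul_X_pow_eq_monomial]
      simp only [map_mul, map_pow, map_natCast, cc, Sv, smul_eq_mul, nsmul_eq_mul,
        mul_zero, mul_one, add_zero]
      ring

lemma Dh_X {δ : Derivation ℚ R R} {c f A : R} {Dh : Derivation ℚ (TS R) (TS R)}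
    (HD : DhGood δ c f A Dh) :
    Dh (Polynomial.X : TS R) = Polynomial.C (gam δ f c A) * Polynomial.X := by
  have h := HD.hT
  rw [Tv] at h
  rw [h, gam]
  congr 1
  rw [map_add, map_mul, ← Polynomial.smul_C]
  simp only [map_mul, map_pow, map_sub, cc, Sv]

lemma Dp_X {δ : Derivation ℚ R R} {A : R} {Dp : Derivation ℚ (TS R) (TS R)}
    (HP : DpGood δ A Dp) :
    Dp (Polynomial.X : TS R)
      = (2 : ℚ)⁻¹ • (Polynomial.C (Polynomial.C (δ A) ^ 2) * Polynomial.X) := by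
  have h := HP.hT
  rw [Tv] at h
  rw [h]
  congr 1
  simp [cc]

lemma coeff_Dh {δ : Derivation ℚ R R} {c f A : R} {Dh : Derivation ℚ (TS R) (TS R)}
    (HD : DhGood δ c f A Dh) (x : TS R) (k : ℕ) :
    (Dh x).coeff k = dH δ f c (x.coeff k) + (k : Polynomial R) * (gam δ f c A * x.coeff k) := by
  induction x using Polynomial.induction_on' with
  | add p q hp hq =>
      rw [map_add, Polynomial.coeff_add, hp, hq, Polynomial.coeff_add, dH_add]
      ring
  | monomial j a =>
      rw [← Polynomial.C_mul_X_pow_eq_monomial, Derivation.leibniz, Derivation.leibniz_pow,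
        Dh_C HD, Dh_X HD]
      cases j with
      | zero =>
          simp only [pow_zero, zero_smul, smul_zero, smul_eq_mul, mul_zero, zero_add, one_mul,
            mul_one, zero_mul]
          rw [Polynomial.coeff_C, Polynomial.coeff_C]
          by_cases hk : k = 0
          · simp [hk]
          · simp [hk, dH_zero]
      | succ j' =>
          have harr : (Polynomial.X ^ (j' + 1 - 1) : TS R) • (Polynomial.C (gam δ f c A) * Polynomial.X)
              = Polynomial.C (gam δ f c A) * Polynomial.X ^ (j' + 1) := by
            rw [smul_eq_mul, Nat.add_sub_cancel, pow_succ]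
            ring
          rw [harr, smul_eq_mul, smul_eq_mul, nsmul_eq_mul]
          rw [show ((j' + 1 : ℕ) : TS R) = Polynomial.C ((j' + 1 : ℕ) : Polynomial R) by
            simp]
          rw [mul_comm (Polynomial.X ^ (j' + 1) : TS R) _]
          simp only [Polynomial.coeff_add, Polynomial.coeff_C_mul, Polynomial.coeff_X_pow]
          by_cases hk : k = j' + 1
          · subst hk
            simp only [if_pos rfl, mul_one]
            push_cast
            ring
          · simp [hk, Ne.symm hk, dH_zero]

lemma coeff_Dp {δ : Derivation ℚ R R} {A : R} {Dp : Derivation ℚ (TS R) (TS R)}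
    (HP : DpGood δ A Dp) (x : TS R) (k : ℕ) :
    (Dp x).coeff k = Polynomial.derivative (x.coeff k)
      + ((k : ℚ) * (2 : ℚ)⁻¹) • (Polynomial.C (δ A) ^ 2 * x.coeff k) := by
  induction x using Polynomial.induction_on' with
  | add p q hp hq =>
      rw [map_add, Polynomial.coeff_add, hp, hq, Polynomial.coeff_add, map_add, mul_add, smul_add]
      ring
  | monomial j a =>
      rw [← Polynomial.C_mul_X_pow_eq_monomial, Derivation.leibniz, Derivation.leibniz_pow,
        Dp_C HP, Dp_X HP]
      cases j with
      | zero =>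
          simp only [pow_zero, zero_smul, smul_zero, smul_eq_mul, mul_zero, zero_add, one_mul,
            mul_one, zero_mul]
          rw [Polynomial.coeff_C, Polynomial.coeff_C]
          by_cases hk : k = 0
          · simp [hk]
          · simp [hk]
      | succ j' =>
          have harr : (Polynomial.X ^ (j' + 1 - 1) : TS R)
                • ((2 : ℚ)⁻¹ • (Polynomial.C (Polynomial.C (δ A) ^ 2) * Polynomial.X))
              = (2 : ℚ)⁻¹ • (Polynomial.C (Polynomial.C (δ A) ^ 2) * Polynomial.X ^ (j' + 1)) := by
            rw [smul_eq_mul, Nat.add_sub_cancel, mul_smul_comm]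
            congr 1
            rw [pow_succ]
            ring
          rw [harr, smul_eq_mul, smul_eq_mul, nsmul_eq_mul]
          rw [show ((j' + 1 : ℕ) : TS R) = Polynomial.C ((j' + 1 : ℕ) : Polynomial R) by
            simp]
          rw [mul_comm (Polynomial.X ^ (j' + 1) : TS R) _]
          simp only [Polynomial.coeff_add, Polynomial.coeff_C_mul, Polynomial.coeff_smul,
            Polynomial.coeff_X_pow]
          by_cases hk : k = j' + 1
          · subst hk
            simp only [if_pos rfl, mul_one, if_true]
            rw [Algebra.smul_def, Algebra.smul_def, map_mul, map_natCast]
            push_cast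
            ring
          · simp [hk, Ne.symm hk]

lemma adm_dh {δ : Derivation ℚ R R} {c f A : R} {Dh : Derivation ℚ (TS R) (TS R)}
    (HD : DhGood δ c f A Dh) {n : ℕ} {d d' : ℤ} {x : TS R}
    (hx : Adm n d x) (hd : d + 2 ≤ d') : Adm n d' (Dh x) := by
  intro k hk
  rw [coeff_Dh HD] at hk ⊢
  by_cases h0 : x.coeff k = 0
  · rw [h0] at hk
    simp [dH_zero] at hk
  refine ⟨(hx k h0).1, ?_⟩
  have hb := (hx k h0).2
  have h1 : (dH δ f c (x.coeff k)).natDegree ≤ (x.coeff k).natDegree + 2 :=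
    natDegree_dH_le δ f c _
  have h2 : ((k : Polynomial R) * (gam δ f c A * x.coeff k)).natDegree ≤
      (x.coeff k).natDegree + 2 := by
    refine le_trans Polynomial.natDegree_mul_le ?_
    have h3 : (gam δ f c A * x.coeff k).natDegree ≤ 2 + (x.coeff k).natDegree :=
      le_trans Polynomial.natDegree_mul_le (by
        have := natDegree_gam_le δ f c A; omega)
    simp only [Polynomial.natDegree_natCast, zero_add]
    omega
  have hmax := Polynomial.natDegree_add_le (dH δ f c (x.coeff k))
      ((k : Polynomial R) * (gam δ f c A * x.coeff k))
  rcases le_total (dH δ f c (x.coeff k)).natDegree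
      ((k : Polynomial R) * (gam δ f c A * x.coeff k)).natDegree with hab | hab
  · rw [max_eq_right hab] at hmax; omega
  · rw [max_eq_left hab] at hmax; omega

end Deriv


section Step

variable {R : Type*} [CommRing R] [IsDomain R] [Algebra ℚ R]

lemma qsmul_ne_zero {q : ℚ} (hq : q ≠ 0) {r : R} (hr : r ≠ 0) : q • r ≠ 0 := by
  rw [Algebra.smul_def]
  refine mul_ne_zero ?_ hr
  rw [Ne, map_eq_zero_iff (algebraMap ℚ R) (RingHom.injective _)]
  exact hq

lemma ode_deg {u r : Polynomial R} {e : R} (he : e ≠ 0)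
    (h : Polynomial.derivative u + Polynomial.C e * u = r) (hu : u ≠ 0) :
    r ≠ 0 ∧ u.natDegree ≤ r.natDegree := by
  have hd0 : (Polynomial.derivative u).coeff u.natDegree = 0 := by
    by_cases hz : u.natDegree = 0
    · obtain ⟨a, rfl⟩ := Polynomial.natDegree_eq_zero.mp hz
      simp
    · refine Polynomial.coeff_eq_zero_of_natDegree_lt ?_
      have := Polynomial.natDegree_derivative_le u
      omega
  have hco : r.coeff u.natDegree = e * u.leadingCoeff := by
    rw [← h, Polynomial.coeff_add, Polynomial.coeff_C_mul, hd0, zero_add, Polynomial.leadingCoeff]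
  have hne : r.coeff u.natDegree ≠ 0 := by
    rw [hco]
    exact mul_ne_zero he (Polynomial.leadingCoeff_ne_zero.mpr hu)
  exact ⟨fun h0 => hne (by simp [h0]), Polynomial.le_natDegree_of_ne_zero hne⟩

lemma deriv_deg [CharZero R] {u : Polynomial R} (hu : u.natDegree ≠ 0) :
    Polynomial.derivative u ≠ 0 ∧ u.natDegree ≤ (Polynomial.derivative u).natDegree + 1 := by
  have hu0 : u ≠ 0 := fun h => hu (by simp [h])
  obtain ⟨m, hm⟩ : ∃ m, u.natDegree = m + 1 := ⟨u.natDegree - 1, by omega⟩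
  have hco : (Polynomial.derivative u).coeff m = u.coeff (m + 1) * ((m : R) + 1) :=
    Polynomial.coeff_derivative u m
  have hne : (Polynomial.derivative u).coeff m ≠ 0 := by
    rw [hco]
    refine mul_ne_zero ?_ ?_
    · rw [← hm]
      exact Polynomial.leadingCoeff_ne_zero.mpr hu0
    · have : ((m : R) + 1) = ((m + 1 : ℕ) : R) := by push_cast; ring
      rw [this, Ne, Nat.cast_eq_zero]
      omega
  refine ⟨fun h0 => hne (by simp [h0]), ?_⟩
  have := Polynomial.le_natDegree_of_ne_zero hne
  omega

variable {δ : Derivation ℚ R R} {c f ft al A : R}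
variable {Dh Dp : Derivation ℚ (TS R) (TS R)}

lemma adm_dop (HD : DhGood δ c f A Dh) {p : ℕ → Polynomial R}
    (hp : ∀ h' : ℕ, 2 ≤ h' → ((p h').natDegree : ℤ) ≤ 3 * h' - 2)
    {n : ℕ} (h : ℕ) (hh : 1 ≤ h) {e d : ℤ} {x : TS R} (hx : Adm n e x)
    (hd : e + 3 * h - 1 ≤ d) :
    Adm n d (Dop δ c ft al A p Dh n h x) := by
  have hq₁ : Adm 0 1 ((2 : ℚ)⁻¹ • (cc c * Sv) + cc al : TS R) :=
    adm_add (adm_qsmul _ (adm_mul (adm_cc c) adm_Sv rfl le_rfl))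
      (adm_mono (adm_cc al) (by norm_num))
  have hpre : Adm 0 0 ((n : TS R) * cc (δ A)) :=
    adm_mul (adm_natCast n) (adm_cc _) rfl (by norm_num)
  have hB1 : Adm 0 1 (cc ft - cc c * Sv : TS R) :=
    adm_sub (adm_mono (adm_cc ft) (by norm_num)) (adm_mul (adm_cc c) adm_Sv rfl le_rfl)
  have hDhx : Adm n (e + 2) (Dh x) := adm_dh HD hx le_rfl
  rw [Dop]
  by_cases h1 : h = 1
  · subst h1
    rw [if_pos rfl]
    have hB : Adm 0 1 (cc (δ (δ A)) - (cc ft - cc c * Sv) * cc (δ A) : TS R) :=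
      adm_sub (adm_mono (adm_cc _) (by norm_num))
        (adm_mul hB1 (adm_cc (δ A)) rfl (by norm_num))
    have hnB : Adm 0 1 ((n : TS R) * (cc (δ (δ A)) - (cc ft - cc c * Sv) * cc (δ A))) :=
      adm_mul (adm_natCast n) hB rfl (by norm_num)
    have ht1 : Adm n d ((2 : ℚ)⁻¹ • ((n : TS R) * (cc (δ (δ A)) - (cc ft - cc c * Sv)
        * cc (δ A)) * x)) :=
      adm_qsmul _ (adm_mul hnB hx (Nat.zero_add n) (by omega))
    have hq₁x : Adm n (e + 2) (((2 : ℚ)⁻¹ • (cc c * Sv) + cc al) * x) :=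
      adm_mul hq₁ hx (Nat.zero_add n) (by omega)
    exact adm_add ht1 (adm_mul hpre (adm_add hDhx hq₁x) (Nat.zero_add n) (by omega))
  by_cases h2 : h = 2
  · subst h2
    rw [if_neg (by omega), if_pos rfl]
    have hDh2 : Adm n (e + 4) (Dh (Dh x)) := adm_dh HD hDhx (by omega)
    have hBdh : Adm n (e + 4) ((cc ft - cc c * Sv) * Dh x) :=
      adm_mul hB1 hDhx (Nat.zero_add n) (by omega)
    have hfirst : Adm n (e + 4) (-((2 : ℚ)⁻¹ • (Dh (Dh x) - (cc ft - cc c * Sv) * Dh x))) :=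
      adm_neg (adm_qsmul _ (adm_sub hDh2 hBdh))
    have hsecond : Adm n (e + 4) (((2 : ℚ)⁻¹ • (cc c * Sv) + cc al) * Dh x) :=
      adm_mul hq₁ hDhx (Nat.zero_add n) (by omega)
    exact adm_mono (adm_sub hfirst hsecond) (by omega)
  by_cases hodd : h % 2 = 1
  · rw [if_neg h1, if_neg h2, if_pos hodd]
    have hh3 : 3 ≤ h := by omega
    have hph : ((p ((h + 1) / 2)).natDegree : ℤ) ≤ 3 * (((h + 1) / 2 : ℕ) : ℤ) - 2 :=
      hp _ (by omega)
    have hC3 : Adm 0 (3 * (((h + 1) / 2 : ℕ) : ℤ) - 2)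
        ((n : TS R) * cc (δ A) * Polynomial.C (p ((h + 1) / 2))) :=
      adm_mul hpre (adm_C hph) rfl (by omega)
    refine adm_mul hC3 hx (Nat.zero_add n) ?_
    have hcast : (((h + 1) / 2 : ℕ) : ℤ) * 2 ≤ (h : ℤ) + 1 := by omega
    have hcast2 : (1 : ℤ) ≤ (((h + 1) / 2 : ℕ) : ℤ) := by omega
    omega
  · rw [if_neg h1, if_neg h2, if_neg hodd]
    have hh4 : 4 ≤ h := by omega
    have hph : ((p (h / 2)).natDegree : ℤ) ≤ 3 * ((h / 2 : ℕ) : ℤ) - 2 := hp _ (by omega)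
    have hcast : ((h / 2 : ℕ) : ℤ) * 2 = (h : ℤ) := by omega
    refine adm_neg (adm_mul (adm_C hph) hDhx (Nat.zero_add n) (by omega))

lemma adm_fac (HD : DhGood δ c f A Dh) {m : ℕ} {G : ℤ → TS R}
    (H : ∀ a : ℤ, Adm m (3 * a + 3) (G a)) (b : ℤ) :
    Adm m (3 * b + 3) (Dh (G (b - 1)) - (m : TS R) * cc (δ A) * G b) :=
  adm_sub (adm_dh HD (H (b - 1)) (by omega))
    (adm_mul (adm_mul (adm_natCast m) (adm_cc (δ A)) rfl le_rfl) (H b)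
      (Nat.zero_add m) (by omega))

/-- the extra condition at the special coefficient `T^(n^2)` -/
def EE (n : ℕ) (B : ℤ) (x : TS R) : Prop :=
  x.coeff (n ^ 2) = 0 ∨ ((x.coeff (n ^ 2)).natDegree : ℤ) ≤ B

lemma EE_zero {n : ℕ} {B : ℤ} : EE n B (0 : TS R) := Or.inl (by simp)

lemma EE_add {n : ℕ} {B : ℤ} {x y : TS R} (hx : EE n B x) (hy : EE n B y) :
    EE n B (x + y) := by
  rcases hx with hx | hx
  · rcases hy with hy | hy
    · exact Or.inl (by rw [Polynomial.coeff_add, hx, hy, add_zero])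
    · exact Or.inr (by rw [Polynomial.coeff_add, hx, zero_add]; exact hy)
  · rcases hy with hy | hy
    · exact Or.inr (by rw [Polynomial.coeff_add, hy, add_zero]; exact hx)
    · refine Or.inr ?_
      rw [Polynomial.coeff_add]
      have hmax := Polynomial.natDegree_add_le (x.coeff (n ^ 2)) (y.coeff (n ^ 2))
      rcases le_total (x.coeff (n ^ 2)).natDegree (y.coeff (n ^ 2)).natDegree with hab | hab
      · rw [max_eq_right hab] at hmax; omega
      · rw [max_eq_left hab] at hmax; omega

lemma EE_neg {n : ℕ} {B : ℤ} {x : TS R} (hx : EE n B x) : EE n B (-x) := by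
  rcases hx with hx | hx
  · exact Or.inl (by rw [Polynomial.coeff_neg, hx, neg_zero])
  · exact Or.inr (by rw [Polynomial.coeff_neg, Polynomial.natDegree_neg]; exact hx)

lemma EE_qsmul {n : ℕ} {B : ℤ} {x : TS R} (q : ℚ) (hx : EE n B x) : EE n B (q • x) := by
  rcases hx with hx | hx
  · exact Or.inl (by rw [Polynomial.coeff_smul, hx, smul_zero])
  · refine Or.inr ?_
    rw [Polynomial.coeff_smul]
    have := natDegree_qsmul_le q (x.coeff (n ^ 2))
    omega

lemma EE_sum {n : ℕ} {B : ℤ} {ι : Type*} {s : Finset ι} {F : ι → TS R}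
    (h : ∀ i ∈ s, EE n B (F i)) : EE n B (∑ i ∈ s, F i) := by
  classical
  induction s using Finset.induction_on with
  | empty => simpa using EE_zero
  | insert _ _ hni ih =>
      rw [Finset.sum_insert hni]
      exact EE_add (h _ (Finset.mem_insert_self _ _))
        (ih fun i hi => h i (Finset.mem_insert_of_mem hi))

lemma EE_of_adm {n : ℕ} (hn : 1 ≤ n) {g : ℤ} {x : TS R} (hx : Adm n (3 * g + 2) x) :
    EE n (3 * g - 1) x := by
  by_cases h : x.coeff (n ^ 2) = 0
  · exact Or.inl h
  · obtain ⟨hok, hb⟩ := hx _ h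
    have hmc : mc n (n ^ 2) = 1 := mc_sq hn hok
    exact Or.inr (by omega)

lemma EE_mul {n₁ n₂ n : ℕ} (h1 : 1 ≤ n₁) (h2 : 1 ≤ n₂) {d₁ d₂ : ℤ} {x y : TS R}
    (hx : Adm n₁ d₁ x) (hy : Adm n₂ d₂ y) (hn : n₁ + n₂ = n) {B : ℤ} :
    EE n B (x * y) := by
  subst hn
  refine Or.inl ?_
  rw [Polynomial.coeff_mul]
  refine Finset.sum_eq_zero fun ij hij => ?_
  by_contra h0
  have hx0 : x.coeff ij.1 ≠ 0 := fun h => h0 (by rw [h, zero_mul])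
  have hy0 : y.coeff ij.2 ≠ 0 := fun h => h0 (by rw [h, mul_zero])
  obtain ⟨π₁, hπ₁⟩ := (hx _ hx0).1
  obtain ⟨π₂, hπ₂⟩ := (hy _ hy0).1
  have hks : ij.1 + ij.2 = (n₁ + n₂) ^ 2 := Finset.HasAntidiagonal.mem_antidiagonal.mp hij
  have hpk : pk (pcomb π₁ π₂) = (n₁ + n₂) ^ 2 := by rw [pk_pcomb, hπ₁, hπ₂, hks]
  have hcard := card_eq_one_of_pk_sq (by omega) (pcomb π₁ π₂) hpk
  rw [card_pcomb] at hcard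
  have hc1 := card_pos_of_pos h1 π₁
  have hc2 := card_pos_of_pos h2 π₂
  omega

lemma step (HP : DpGood δ A Dp) (hA : δ A ≠ 0) {n : ℕ} (hn : 1 ≤ n) (g : ℕ) {x y : TS R}
    (hEq : Dp x - (2 : ℚ)⁻¹ • ((n : TS R) ^ 2 * cc (δ A) ^ 2 * x) = y)
    (hyA : Adm n (3 * (g : ℤ) + 3) y) (hyE : EE n (3 * (g : ℤ) - 1) y) :
    Adm n (3 * (g : ℤ) + 3) x := by
  have hCZ : CharZero R := charZero_of_injective_algebraMap (RingHom.injective (algebraMap ℚ R))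
  intro k hk
  have hco : Polynomial.derivative (x.coeff k)
      + (((k : ℚ) - (n : ℚ) ^ 2) * (2 : ℚ)⁻¹) • (Polynomial.C (δ A) ^ 2 * x.coeff k)
      = y.coeff k := by
    have h0 := congrArg (fun z : TS R => z.coeff k) hEq
    rw [Polynomial.coeff_sub, coeff_Dp HP, Polynomial.coeff_smul] at h0
    have hCform : ((n : TS R) ^ 2 * cc (δ A) ^ 2)
        = Polynomial.C ((n : Polynomial R) ^ 2 * Polynomial.C (δ A) ^ 2) := by
      rw [map_mul, map_pow, map_pow, map_natCast]
      rfl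
    rw [hCform, Polynomial.coeff_C_mul] at h0
    have h2 : (2 : ℚ)⁻¹ • ((n : Polynomial R) ^ 2 * Polynomial.C (δ A) ^ 2 * x.coeff k)
        = ((n : ℚ) ^ 2 * (2 : ℚ)⁻¹) • (Polynomial.C (δ A) ^ 2 * x.coeff k) := by
      rw [mul_assoc, show ((n : Polynomial R) ^ 2) = ((n ^ 2 : ℕ) : Polynomial R) by push_cast; ring,
        ← nsmul_eq_mul, ← Nat.cast_smul_eq_nsmul ℚ, smul_smul]
      congr 1
      push_cast
      ring
    rw [h2] at h0
    rw [← h0, add_sub_assoc, ← sub_smul]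
    congr 2
    ring
  by_cases hkn : k = n ^ 2
  · subst hkn
    have hsc : (((n ^ 2 : ℕ) : ℚ) - (n : ℚ) ^ 2) * (2 : ℚ)⁻¹ = 0 := by push_cast; ring
    rw [hsc, zero_smul, add_zero] at hco
    have hok : OkP n (n ^ 2) := ⟨Nat.Partition.indiscrete n, pk_indiscrete hn⟩
    have hmcle : mc n (n ^ 2) ≤ 1 := by
      have := mc_le (Nat.Partition.indiscrete n) (pk_indiscrete hn)
      rw [card_indiscrete hn] at this
      exact this
    have hg : (0 : ℤ) ≤ (g : ℤ) := Int.ofNat_nonneg g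
    refine ⟨hok, ?_⟩
    rcases hyE with h0 | hdeg
    · rw [h0] at hco
      have hdz : (x.coeff (n ^ 2)).natDegree = 0 := by
        by_contra hne
        exact (deriv_deg hne).1 hco
      omega
    · by_cases hdz : (x.coeff (n ^ 2)).natDegree = 0
      · omega
      · have hd2 := deriv_deg hdz
        have heq2 : (Polynomial.derivative (x.coeff (n ^ 2))).natDegree
            = (y.coeff (n ^ 2)).natDegree := by rw [hco]
        omega
  · have hq : ((k : ℚ) - (n : ℚ) ^ 2) * (2 : ℚ)⁻¹ ≠ 0 := by
      refine mul_ne_zero (sub_ne_zero.mpr ?_) (by norm_num)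
      intro hcon
      apply hkn
      have : ((k : ℚ)) = ((n ^ 2 : ℕ) : ℚ) := by push_cast; exact hcon
      exact_mod_cast this
    have heC : (((k : ℚ) - (n : ℚ) ^ 2) * (2 : ℚ)⁻¹) • (Polynomial.C (δ A) ^ 2 * x.coeff k)
        = Polynomial.C ((((k : ℚ) - (n : ℚ) ^ 2) * (2 : ℚ)⁻¹) • ((δ A) ^ 2)) * x.coeff k := by
      rw [← map_pow, ← smul_mul_assoc, Polynomial.smul_C]
    rw [heC] at hco
    have hex : (((k : ℚ) - (n : ℚ) ^ 2) * (2 : ℚ)⁻¹) • ((δ A) ^ 2) ≠ 0 :=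
      qsmul_ne_zero hq (pow_ne_zero 2 hA)
    obtain ⟨hr, hle⟩ := ode_deg hex hco hk
    obtain ⟨hok, hb⟩ := hyA k hr
    exact ⟨hok, by omega⟩

end Step


section Repr

variable {R : Type*} [CommRing R]

lemma adm_to_repr {n : ℕ} (hn : 1 ≤ n) (g : ℕ) {x : TS R}
    (hx : Adm n (3 * (g : ℤ) + 3) x) :
    ∃ q : Nat.Partition n → Polynomial R,
      (∀ π : Nat.Partition n, π.parts.card ≤ g + 1 →
          (q π).natDegree ≤ 3 * (g + 1 - π.parts.card))
      ∧ (∀ π : Nat.Partition n, g + 1 < π.parts.card → q π = 0)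
      ∧ x = ∑ π : Nat.Partition n,
          Tv ^ (π.parts.map fun i => i ^ 2).sum * Polynomial.C (q π) := by
  classical
  have H : ∀ k : ℕ, ∃ π : Nat.Partition n,
      (x.coeff k ≠ 0 → (pk π = k ∧ π.parts.card = mc n k)) := by
    intro k
    by_cases hk : x.coeff k = 0
    · exact ⟨Nat.Partition.indiscrete n, fun h => (h hk).elim⟩
    · obtain ⟨π, h1, h2⟩ := mc_spec (hx k hk).1
      exact ⟨π, fun _ => ⟨h1, h2⟩⟩
  choose φ hφ using H
  refine ⟨fun π => if pk π ∈ x.support ∧ φ (pk π) = π then x.coeff (pk π) else 0,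
    ?_, ?_, ?_⟩
  · intro π hπcard
    by_cases hcond : pk π ∈ x.support ∧ φ (pk π) = π
    · simp only [if_pos hcond]
      have hk0 : x.coeff (pk π) ≠ 0 := Polynomial.mem_support_iff.mp hcond.1
      have hb := (hx _ hk0).2
      have hcard := (hφ (pk π) hk0).2
      rw [hcond.2] at hcard
      omega
    · simp only [if_neg hcond]
      simp
  · intro π hπcard
    by_cases hcond : pk π ∈ x.support ∧ φ (pk π) = π
    · exfalso
      have hk0 : x.coeff (pk π) ≠ 0 := Polynomial.mem_support_iff.mp hcond.1
      have hb := (hx _ hk0).2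
      have hcard := (hφ (pk π) hk0).2
      rw [hcond.2] at hcard
      have : 0 ≤ ((x.coeff (pk π)).natDegree : ℤ) := Int.ofNat_nonneg _
      omega
    · simp only [if_neg hcond]
  · have hsum : ∑ π : Nat.Partition n, Tv ^ pk π
        * Polynomial.C (if pk π ∈ x.support ∧ φ (pk π) = π then x.coeff (pk π) else 0)
        = ∑ k ∈ x.support, Polynomial.monomial k (x.coeff k) := by
      rw [← Finset.sum_filter_add_sum_filter_not Finset.univ
        (fun π => pk π ∈ x.support ∧ φ (pk π) = π)]
      have hz : ∑ π ∈ Finset.univ.filter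
          (fun π : Nat.Partition n => ¬(pk π ∈ x.support ∧ φ (pk π) = π)),
          Tv ^ pk π * Polynomial.C
            (if pk π ∈ x.support ∧ φ (pk π) = π then x.coeff (pk π) else 0) = 0 := by
        refine Finset.sum_eq_zero fun π hπ => ?_
        rw [if_neg (Finset.mem_filter.mp hπ).2]
        simp
      rw [hz, add_zero]
      refine Finset.sum_nbij' (fun π => pk π) (fun k => φ k) ?_ ?_ ?_ ?_ ?_
      · intro π hπ
        exact ((Finset.mem_filter.mp hπ).2).1
      · intro k hk
        have hk0 : x.coeff k ≠ 0 := Polynomial.mem_support_iff.mp hk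
        refine Finset.mem_filter.mpr ⟨Finset.mem_univ _, ?_, ?_⟩
        · rw [(hφ k hk0).1]
          exact hk
        · rw [(hφ k hk0).1]
      · intro π hπ
        exact ((Finset.mem_filter.mp hπ).2).2
      · intro k hk
        exact (hφ k (Polynomial.mem_support_iff.mp hk)).1
      · intro π hπ
        have hcond := (Finset.mem_filter.mp hπ).2
        rw [if_pos hcond, Tv, mul_comm, Polynomial.C_mul_X_pow_eq_monomial]
    beta_reduce
    simp only [pk] at hsum ⊢
    rw [hsum]
    exact Polynomial.as_sum_support x

end Repr

end MIS

/-- Structure of transseries solutions of the nonperturbative holomorphic anomaly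
equations: every multi-instanton free energy `F^{(n)}_g` is a sum, over the integer
partitions `π` of `n`, of `T^{Σᵢ πᵢ²}` times a polynomial in the propagator `S` of
degree at most `3(g + 1 − ℓ(π))`, the summands with `3(g + 1 − ℓ(π)) < 0` being zero. -/
theorem multi_instanton_structure
    {R : Type*} [CommRing R] [IsDomain R] [Algebra ℚ R]
    (δ : Derivation ℚ R R) (c f ft al A : R) (hA : δ A ≠ 0)
    (p : ℕ → Polynomial R) (hp : ∀ h : ℕ, 2 ≤ h → (p h).natDegree ≤ 3 * h - 2)
    (Dp Dh : Derivation ℚ (TS R) (TS R))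
    (hDpC : ∀ r : R, Dp (cc r) = 0)
    (hDpS : Dp (Sv (R := R)) = 1)
    (hDpT : Dp (Tv (R := R)) = (2 : ℚ)⁻¹ • (cc (δ A) ^ 2 * Tv))
    (hDhC : ∀ r : R, Dh (cc r) = cc (δ r))
    (hDhS : Dh (Sv (R := R)) = cc f - cc c * Sv ^ 2)
    (hDhT : Dh (Tv (R := R)) = (cc (δ A) * cc (δ (δ A)) * Sv
        + (2 : ℚ)⁻¹ • (cc (δ A) ^ 2 * (cc f - cc c * Sv ^ 2))) * Tv)
    (F : ℕ → ℤ → TS R)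
    (hFneg : ∀ (n : ℕ) (j : ℤ), j < 0 → F n j = 0)
    (heq : ∀ n : ℕ, 1 ≤ n → ∀ g : ℕ,
      Dp (F n (g : ℤ)) - (2 : ℚ)⁻¹ • ((n : TS R) ^ 2 * cc (δ A) ^ 2 * F n (g : ℤ))
        = -(∑ h ∈ Finset.Icc 1 g, Dop δ c ft al A p Dh n h (F n ((g : ℤ) - (h : ℤ))))
          + (2 : ℚ)⁻¹ • ∑ m ∈ Finset.Icc 1 (n - 1), ∑ h ∈ Finset.range g,
              (Dh (F m ((h : ℤ) - 1)) - (m : TS R) * cc (δ A) * F m (h : ℤ))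
              * (Dh (F (n - m) ((g : ℤ) - 2 - (h : ℤ)))
                  - ((n - m : ℕ) : TS R) * cc (δ A) * F (n - m) ((g : ℤ) - 1 - (h : ℤ)))) :
    ∀ n : ℕ, 1 ≤ n → ∀ g : ℕ,
      ∃ q : Nat.Partition n → Polynomial R,
        (∀ π : Nat.Partition n, π.parts.card ≤ g + 1 →
            (q π).natDegree ≤ 3 * (g + 1 - π.parts.card))
        ∧ (∀ π : Nat.Partition n, g + 1 < π.parts.card → q π = 0)
        ∧ F n (g : ℤ)
            = ∑ π : Nat.Partition n,
                Tv ^ (π.parts.map fun i => i ^ 2).sum * Polynomial.C (q π) := by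
  classical
  have HD : MIS.DhGood δ c f A Dh := ⟨hDhC, hDhS, hDhT⟩
  have HP : MIS.DpGood δ A Dp := ⟨hDpC, hDpS, hDpT⟩
  have hp' : ∀ h' : ℕ, 2 ≤ h' → ((p h').natDegree : ℤ) ≤ 3 * h' - 2 := by
    intro h' hh'
    have := hp h' hh'
    omega
  suffices key : ∀ n : ℕ, 1 ≤ n → ∀ g : ℕ, MIS.Adm n (3 * (g : ℤ) + 3) (F n (g : ℤ)) by
    intro n hn g
    exact MIS.adm_to_repr hn g (key n hn g)
  intro n
  induction n using Nat.strong_induction_on with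
  | _ n IH =>
    intro hn g
    induction g using Nat.strong_induction_on with
    | _ g IHg =>
      have Hm : ∀ m : ℕ, 1 ≤ m → m < n → ∀ a : ℤ, MIS.Adm m (3 * a + 3) (F m a) := by
        intro m h1 h2 a
        rcases lt_or_ge a 0 with ha | ha
        · rw [hFneg m a ha]; exact MIS.adm_zero
        · obtain ⟨b, rfl⟩ : ∃ b : ℕ, (b : ℤ) = a := ⟨a.toNat, Int.toNat_of_nonneg ha⟩
          exact IH m h2 h1 b
      have Hs : ∀ a : ℤ, a < (g : ℤ) → MIS.Adm n (3 * a + 3) (F n a) := by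
        intro a ha
        rcases lt_or_ge a 0 with h0 | h0
        · rw [hFneg n a h0]; exact MIS.adm_zero
        · obtain ⟨b, rfl⟩ : ∃ b : ℕ, (b : ℤ) = a := ⟨a.toNat, Int.toNat_of_nonneg h0⟩
          exact IHg b (by exact_mod_cast ha)
      refine MIS.step HP hA hn g (heq n hn g) ?_ ?_
      · refine MIS.adm_add (MIS.adm_neg (MIS.adm_sum ?_)) (MIS.adm_qsmul _ (MIS.adm_sum ?_))
        · intro h hmem
          obtain ⟨hh1, hh2⟩ := Finset.mem_Icc.mp hmem
          exact MIS.adm_dop HD hp' h hh1 (Hs ((g : ℤ) - h) (by omega)) (by omega)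
        · intro m hmem
          obtain ⟨hm1, hm2⟩ := Finset.mem_Icc.mp hmem
          refine MIS.adm_sum ?_
          intro h hmem2
          have hh : h < g := Finset.mem_range.mp hmem2
          have hidx : (g : ℤ) - 2 - h = ((g : ℤ) - 1 - h) - 1 := by ring
          rw [hidx]
          refine MIS.adm_mul (MIS.adm_fac HD (fun a => Hm m hm1 (by omega) a) (h : ℤ))
            (MIS.adm_fac HD (fun a => Hm (n - m) (by omega) (by omega) a) ((g : ℤ) - 1 - h))
            (by omega) (by omega)
      · refine MIS.EE_add (MIS.EE_neg (MIS.EE_sum ?_)) (MIS.EE_qsmul _ (MIS.EE_sum ?_))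
        · intro h hmem
          obtain ⟨hh1, hh2⟩ := Finset.mem_Icc.mp hmem
          exact MIS.EE_of_adm hn
            (MIS.adm_dop HD hp' h hh1 (Hs ((g : ℤ) - h) (by omega)) (by omega))
        · intro m hmem
          obtain ⟨hm1, hm2⟩ := Finset.mem_Icc.mp hmem
          refine MIS.EE_sum ?_
          intro h hmem2
          have hh : h < g := Finset.mem_range.mp hmem2
          have hidx : (g : ℤ) - 2 - h = ((g : ℤ) - 1 - h) - 1 := by ring
          rw [hidx]
          exact MIS.EE_mul hm1 (by omega)
            (MIS.adm_fac HD (fun a => Hm m hm1 (by omega) a) (h : ℤ))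
            (MIS.adm_fac HD (fun a => Hm (n - m) (by omega) (by omega) a) ((g : ℤ) - 1 - h))
            (by omega)


end
end

section
/- Let R be an integral domain which is also a ℚ-algebra, with a derivation δ : R → R; fix C, f, f̃, α ∈ R, q₁ := (1/2)·C·S + α ∈ R[S], and p_h ∈ R[S] (h ≥ 2) with deg p_h ≤ 3h−2. Fix κ ≥ 1 and A₁, …, A_κ ∈ R satisfying the genericity condition: for every nonzero symmetric κ×κ matrix d with integer entries, Σ_{α,β} d_{αβ}·(δA_α)·(δA_β) ≠ 0 in R. Let Q be the additive monoid of symmetric κ×κ matrices with entries in ℕ and let M be the monoid algebra of Q over R[S], with R[S]-basis {T^q}_{q∈Q} and T^q·T^{q'} = T^{q+q'}. Put w(q) := (1/2)·Σ_{α,β} q_{αβ}(δA_α)(δA_β) and v(q) := Σ_{α,β} q_{αβ}(δA_α)·δ(δA_β). Define derivations on M: ∂ with ∂ = 0 on R, ∂S = 1, ∂T^q = w(q)·T^q; and 𝔇 with 𝔇 = δ on R, 𝔇S = f − C·S², 𝔇T^q = (v(q)·S + w(q)·(f − C·S²))·T^q; set D²x := 𝔇(𝔇x) − (f̃ − C·S)·𝔇x.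 For nonzero n ∈ ℕ^κ write δA^{(n)} := Σ_α n_α·δA_α and n⊗n ∈ Q for the matrix (n_α n_β), and define operators on M: 𝒟^{(n)}_1 x := (1/2)·(δ(δA^{(n)}) − (f̃ − C·S)·δA^{(n)})·x + δA^{(n)}·(𝔇x + q₁·x); 𝒟^{(n)}_2 x := −(1/2)·D²x − q₁·𝔇x; 𝒟^{(n)}_{2h−1} x := δA^{(n)}·p_h·x and 𝒟^{(n)}_{2h} x := −p_h·𝔇x for h ≥ 2. Fix b : ℕ^κ∖{0} → ℤ with b(m) + b(m') ≥ b(m+m') for all nonzero m, m', and set B(n,m) := b(m) + b(n−m) − b(n) ≥ 0. Suppose (F^{(n)}_g) (n ∈ ℕ^κ∖{0}, g ≥ 0) is a family in M satisfying, for all n and g (with F^{(m)}_j := 0 for j < 0): (∂ − w(n⊗n)) F^{(n)}_g = − Σ_{h=1}^{g} 𝒟^{(n)}_h F^{(n)}_{g−h} + (1/2) Σ_{m+m'=n, m,m'≠0} Σ_{h=0}^{g−B(n,m)} (𝔇F^{(m)}_{h−1} − δA^{(m)}·F^{(m)}_h)·(𝔇F^{(m')}_{g−1−B(n,m)−h}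 − δA^{(m')}·F^{(m')}_{g−B(n,m)−h}). Then for every nonzero n and every g ≥ 0, F^{(n)}_g lies in the R-submodule Σ_{r ∈ P(n)} T^{A(r)} · { p ∈ R[S] : deg_S p ≤ 3·(g + b(n) − Σ_m r(m)·b(m)) }, the sum running over all vector partitions r of n, where A(r)_{αβ} := Σ_m r(m)·m_α·m_β, and summands with negative degree bound are zero. -/
open Polynomial

noncomputable section

/-- The additive monoid `Q` of symmetric `κ×κ` matrices with natural number entries. -/
def SymmMat (κ : ℕ) : AddSubmonoid (Matrix (Fin κ) (Fin κ) ℕ) where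
  carrier := {A | A.IsSymm}
  add_mem' := fun ha hb => ha.add hb
  zero_mem' := Matrix.isSymm_zero

/-- The ring `M`: the monoid algebra of `Q` over `R[S]`, with basis `{T^q}_{q ∈ Q}`
and `T^q·T^{q'} = T^{q+q'}`. -/
abbrev MAlg (R : Type*) [CommRing R] (κ : ℕ) : Type _ :=
  AddMonoidAlgebra (Polynomial R) (SymmMat κ)

/-- The basis element `T^q` of the monoid algebra. -/
def Tq {R : Type*} [CommRing R] {κ : ℕ} (q : SymmMat κ) : MAlg R κ :=
  AddMonoidAlgebra.single q 1

/-- The embedding `R[S] → M`. -/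
def cP {R : Type*} [CommRing R] {κ : ℕ} (p : Polynomial R) : MAlg R κ :=
  AddMonoidAlgebra.single 0 p

/-- The embedding `R → M`. -/
def cR {R : Type*} [CommRing R] {κ : ℕ} (r : R) : MAlg R κ :=
  AddMonoidAlgebra.single 0 (Polynomial.C r)

/-- The propagator `S` inside `M`. -/
def SP {R : Type*} [CommRing R] {κ : ℕ} : MAlg R κ :=
  AddMonoidAlgebra.single 0 Polynomial.X

/-- `w(q) = (1/2)·Σ_{α,β} q_{αβ}·(δA_α)·(δA_β)`. -/
def wgt {R : Type*} [CommRing R] [Algebra ℚ R] {κ : ℕ} (dA : Fin κ → R)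
    (q : SymmMat κ) : R :=
  (2 : ℚ)⁻¹ • ∑ α : Fin κ, ∑ β : Fin κ,
    (((q : Matrix (Fin κ) (Fin κ) ℕ) α β : R) * dA α * dA β)

/-- `v(q) = Σ_{α,β} q_{αβ}·(δA_α)·δ(δA_β)`. -/
def vgt {R : Type*} [CommRing R] {κ : ℕ} (dA dA2 : Fin κ → R) (q : SymmMat κ) : R :=
  ∑ α : Fin κ, ∑ β : Fin κ,
    (((q : Matrix (Fin κ) (Fin κ) ℕ) α β : R) * dA α * dA2 β)

/-- The symmetric matrix `n⊗n` with entries `n_α·n_β`. -/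
def nTensor {κ : ℕ} (n : Fin κ → ℕ) : SymmMat κ :=
  ⟨Matrix.of fun α β => n α * n β, by
    show Matrix.IsSymm _
    ext α β
    simp [Matrix.transpose_apply, Nat.mul_comm]⟩

/-- `δA^{(n)} = Σ_α n_α·δA_α`. -/
def dAn {R : Type*} [CommRing R] {κ : ℕ} (dA : Fin κ → R) (n : Fin κ → ℕ) : R :=
  ∑ α : Fin κ, (n α : R) * dA α

/-- The operators `𝒟^{(n)}_h` of the multi-parameter nonperturbative holomorphic anomaly
equations, with `q₁ = (1/2)cS + α` and `D²x = 𝔇(𝔇x) − (f̃ − cS)·𝔇x`. -/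
def Dop4 {R : Type*} [CommRing R] [Algebra ℚ R] {κ : ℕ}
    (dA dA2 : Fin κ → R) (c ft al : R) (p : ℕ → Polynomial R)
    (Dh : Derivation ℚ (MAlg R κ) (MAlg R κ)) (n : Fin κ → ℕ) (h : ℕ)
    (x : MAlg R κ) : MAlg R κ :=
  if h = 1 then
    (2 : ℚ)⁻¹ • ((cR (dAn dA2 n) - (cR ft - cR c * SP) * cR (dAn dA n)) * x)
      + cR (dAn dA n) * (Dh x + ((2 : ℚ)⁻¹ • (cR c * SP) + cR al) * x)
  else if h = 2 then
    -((2 : ℚ)⁻¹ • (Dh (Dh x) - (cR ft - cR c * SP) * Dh x))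
      - ((2 : ℚ)⁻¹ • (cR c * SP) + cR al) * Dh x
  else if h % 2 = 1 then
    cR (dAn dA n) * cP (p ((h + 1) / 2)) * x
  else
    -(cP (p (h / 2)) * Dh x)

/-- A vector partition of a nonzero `n ∈ ℕ^κ`. -/
def IsVPartition {κ : ℕ} (n : Fin κ → ℕ) (r : (Fin κ → ℕ) →₀ ℕ) : Prop :=
  r 0 = 0 ∧ r.sum (fun m k => k • m) = n

/-- The `A`-matrix of a vector partition: `A(r) = Σ_m r(m)·(m⊗m)`, i.e.
`A(r)_{αβ} = Σ_m r(m)·m_α·m_β`, as an element of `Q`. -/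
def AMatS {κ : ℕ} (r : (Fin κ → ℕ) →₀ ℕ) : SymmMat κ :=
  r.sum fun m k => k • nTensor m

namespace MPS
set_option linter.unusedSectionVars false
set_option maxHeartbeats 1000000
variable {R : Type*} [CommRing R] [IsDomain R] [Algebra ℚ R] {κ : ℕ}

theorem charZeroR : CharZero R := charZero_of_injective_algebraMap (algebraMap ℚ R).injective

def dLE (R : Type*) [CommRing R] (N : ℤ) : Submodule R (Polynomial R) :=
  Polynomial.degreeLE R (if N < 0 then (⊥ : WithBot ℕ) else ((N.toNat : ℕ) : WithBot ℕ))

theorem dLE_mono {N N' : ℤ} (h : N ≤ N') : dLE R N ≤ dLE R N' := by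
  unfold dLE
  apply Polynomial.degreeLE_mono
  split <;> split
  · exact le_rfl
  · exact bot_le
  · omega
  · exact_mod_cast WithBot.coe_le_coe.2 (by omega)

theorem mem_dLE_of_neg {N : ℤ} (hN : N < 0) {p : Polynomial R} :
    p ∈ dLE R N ↔ p = 0 := by
  unfold dLE
  rw [if_pos hN, Polynomial.mem_degreeLE, le_bot_iff, Polynomial.degree_eq_bot]

theorem mem_dLE_of_nonneg {N : ℤ} (hN : 0 ≤ N) {p : Polynomial R} :
    p ∈ dLE R N ↔ p.degree ≤ (N.toNat : WithBot ℕ) := by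
  unfold dLE
  rw [if_neg (by omega), Polynomial.mem_degreeLE]

theorem zero_mem_dLE (N : ℤ) : (0 : Polynomial R) ∈ dLE R N := Submodule.zero_mem _

theorem mem_dLE_mul {N N' : ℤ} {p q : Polynomial R} (hp : p ∈ dLE R N) (hq : q ∈ dLE R N') :
    p * q ∈ dLE R (N + N') := by
  rcases lt_or_ge N 0 with h | h
  · rw [mem_dLE_of_neg h] at hp; subst hp; simpa using zero_mem_dLE _
  rcases lt_or_ge N' 0 with h' | h'
  · rw [mem_dLE_of_neg h'] at hq; subst hq; simpa using zero_mem_dLE _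
  rw [mem_dLE_of_nonneg h] at hp
  rw [mem_dLE_of_nonneg h'] at hq
  rw [mem_dLE_of_nonneg (by omega)]
  calc (p * q).degree ≤ p.degree + q.degree := Polynomial.degree_mul_le _ _
    _ ≤ (N.toNat : WithBot ℕ) + (N'.toNat : WithBot ℕ) := add_le_add hp hq
    _ = (((N + N').toNat : ℕ) : WithBot ℕ) := by
        rw [← Nat.cast_add]; congr 1; omega

theorem C_mem_dLE (a : R) {N : ℤ} (h : 0 ≤ N) : Polynomial.C a ∈ dLE R N := by
  rw [mem_dLE_of_nonneg h]
  exact le_trans Polynomial.degree_C_le (by exact_mod_cast WithBot.coe_le_coe.2 (Nat.zero_le _))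

theorem X_mem_dLE {N : ℤ} (h : 1 ≤ N) : (Polynomial.X : Polynomial R) ∈ dLE R N := by
  rw [mem_dLE_of_nonneg (by omega)]
  refine le_trans Polynomial.degree_X_le ?_
  exact_mod_cast WithBot.coe_le_coe.2 (by omega)

theorem mem_dLE_natDegree (p : Polynomial R) : p ∈ dLE R (p.natDegree : ℤ) := by
  rw [mem_dLE_of_nonneg (by positivity)]
  simpa using Polynomial.degree_le_natDegree

theorem mem_dLE_of_natDegree_le {p : Polynomial R} {d : ℕ} (h : p.natDegree ≤ d) {N : ℤ}
    (hN : (d : ℤ) ≤ N) : p ∈ dLE R N :=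
  dLE_mono (le_trans (by exact_mod_cast h) hN) (mem_dLE_natDegree p)

theorem mem_dLE_natDegree_iff {p : Polynomial R} {N : ℤ} (hN : 0 ≤ N) :
    p ∈ dLE R N ↔ (p.natDegree : ℤ) ≤ N ∨ p = 0 := by
  rw [mem_dLE_of_nonneg hN]
  constructor
  · intro h
    rcases eq_or_ne p 0 with rfl | hp
    · right; rfl
    · left
      have := Polynomial.natDegree_le_iff_degree_le.2 h
      omega
  · rintro (h | rfl)
    · exact Polynomial.natDegree_le_iff_degree_le.1 (by omega)
    · simp

theorem derivative_mem_dLE {N : ℤ} {p : Polynomial R} (hp : p ∈ dLE R N) :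
    Polynomial.derivative p ∈ dLE R (N - 1) := by
  haveI := charZeroR (R := R)
  rcases lt_or_ge N 0 with h | h
  · rw [mem_dLE_of_neg h] at hp; subst hp; simpa using zero_mem_dLE _
  rcases eq_or_ne p 0 with rfl | hp0
  · simpa using zero_mem_dLE _
  rcases eq_or_ne (Polynomial.derivative p) 0 with hd | hd
  · rw [hd]; exact zero_mem_dLE _
  rw [mem_dLE_of_nonneg h] at hp
  rcases lt_or_ge (N - 1) 0 with h1 | h1
  · exfalso
    have hnd : p.natDegree = 0 := by
      have h0 : p.degree ≤ ((0 : ℕ) : WithBot ℕ) := by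
        rw [(by omega : N.toNat = 0)] at hp
        exact_mod_cast hp
      exact Nat.le_zero.mp (Polynomial.natDegree_le_iff_degree_le.2 h0)
    obtain ⟨a, rfl⟩ := Polynomial.natDegree_eq_zero.mp hnd
    simp at hd
  · rw [mem_dLE_of_nonneg h1]
    have hlt : p.derivative.degree < (N.toNat : WithBot ℕ) :=
      lt_of_lt_of_le (Polynomial.degree_derivative_lt hp0) hp
    rw [Polynomial.degree_eq_natDegree hd] at hlt ⊢
    have : p.derivative.natDegree < N.toNat := by exact_mod_cast hlt
    exact_mod_cast Nat.le_of_lt_succ (by omega)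

/-- antiderivative bound in characteristic zero -/
theorem mem_dLE_of_derivative {N : ℤ} (hN : 0 ≤ N) {p : Polynomial R}
    (hp : Polynomial.derivative p ∈ dLE R (N - 1)) : p ∈ dLE R N := by
  haveI := charZeroR (R := R)
  rcases Nat.eq_zero_or_pos p.natDegree with h0 | h0
  · obtain ⟨a, rfl⟩ := Polynomial.natDegree_eq_zero.mp h0
    exact C_mem_dLE a hN
  · have hpne : p ≠ 0 := fun h => by simp [h] at h0
    have hcoe : Polynomial.derivative p ≠ 0 := by
      intro h
      have := Polynomial.natDegree_eq_zero_of_derivative_eq_zero h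
      omega
    have h3 : p.natDegree - 1 ≤ p.derivative.natDegree := by
      apply Polynomial.le_natDegree_of_ne_zero
      rw [Polynomial.coeff_derivative]
      have hne : p.coeff (p.natDegree - 1 + 1) ≠ 0 := by
        rw [(by omega : p.natDegree - 1 + 1 = p.natDegree)]
        exact Polynomial.coeff_ne_zero_of_eq_degree (Polynomial.degree_eq_natDegree hpne)
      apply mul_ne_zero hne
      have : ((p.natDegree - 1 + 1 : ℕ) : R) ≠ 0 := Nat.cast_ne_zero.2 (by omega)
      exact_mod_cast this
    rcases lt_or_ge (N - 1) 0 with h1 | h1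
    · rw [mem_dLE_of_neg h1] at hp; exact absurd hp hcoe
    · rw [mem_dLE_natDegree_iff h1] at hp
      rcases hp with hp | hp
      · rw [mem_dLE_natDegree_iff hN]
        left
        omega
      · exact absurd hp hcoe

/-- if p' = c·p with c ≠ 0 then p = 0 -/
theorem eq_zero_of_derivative_eq_C_mul {c : R} (hc : c ≠ 0) {p : Polynomial R}
    (h : Polynomial.derivative p = Polynomial.C c * p) : p = 0 := by
  haveI := charZeroR (R := R)
  by_contra hp
  have h1 : (Polynomial.C c * p).degree = p.degree := by
    rw [Polynomial.degree_C_mul hc]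
  have h2 := Polynomial.degree_derivative_lt hp
  rw [h, h1] at h2
  exact lt_irrefl _ h2

/-- degree bound from the ODE p' + c·p = y, c ≠ 0 -/
theorem degree_le_of_ode {c : R} (hc : c ≠ 0) (p : Polynomial R) :
    p.degree ≤ (Polynomial.derivative p + Polynomial.C c * p).degree := by
  haveI := charZeroR (R := R)
  rcases eq_or_ne p 0 with rfl | hp
  · simp
  have h1 : (Polynomial.C c * p).degree = p.degree := Polynomial.degree_C_mul hc
  have h2 : (Polynomial.derivative p).degree < (Polynomial.C c * p).degree := by
    rw [h1]; exact Polynomial.degree_derivative_lt hp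
  rw [Polynomial.degree_add_eq_right_of_degree_lt h2, h1]

theorem mem_dLE_of_ode {c : R} (hc : c ≠ 0) {p : Polynomial R} {N : ℤ}
    (h : Polynomial.derivative p + Polynomial.C c * p ∈ dLE R N) : p ∈ dLE R N := by
  rcases lt_or_ge N 0 with h1 | h1
  · rw [mem_dLE_of_neg h1] at h ⊢
    have : Polynomial.derivative p = Polynomial.C (-c) * p := by
      rw [map_neg]
      linear_combination h
    have := eq_zero_of_derivative_eq_C_mul (neg_ne_zero.2 hc) this
    exact this
  · rw [mem_dLE_of_nonneg h1] at h ⊢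
    exact le_trans (degree_le_of_ode hc p) h

theorem smul_eq_cR_mul (r : R) (x : MAlg R κ) : r • x = cR r * x := by
  rw [Algebra.smul_def]; rfl

theorem qsmul_mem {M : Submodule R (MAlg R κ)} {x : MAlg R κ} (s : ℚ) (hx : x ∈ M) :
    s • x ∈ M := by
  rw [← smul_one_smul R s x]
  exact M.smul_mem _ hx

theorem cR_mul (a b : R) : (cR (a * b) : MAlg R κ) = cR a * cR b := by
  unfold cR
  rw [AddMonoidAlgebra.single_mul_single, map_mul, zero_add]

theorem cR_natCast (i : ℕ) : (cR ((i : ℕ) : R) : MAlg R κ) = (i : MAlg R κ) := by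
  rw [show (cR ((i:ℕ):R) : MAlg R κ) = algebraMap R (MAlg R κ) ((i:ℕ):R) from rfl, map_natCast]

theorem AMS_single_finset_sum {ι : Type*} (q : SymmMat κ) (s : Finset ι) (g : ι → Polynomial R) :
    (AddMonoidAlgebra.single q (∑ i ∈ s, g i) : MAlg R κ)
      = ∑ i ∈ s, AddMonoidAlgebra.single q (g i) :=
  map_sum (AddMonoidAlgebra.singleAddHom q) g s

theorem single_eq_sum_monomials (p : Polynomial R) (q : SymmMat κ) :
    (AddMonoidAlgebra.single q p : MAlg R κ)
      = ∑ i ∈ p.support, AddMonoidAlgebra.single q (Polynomial.C (p.coeff i) * Polynomial.X ^ i) := by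
  rw [← AMS_single_finset_sum]
  congr 1
  exact Polynomial.as_sum_support_C_mul_X_pow p

theorem single_factor (q : SymmMat κ) (a : R) (i : ℕ) :
    (AddMonoidAlgebra.single q (Polynomial.C a * Polynomial.X ^ i) : MAlg R κ)
      = cR a * SP ^ i * Tq q := by
  unfold cR SP Tq
  rw [AddMonoidAlgebra.single_pow, AddMonoidAlgebra.single_mul_single, AddMonoidAlgebra.single_mul_single]
  simp

theorem Dp_single (Dp : Derivation ℚ (MAlg R κ) (MAlg R κ)) (W : SymmMat κ → R)
    (hDpR : ∀ r : R, Dp (cR r) = 0) (hDpS : Dp (SP (R := R) (κ := κ)) = 1)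
    (hDpT : ∀ q : SymmMat κ, Dp (Tq (R := R) q) = cR (W q) * Tq q)
    (q : SymmMat κ) (p : Polynomial R) :
    Dp (AddMonoidAlgebra.single q p)
      = AddMonoidAlgebra.single q (Polynomial.derivative p + Polynomial.C (W q) * p) := by
  conv_lhs => rw [single_eq_sum_monomials]
  rw [map_sum]
  have key : ∀ i : ℕ, ∀ a : R,
      Dp (AddMonoidAlgebra.single q (Polynomial.C a * Polynomial.X ^ i))
        = AddMonoidAlgebra.single q
            (Polynomial.derivative (Polynomial.C a * Polynomial.X ^ i)
              + Polynomial.C (W q) * (Polynomial.C a * Polynomial.X ^ i)) := by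
    intro i a
    rw [single_factor, Derivation.leibniz, Derivation.leibniz, Derivation.leibniz_pow,
      hDpR, hDpS, hDpT]
    rw [Polynomial.derivative_C_mul, Polynomial.derivative_X_pow]
    rw [show Polynomial.C a * (Polynomial.C ((i:ℕ):R) * Polynomial.X ^ (i-1))
          + Polynomial.C (W q) * (Polynomial.C a * Polynomial.X ^ i)
        = Polynomial.C (a * ((i:ℕ):R)) * Polynomial.X ^ (i-1)
          + Polynomial.C (W q * a) * Polynomial.X ^ i by rw [map_mul, map_mul]; ring]
    rw [AddMonoidAlgebra.single_add, single_factor, single_factor, cR_mul, cR_mul, cR_natCast]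
    simp only [smul_eq_mul, nsmul_eq_mul, mul_one, mul_zero, zero_mul, add_zero, zero_add]
    ring
  rw [Finset.sum_congr rfl (fun i _ => key i (p.coeff i))]
  have e1 : ∑ b ∈ p.support, Polynomial.derivative (Polynomial.C (p.coeff b) * Polynomial.X ^ b)
      = Polynomial.derivative p := by
    rw [← map_sum, ← Polynomial.as_sum_support_C_mul_X_pow]
  have e2 : ∑ b ∈ p.support, Polynomial.C (W q) * (Polynomial.C (p.coeff b) * Polynomial.X ^ b)
      = Polynomial.C (W q) * p := by
    rw [← Finset.mul_sum, ← Polynomial.as_sum_support_C_mul_X_pow]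
  rw [← AMS_single_finset_sum]
  congr 1
  rw [Finset.sum_add_distrib, e1, e2]

/-! ### Component submodules -/

def Cmp (q : SymmMat κ) (N : ℤ) : Submodule R (MAlg R κ) :=
  (dLE R N).map (AddMonoidAlgebra.lsingle q)

theorem single_mem_Cmp {q : SymmMat κ} {N : ℤ} {p : Polynomial R} (hp : p ∈ dLE R N) :
    (AddMonoidAlgebra.single q p : MAlg R κ) ∈ Cmp q N := ⟨p, hp, rfl⟩

theorem exists_of_mem_Cmp {q : SymmMat κ} {N : ℤ} {x : MAlg R κ} (h : x ∈ Cmp q N) :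
    ∃ p, p ∈ dLE R N ∧ x = AddMonoidAlgebra.single q p := by
  obtain ⟨p, hp, rfl⟩ := h
  exact ⟨p, hp, rfl⟩

theorem Cmp_mono {q : SymmMat κ} {N N' : ℤ} (h : N ≤ N') : Cmp (R := R) q N ≤ Cmp q N' :=
  Submodule.map_mono (dLE_mono h)

theorem Cmp_mul {q q' : SymmMat κ} {N N' : ℤ} {x y : MAlg R κ}
    (hx : x ∈ Cmp q N) (hy : y ∈ Cmp q' N') : x * y ∈ Cmp (q + q') (N + N') := by
  obtain ⟨p, hp, rfl⟩ := exists_of_mem_Cmp hx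
  obtain ⟨p', hp', rfl⟩ := exists_of_mem_Cmp hy
  rw [AddMonoidAlgebra.single_mul_single]
  exact single_mem_Cmp (mem_dLE_mul hp hp')

theorem Cmp_mul' {q q' q'' : SymmMat κ} {N N' N'' : ℤ} {x y : MAlg R κ}
    (hx : x ∈ Cmp q N) (hy : y ∈ Cmp q' N')
    (hq : q + q' = q'') (hN : N + N' ≤ N'') :
    x * y ∈ Cmp q'' N'' := by
  subst hq
  exact Cmp_mono hN (Cmp_mul hx hy)

theorem cR_mem_Cmp (a : R) {N : ℤ} (h : 0 ≤ N) : (cR a : MAlg R κ) ∈ Cmp 0 N :=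
  single_mem_Cmp (C_mem_dLE a h)

theorem SP_mem_Cmp {N : ℤ} (h : 1 ≤ N) : (SP : MAlg R κ) ∈ Cmp 0 N :=
  single_mem_Cmp (X_mem_dLE h)

theorem SP_pow_mem_Cmp {i : ℕ} {N : ℤ} (h : (i : ℤ) ≤ N) : (SP : MAlg R κ) ^ i ∈ Cmp 0 N := by
  unfold SP
  rw [AddMonoidAlgebra.single_pow]
  simp only [smul_zero]
  apply single_mem_Cmp
  rw [mem_dLE_of_nonneg (by omega)]
  refine le_trans (Polynomial.degree_X_pow_le i) ?_
  exact_mod_cast WithBot.coe_le_coe.2 (by omega)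

theorem Tq_mem_Cmp (q : SymmMat κ) {N : ℤ} (h : 0 ≤ N) : (Tq q : MAlg R κ) ∈ Cmp q N := by
  unfold Tq
  rw [show (1 : Polynomial R) = Polynomial.C 1 from (map_one _).symm]
  exact single_mem_Cmp (C_mem_dLE 1 h)

theorem cP_mem_Cmp {p : Polynomial R} {N : ℤ} (h : (p.natDegree : ℤ) ≤ N) :
    (cP p : MAlg R κ) ∈ Cmp 0 N :=
  single_mem_Cmp (mem_dLE_of_natDegree_le le_rfl h)

theorem Cmp_qsmul {q : SymmMat κ} {N : ℤ} {x : MAlg R κ} (s : ℚ) (hx : x ∈ Cmp q N) :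
    s • x ∈ Cmp q N := qsmul_mem s hx

/-- `Dh` raises the degree by at most 2 on each component. -/
theorem Dh_mem_Cmp (Dh : Derivation ℚ (MAlg R κ) (MAlg R κ)) (dR : R → R)
    (V W : SymmMat κ → R) (f c : R)
    (hDhR : ∀ r : R, Dh (cR r) = cR (dR r))
    (hDhS : Dh (SP (R := R) (κ := κ)) = cR f - cR c * SP ^ 2)
    (hDhT : ∀ q : SymmMat κ, Dh (Tq (R := R) q)
      = (cR (V q) * SP + cR (W q) * (cR f - cR c * SP ^ 2)) * Tq q)
    {q : SymmMat κ} {N : ℤ} {x : MAlg R κ} (hx : x ∈ Cmp q N) :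
    Dh x ∈ Cmp q (N + 2) := by
  obtain ⟨p, hp, rfl⟩ := exists_of_mem_Cmp hx
  rcases lt_or_ge N 0 with hN | hN
  · rw [mem_dLE_of_neg hN] at hp
    subst hp
    rw [show (AddMonoidAlgebra.single q (0 : Polynomial R) : MAlg R κ) = 0 from
      AddMonoidAlgebra.single_zero q, map_zero]
    exact Submodule.zero_mem _
  rw [single_eq_sum_monomials, map_sum]
  apply Submodule.sum_mem
  intro i hi
  have hiN : (i : ℤ) ≤ N := by
    rw [mem_dLE_of_nonneg hN] at hp
    have h1 : (i : WithBot ℕ) ≤ p.degree :=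
      Polynomial.le_degree_of_ne_zero (Polynomial.mem_support_iff.mp hi)
    have h2 : i ≤ N.toNat := by exact_mod_cast le_trans h1 hp
    omega
  rw [single_factor, Derivation.leibniz, Derivation.leibniz, Derivation.leibniz_pow,
    hDhR, hDhS, hDhT]
  simp only [smul_eq_mul]
  have m0 : ∀ r : R, (cR r : MAlg R κ) ∈ Cmp 0 0 := fun r => cR_mem_Cmp r le_rfl
  have mS : ∀ j : ℕ, (SP : MAlg R κ) ^ j ∈ Cmp 0 (j : ℤ) := fun j => SP_pow_mem_Cmp le_rfl
  have mT : (Tq q : MAlg R κ) ∈ Cmp q 0 := Tq_mem_Cmp q le_rfl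
  have mfc : (cR f - cR c * SP ^ 2 : MAlg R κ) ∈ Cmp 0 2 :=
    Submodule.sub_mem _ (cR_mem_Cmp _ (by omega))
      (Cmp_mul' (m0 c) (mS 2) (by simp) (by omega))
  have mz : (cR (V q) * SP + cR (W q) * (cR f - cR c * SP ^ 2) : MAlg R κ) ∈ Cmp 0 2 :=
    Submodule.add_mem _
      (Cmp_mul' (m0 (V q)) (SP_mem_Cmp le_rfl) (by simp) (by omega))
      (Cmp_mul' (m0 (W q)) mfc (by simp) (by omega))
  apply Submodule.add_mem
  · have t1 : (cR (p.coeff i) * SP ^ i : MAlg R κ) ∈ Cmp 0 (i : ℤ) :=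
      Cmp_mul' (m0 _) (mS i) (by simp) (by omega)
    have t2 : ((cR (V q) * SP + cR (W q) * (cR f - cR c * SP ^ 2)) * Tq q : MAlg R κ)
        ∈ Cmp q 2 := Cmp_mul' mz mT (by simp) (by omega)
    exact Cmp_mul' t1 t2 (by simp) (by omega)
  · have t21 : ((SP : MAlg R κ) ^ (i - 1) * (cR f - cR c * SP ^ 2)) ∈ Cmp 0 (((i - 1 : ℕ) : ℤ) + 2) :=
      Cmp_mul' (mS (i - 1)) mfc (by simp) (by omega)
    have t21' : (i • ((SP : MAlg R κ) ^ (i - 1) * (cR f - cR c * SP ^ 2)))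
        ∈ Cmp 0 (((i - 1 : ℕ) : ℤ) + 2) := nsmul_mem t21 i
    have t22 : (cR (p.coeff i) * (i • ((SP : MAlg R κ) ^ (i - 1) * (cR f - cR c * SP ^ 2))))
        ∈ Cmp 0 (N + 2) := Cmp_mul' (m0 _) t21' (by simp) (by omega)
    have t23 : ((SP : MAlg R κ) ^ i * cR (dR (p.coeff i))) ∈ Cmp 0 (N + 2) :=
      Cmp_mul' (mS i) (m0 _) (by simp) (by omega)
    exact Cmp_mul' mT (Submodule.add_mem _ t22 t23) (by simp) (by omega)

/-! ### Component extraction -/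

theorem cR_mul_apply (w : R) (x : MAlg R κ) (q : SymmMat κ) :
    (cR w * x : MAlg R κ).coeff q = Polynomial.C w * x.coeff q :=
  AddMonoidAlgebra.coeff_single_zero_mul x (Polynomial.C w) q

theorem Dp_apply (Dp : Derivation ℚ (MAlg R κ) (MAlg R κ)) (W : SymmMat κ → R)
    (hDpR : ∀ r : R, Dp (cR r) = 0) (hDpS : Dp (SP (R := R) (κ := κ)) = 1)
    (hDpT : ∀ q : SymmMat κ, Dp (Tq (R := R) q) = cR (W q) * Tq q)
    (x : MAlg R κ) (q : SymmMat κ) :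
    (Dp x).coeff q = Polynomial.derivative (x.coeff q) + Polynomial.C (W q) * x.coeff q := by
  conv_lhs => rw [← AddMonoidAlgebra.sum_coeff_single x, Finsupp.sum]
  rw [map_sum]
  rw [Finset.sum_congr rfl (fun q' _ => by rw [Dp_single Dp W hDpR hDpS hDpT])]
  simp only [AddMonoidAlgebra.coeff_sum, AddMonoidAlgebra.coeff_single, Finset.sum_apply', Finsupp.single_apply]
  rw [Finset.sum_ite_eq' x.coeff.support q]
  by_cases hq : q ∈ x.coeff.support
  · rw [if_pos hq]
  · rw [if_neg hq]
    rw [Finsupp.notMem_support_iff.mp hq]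
    simp

theorem ode_component (Dp : Derivation ℚ (MAlg R κ) (MAlg R κ)) (W : SymmMat κ → R)
    (hDpR : ∀ r : R, Dp (cR r) = 0) (hDpS : Dp (SP (R := R) (κ := κ)) = 1)
    (hDpT : ∀ q : SymmMat κ, Dp (Tq (R := R) q) = cR (W q) * Tq q)
    (x y : MAlg R κ) (wn : R) (hxy : Dp x - cR wn * x = y) (q : SymmMat κ) :
    Polynomial.derivative (x.coeff q) + Polynomial.C (W q - wn) * x.coeff q = y.coeff q := by
  have h0 := congrArg (fun z : MAlg R κ => z.coeff q) hxy
  have h : (Dp x).coeff q - (cR wn * x : MAlg R κ).coeff q = y.coeff q := h0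
  rw [Dp_apply Dp W hDpR hDpS hDpT, cR_mul_apply] at h
  rw [map_sub]
  linear_combination h

/-! ### Weight injectivity -/

theorem wgt_inj (δ : Derivation ℚ R R) (A : Fin κ → R)
    (hgen : ∀ d : Matrix (Fin κ) (Fin κ) ℤ, d.IsSymm → d ≠ 0 →
      (∑ α : Fin κ, ∑ β : Fin κ, (d α β : R) * δ (A α) * δ (A β)) ≠ 0)
    {q q' : SymmMat κ} (hqq : q ≠ q') :
    wgt (fun α => δ (A α)) q ≠ wgt (fun α => δ (A α)) q' := by
  haveI : Module.IsTorsionFree ℚ R :=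
    NoZeroSMulDivisors.iff_algebraMap_injective.mpr (algebraMap ℚ R).injective
  intro h
  set dA := fun α => δ (A α) with hdA
  unfold wgt at h
  have h2 : (∑ α : Fin κ, ∑ β : Fin κ,
      (((q : Matrix (Fin κ) (Fin κ) ℕ) α β : R) * dA α * dA β))
      = ∑ α : Fin κ, ∑ β : Fin κ,
      (((q' : Matrix (Fin κ) (Fin κ) ℕ) α β : R) * dA α * dA β) :=
    smul_right_injective R (by norm_num : (2 : ℚ)⁻¹ ≠ 0) h
  set d : Matrix (Fin κ) (Fin κ) ℤ := fun α β =>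
    ((q : Matrix (Fin κ) (Fin κ) ℕ) α β : ℤ) - ((q' : Matrix (Fin κ) (Fin κ) ℕ) α β : ℤ) with hd
  have hsym : d.IsSymm := by
    have h1 : Matrix.transpose (q : Matrix (Fin κ) (Fin κ) ℕ) = (q : Matrix (Fin κ) (Fin κ) ℕ) := q.2
    have h1' : Matrix.transpose (q' : Matrix (Fin κ) (Fin κ) ℕ) = (q' : Matrix (Fin κ) (Fin κ) ℕ) := q'.2
    ext α β
    have e1 := congrFun (congrFun h1 α) β
    have e1' := congrFun (congrFun h1' α) β
    rw [Matrix.transpose_apply] at e1 e1'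
    simp only [hd, Matrix.transpose_apply]
    exact congrArg₂ (fun a b : ℕ => (a : ℤ) - (b : ℤ)) e1 e1'
  have hdne : d ≠ 0 := by
    intro h0
    apply hqq
    apply Subtype.ext
    ext α β
    have := congrFun (congrFun h0 α) β
    simp only [hd, Matrix.zero_apply] at this
    omega
  apply hgen d hsym hdne
  have : ∑ α : Fin κ, ∑ β : Fin κ, (d α β : R) * dA α * dA β
      = ∑ α : Fin κ, ∑ β : Fin κ,
          ((((q : Matrix (Fin κ) (Fin κ) ℕ) α β : R) * dA α * dA β)
            - (((q' : Matrix (Fin κ) (Fin κ) ℕ) α β : R) * dA α * dA β)) := by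
    apply Finset.sum_congr rfl
    intro α _
    apply Finset.sum_congr rfl
    intro β _
    push_cast [hd]
    ring
  rw [this]
  simp only [Finset.sum_sub_distrib]
  rw [h2]
  ring

/-! ### Partition lemmas -/

def entryHom (α β : Fin κ) : SymmMat κ →+ ℕ where
  toFun M := (M : Matrix (Fin κ) (Fin κ) ℕ) α β
  map_zero' := rfl
  map_add' _ _ := rfl

theorem entryHom_nTensor (α β : Fin κ) (n : Fin κ → ℕ) :
    entryHom α β (nTensor n) = n α * n β := rfl

theorem AMatS_entry (r : (Fin κ → ℕ) →₀ ℕ) (α β : Fin κ) :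
    entryHom α β (AMatS r) = ∑ m ∈ r.support, r m * (m α * m β) := by
  unfold AMatS
  rw [map_finsuppSum]
  rw [Finsupp.sum]
  apply Finset.sum_congr rfl
  intro m _
  rw [AddMonoidHom.map_nsmul, entryHom_nTensor]
  simp [mul_comm]

theorem vp_sum_apply {n : Fin κ → ℕ} {r : (Fin κ → ℕ) →₀ ℕ} (hr : IsVPartition n r)
    (α : Fin κ) : ∑ m ∈ r.support, r m * m α = n α := by
  have h := congrFun hr.2 α
  rw [← h, Finsupp.sum, Finset.sum_apply]
  apply Finset.sum_congr rfl
  intro m _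
  simp [mul_comm]

theorem mem_support_ne_zero {n : Fin κ → ℕ} {r : (Fin κ → ℕ) →₀ ℕ} (hr : IsVPartition n r)
    {m : Fin κ → ℕ} (hm : m ∈ r.support) : m ≠ 0 := by
  intro h
  subst h
  exact Finsupp.mem_support_iff.mp hm hr.1

/-- Uniqueness: the only vector partition `r` of `n ≠ 0` with `A(r) = n⊗n` is `δ_n`. -/
theorem vp_eq_single {n : Fin κ → ℕ} (hn : n ≠ 0) {r : (Fin κ → ℕ) →₀ ℕ}
    (hr : IsVPartition n r) (hA : AMatS r = nTensor n) : r = Finsupp.single n 1 := by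
  obtain ⟨α₀, hα₀⟩ : ∃ α, n α ≠ 0 := by
    by_contra h
    push_neg at h
    exact hn (funext h)
  have h2 : ∀ α β : Fin κ, ∑ m ∈ r.support, r m * (m α * m β) = n α * n β := by
    intro α β
    rw [← AMatS_entry, hA, entryHom_nTensor]
  have h1 : ∀ α : Fin κ, ∑ m ∈ r.support, r m * m α = n α := vp_sum_apply hr
  -- parallelism of all parts with n, in ℤ
  have parallel : ∀ m ∈ r.support, ∀ β : Fin κ, n α₀ * m β = n β * m α₀ := by
    intro m hm β
    have e1 : ∑ m ∈ r.support, ((r m : ℤ) * ((m β : ℤ) * (m β : ℤ))) = (n β : ℤ) * (n β : ℤ) := by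
      exact_mod_cast congrArg (fun t : ℕ => (t : ℤ)) (h2 β β)
    have e2 : ∑ m ∈ r.support, ((r m : ℤ) * ((m α₀ : ℤ) * (m β : ℤ))) = (n α₀ : ℤ) * (n β : ℤ) := by
      exact_mod_cast congrArg (fun t : ℕ => (t : ℤ)) (h2 α₀ β)
    have e3 : ∑ m ∈ r.support, ((r m : ℤ) * ((m α₀ : ℤ) * (m α₀ : ℤ))) = (n α₀ : ℤ) * (n α₀ : ℤ) := by
      exact_mod_cast congrArg (fun t : ℕ => (t : ℤ)) (h2 α₀ α₀)
    have claim : ∑ m ∈ r.support,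
        ((r m : ℤ) * ((n α₀ : ℤ) * (m β : ℤ) - (n β : ℤ) * (m α₀ : ℤ)) ^ 2) = 0 := by
      have expand : ∀ m : Fin κ → ℕ,
          (r m : ℤ) * ((n α₀ : ℤ) * (m β : ℤ) - (n β : ℤ) * (m α₀ : ℤ)) ^ 2
            = (n α₀ : ℤ) * (n α₀ : ℤ) * ((r m : ℤ) * ((m β : ℤ) * (m β : ℤ)))
              - 2 * ((n α₀ : ℤ) * (n β : ℤ)) * ((r m : ℤ) * ((m α₀ : ℤ) * (m β : ℤ)))
              + (n β : ℤ) * (n β : ℤ) * ((r m : ℤ) * ((m α₀ : ℤ) * (m α₀ : ℤ))) := by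
        intro m
        ring
      rw [Finset.sum_congr rfl (fun m _ => expand m)]
      rw [Finset.sum_add_distrib, Finset.sum_sub_distrib, ← Finset.mul_sum, ← Finset.mul_sum,
        ← Finset.mul_sum, e1, e2, e3]
      ring
    have hterm := (Finset.sum_eq_zero_iff_of_nonneg (fun m _ => by positivity)).mp claim m hm
    have hrm : (r m : ℤ) ≠ 0 := by
      exact_mod_cast Finsupp.mem_support_iff.mp hm
    have hsq : ((n α₀ : ℤ) * (m β : ℤ) - (n β : ℤ) * (m α₀ : ℤ)) ^ 2 = 0 := by
      rcases mul_eq_zero.mp hterm with h | h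
      · exact absurd h hrm
      · exact h
    have := pow_eq_zero_iff (n := 2) (by norm_num) |>.mp hsq
    have : (n α₀ : ℤ) * (m β : ℤ) = (n β : ℤ) * (m α₀ : ℤ) := by linarith [sub_eq_zero.mp this]
    exact_mod_cast this
  -- every part has positive α₀ coordinate
  have upos : ∀ m ∈ r.support, m α₀ ≠ 0 := by
    intro m hm h0
    apply mem_support_ne_zero hr hm
    funext β
    have hpar := parallel m hm β
    rw [h0, Nat.mul_zero] at hpar
    exact (Nat.mul_eq_zero.mp hpar).resolve_left hα₀
  have uleN : ∀ m ∈ r.support, m α₀ ≤ n α₀ := by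
    intro m hm
    calc m α₀ ≤ r m * m α₀ :=
          Nat.le_mul_of_pos_left _ (Nat.pos_of_ne_zero (Finsupp.mem_support_iff.mp hm))
      _ ≤ ∑ m ∈ r.support, r m * m α₀ :=
          Finset.single_le_sum (f := fun m => r m * m α₀) (fun i _ => Nat.zero_le _) hm
      _ = n α₀ := h1 α₀
  have ueqN : ∀ m ∈ r.support, m α₀ = n α₀ := by
    have e1 : ∑ m ∈ r.support, ((r m : ℤ) * (m α₀ : ℤ)) = (n α₀ : ℤ) := by
      exact_mod_cast congrArg (fun t : ℕ => (t : ℤ)) (h1 α₀)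
    have e3 : ∑ m ∈ r.support, ((r m : ℤ) * ((m α₀ : ℤ) * (m α₀ : ℤ))) = (n α₀ : ℤ) * (n α₀ : ℤ) := by
      exact_mod_cast congrArg (fun t : ℕ => (t : ℤ)) (h2 α₀ α₀)
    have key : ∑ m ∈ r.support,
        ((r m : ℤ) * (m α₀ : ℤ) * ((n α₀ : ℤ) - (m α₀ : ℤ))) = 0 := by
      have expand : ∀ m : Fin κ → ℕ,
          (r m : ℤ) * (m α₀ : ℤ) * ((n α₀ : ℤ) - (m α₀ : ℤ))
            = (n α₀ : ℤ) * ((r m : ℤ) * (m α₀ : ℤ)) - (r m : ℤ) * ((m α₀ : ℤ) * (m α₀ : ℤ)) :=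
        fun m => by ring
      rw [Finset.sum_congr rfl (fun m _ => expand m)]
      rw [Finset.sum_sub_distrib, ← Finset.mul_sum, e1, e3]
      ring
    intro m hm
    have hnonneg : ∀ m' ∈ r.support,
        (0:ℤ) ≤ (r m' : ℤ) * (m' α₀ : ℤ) * ((n α₀ : ℤ) - (m' α₀ : ℤ)) := by
      intro m' hm'
      have h4 : (m' α₀ : ℤ) ≤ (n α₀ : ℤ) := Int.ofNat_le.2 (uleN m' hm')
      have h5 : (0:ℤ) ≤ (n α₀ : ℤ) - (m' α₀ : ℤ) := sub_nonneg.2 h4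
      exact mul_nonneg (mul_nonneg (Int.natCast_nonneg _) (Int.natCast_nonneg _)) h5
    have hterm := (Finset.sum_eq_zero_iff_of_nonneg hnonneg).mp key m hm
    have hrm : (r m : ℤ) ≠ 0 := by exact_mod_cast Finsupp.mem_support_iff.mp hm
    have hum : (m α₀ : ℤ) ≠ 0 := Int.natCast_ne_zero.2 (upos m hm)
    rcases mul_eq_zero.mp hterm with h | h
    · rcases mul_eq_zero.mp h with h' | h'
      · exact absurd h' hrm
      · exact absurd h' hum
    · have heq : (n α₀ : ℤ) = (m α₀ : ℤ) := sub_eq_zero.mp h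
      exact_mod_cast heq.symm
  have masses : (∑ m ∈ r.support, r m) * n α₀ = n α₀ := by
    have e : ∑ m ∈ r.support, r m * m α₀ = (∑ m ∈ r.support, r m) * n α₀ := by
      rw [Finset.sum_mul]
      apply Finset.sum_congr rfl
      intro m hm
      rw [ueqN m hm]
    rw [← e, h1 α₀]
  have hmass : ∑ m ∈ r.support, r m = 1 := by
    have := Nat.eq_of_mul_eq_mul_right (Nat.pos_of_ne_zero hα₀)
      (by rw [masses, one_mul] : (∑ m ∈ r.support, r m) * n α₀ = 1 * n α₀)
    exact this
  have hne : r.support.Nonempty := by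
    by_contra h
    rw [Finset.not_nonempty_iff_eq_empty] at h
    rw [h, Finset.sum_empty] at hmass
    exact absurd hmass (by norm_num)
  have hcard : r.support.card = 1 := by
    have hle : r.support.card ≤ ∑ m ∈ r.support, r m := by
      rw [Finset.card_eq_sum_ones]
      exact Finset.sum_le_sum (fun m hm => Nat.pos_of_ne_zero (Finsupp.mem_support_iff.mp hm))
    have := Finset.card_pos.mpr hne
    omega
  obtain ⟨m₀, hm₀⟩ := Finset.card_eq_one.mp hcard
  have hm₀mem : m₀ ∈ r.support := by rw [hm₀]; exact Finset.mem_singleton_self m₀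
  have hrm₀ : r m₀ = 1 := by
    rw [hm₀, Finset.sum_singleton] at hmass
    exact hmass
  have hm₀n : m₀ = n := by
    funext β
    have hpar := parallel m₀ hm₀mem β
    rw [ueqN m₀ hm₀mem] at hpar
    apply Nat.eq_of_mul_eq_mul_left (Nat.pos_of_ne_zero hα₀)
    rw [hpar, Nat.mul_comm]
  subst hm₀n
  ext m
  rcases eq_or_ne m m₀ with rfl | hmn
  · rw [hrm₀, Finsupp.single_eq_same]
  · have hms : m ∉ r.support := by
      rw [hm₀, Finset.mem_singleton]
      exact hmn
    rw [Finsupp.notMem_support_iff.mp hms, Finsupp.single_eq_of_ne hmn]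

theorem vp_single_self {n : Fin κ → ℕ} (hn : n ≠ 0) :
    IsVPartition n (Finsupp.single n 1) := by
  constructor
  · rw [Finsupp.single_apply, if_neg hn]
  · rw [Finsupp.sum_single_index (by simp)]
    simp

theorem AMatS_single {n : Fin κ → ℕ} :
    AMatS (Finsupp.single n 1) = nTensor n := by
  unfold AMatS
  rw [Finsupp.sum_single_index (by simp)]
  simp

theorem bsum_single {n : Fin κ → ℕ} (b : (Fin κ → ℕ) → ℤ) :
    (Finsupp.single n 1).sum (fun m k => (k : ℤ) * b m) = b n := by
  rw [Finsupp.sum_single_index (by simp)]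
  simp

theorem vp_add {m m' : Fin κ → ℕ} {r r' : (Fin κ → ℕ) →₀ ℕ}
    (h : IsVPartition m r) (h' : IsVPartition m' r') : IsVPartition (m + m') (r + r') := by
  constructor
  · rw [Finsupp.add_apply, h.1, h'.1]
  · rw [Finsupp.sum_add_index' (by intro a; simp) (by intro a b c; rw [add_smul])]
    rw [h.2, h'.2]

theorem AMatS_add (r r' : (Fin κ → ℕ) →₀ ℕ) :
    AMatS (r + r') = AMatS r + AMatS r' := by
  unfold AMatS
  rw [Finsupp.sum_add_index' (by intro a; simp) (by intro a b c; rw [add_smul])]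

theorem bsum_add (b : (Fin κ → ℕ) → ℤ) (r r' : (Fin κ → ℕ) →₀ ℕ) :
    (r + r').sum (fun m k => (k : ℤ) * b m) =
      r.sum (fun m k => (k : ℤ) * b m) + r'.sum (fun m k => (k : ℤ) * b m) := by
  rw [Finsupp.sum_add_index' (by intro a; simp) (by intro a b' c; push_cast; ring)]

theorem vp_ne_zero {n : Fin κ → ℕ} {r : (Fin κ → ℕ) →₀ ℕ} (hr : IsVPartition n r)
    (hn : n ≠ 0) : r ≠ 0 := by
  intro h
  subst h
  apply hn
  rw [← hr.2]
  simp [Finsupp.sum]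

theorem mass_pos {r : (Fin κ → ℕ) →₀ ℕ} (hr : r ≠ 0) :
    1 ≤ r.sum (fun _ k => k) := by
  obtain ⟨a, ha⟩ := Finsupp.support_nonempty_iff.mpr hr
  have h1 : r a ≤ r.sum (fun _ k => k) :=
    Finset.single_le_sum (f := fun m => r m) (fun i _ => Nat.zero_le _) ha
  have h2 := Finsupp.mem_support_iff.mp ha
  omega

theorem mass_single {n : Fin κ → ℕ} : (Finsupp.single n 1).sum (fun _ k => k) = 1 := by
  rw [Finsupp.sum_single_index]
  rfl

/-- No sum of two nonzero partitions can hit the pure matrix `n⊗n`. -/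
theorem vp_add_A_ne {m m' : Fin κ → ℕ} {r r' : (Fin κ → ℕ) →₀ ℕ}
    (hm : m ≠ 0) (hm' : m' ≠ 0) (h : IsVPartition m r) (h' : IsVPartition m' r') :
    AMatS (r + r') ≠ nTensor (m + m') := by
  intro hE
  have hn : m + m' ≠ 0 := by
    intro h0
    apply hm
    funext α
    rw [Pi.zero_apply]
    have := congrFun h0 α
    simp only [Pi.add_apply, Pi.zero_apply] at this
    omega
  have hsingle := vp_eq_single hn (vp_add h h') hE
  have hmass : (r + r').sum (fun _ k => k) = 1 := by
    rw [hsingle, mass_single]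
  rw [Finsupp.sum_add_index' (fun _ => rfl) (fun _ _ _ => rfl)] at hmass
  have h1 := mass_pos (vp_ne_zero h hm)
  have h2 := mass_pos (vp_ne_zero h' hm')
  omega

/-! ### Graded submodules -/

def bsum (b : (Fin κ → ℕ) → ℤ) (r : (Fin κ → ℕ) →₀ ℕ) : ℤ :=
  r.sum fun m k => (k : ℤ) * b m

def GSet (b : (Fin κ → ℕ) → ℤ) (n : Fin κ → ℕ) (c : ℤ) : Set (MAlg R κ) :=
  {x | ∃ (r : (Fin κ → ℕ) →₀ ℕ) (p : Polynomial R), IsVPartition n r ∧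
    p ∈ dLE R (3 * (b n - bsum b r) + c) ∧ x = AddMonoidAlgebra.single (AMatS r) p}

def GMod (b : (Fin κ → ℕ) → ℤ) (n : Fin κ → ℕ) (c : ℤ) : Submodule R (MAlg R κ) :=
  Submodule.span R (GSet b n c)

def YBnd (b : (Fin κ → ℕ) → ℤ) (n : Fin κ → ℕ) (g : ℤ) (r : (Fin κ → ℕ) →₀ ℕ) : ℤ :=
  3 * (g + b n - bsum b r) - (if AMatS r = nTensor n then 1 else 0)

def YSet (b : (Fin κ → ℕ) → ℤ) (n : Fin κ → ℕ) (g : ℤ) : Set (MAlg R κ) :=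
  {x | ∃ (r : (Fin κ → ℕ) →₀ ℕ) (p : Polynomial R), IsVPartition n r ∧
    p ∈ dLE R (YBnd b n g r) ∧ x = AddMonoidAlgebra.single (AMatS r) p}

def YMod (b : (Fin κ → ℕ) → ℤ) (n : Fin κ → ℕ) (g : ℤ) : Submodule R (MAlg R κ) :=
  Submodule.span R (YSet b n g)

theorem GMod_mono {b : (Fin κ → ℕ) → ℤ} {n : Fin κ → ℕ} {c c' : ℤ} (h : c ≤ c') :
    GMod (R := R) b n c ≤ GMod b n c' := by
  apply Submodule.span_mono
  rintro x ⟨r, p, hvp, hp, rfl⟩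
  exact ⟨r, p, hvp, dLE_mono (by omega) hp, rfl⟩

theorem GMod_le_YMod {b : (Fin κ → ℕ) → ℤ} {n : Fin κ → ℕ} {c g : ℤ} (h : c ≤ 3 * g - 1) :
    GMod (R := R) b n c ≤ YMod b n g := by
  apply Submodule.span_le.mpr
  rintro x ⟨r, p, hvp, hp, rfl⟩
  apply Submodule.subset_span
  refine ⟨r, p, hvp, dLE_mono ?_ hp, rfl⟩
  unfold YBnd
  have : (if AMatS r = nTensor n then (1:ℤ) else 0) ≤ 1 := by split <;> norm_num
  omega

theorem Cmp_le_GMod {b : (Fin κ → ℕ) → ℤ} {n : Fin κ → ℕ} {c : ℤ}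
    {r : (Fin κ → ℕ) →₀ ℕ} (hvp : IsVPartition n r) :
    Cmp (R := R) (AMatS r) (3 * (b n - bsum b r) + c) ≤ GMod b n c := by
  intro x hx
  obtain ⟨p, hp, rfl⟩ := exists_of_mem_Cmp hx
  exact Submodule.subset_span ⟨r, p, hvp, hp, rfl⟩

theorem mul_mem_GMod {b : (Fin κ → ℕ) → ℤ} {n : Fin κ → ℕ} {c d : ℤ}
    {x y : MAlg R κ} (hx : x ∈ Cmp (0 : SymmMat κ) d) (hy : y ∈ GMod b n c) :
    x * y ∈ GMod b n (c + d) := by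
  induction hy using Submodule.span_induction with
  | mem z hz =>
      obtain ⟨r, pz, hvp, hpz, rfl⟩ := hz
      obtain ⟨px, hpx, rfl⟩ := exists_of_mem_Cmp hx
      rw [AddMonoidAlgebra.single_mul_single]
      apply Submodule.subset_span
      refine ⟨r, px * pz, hvp, ?_, by rw [zero_add]⟩
      have := mem_dLE_mul hpx hpz
      exact dLE_mono (by omega) this
  | zero => rw [mul_zero]; exact Submodule.zero_mem _
  | add u v hu hv hu' hv' => rw [mul_add]; exact Submodule.add_mem _ hu' hv'
  | smul t u hu hu' => rw [mul_smul_comm]; exact Submodule.smul_mem _ t hu'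

theorem Dh_smul (Dh : Derivation ℚ (MAlg R κ) (MAlg R κ)) (δ : Derivation ℚ R R)
    (hDhR : ∀ r : R, Dh (cR r) = cR (δ r)) (t : R) (x : MAlg R κ) :
    Dh (t • x) = δ t • x + t • Dh x := by
  rw [smul_eq_cR_mul, Derivation.leibniz, hDhR, smul_eq_cR_mul, smul_eq_cR_mul]
  simp only [smul_eq_mul]
  ring

theorem Dh_mem_GMod (Dh : Derivation ℚ (MAlg R κ) (MAlg R κ)) (δ : Derivation ℚ R R)
    (V W : SymmMat κ → R) (f c0 : R)
    (hDhR : ∀ r : R, Dh (cR r) = cR (δ r))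
    (hDhS : Dh (SP (R := R) (κ := κ)) = cR f - cR c0 * SP ^ 2)
    (hDhT : ∀ q : SymmMat κ, Dh (Tq (R := R) q)
      = (cR (V q) * SP + cR (W q) * (cR f - cR c0 * SP ^ 2)) * Tq q)
    {b : (Fin κ → ℕ) → ℤ} {n : Fin κ → ℕ} {c : ℤ}
    {x : MAlg R κ} (hx : x ∈ GMod b n c) :
    Dh x ∈ GMod (R := R) b n (c + 2) := by
  have main : x ∈ GMod (R := R) b n c ∧ Dh x ∈ GMod (R := R) b n (c + 2) := by
    induction hx using Submodule.span_induction with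
    | mem z hz =>
        constructor
        · exact Submodule.subset_span hz
        · obtain ⟨r, pz, hvp, hpz, rfl⟩ := hz
          have h1 : (AddMonoidAlgebra.single (AMatS r) pz : MAlg R κ)
              ∈ Cmp (AMatS r) (3 * (b n - bsum b r) + c) := single_mem_Cmp hpz
          have h2 := Dh_mem_Cmp Dh (fun t => δ t) V W f c0 hDhR hDhS hDhT h1
          exact Cmp_le_GMod hvp (by rw [show 3 * (b n - bsum b r) + c + 2
            = 3 * (b n - bsum b r) + (c + 2) by ring] at h2; exact h2)
    | zero => exact ⟨Submodule.zero_mem _, by rw [map_zero]; exact Submodule.zero_mem _⟩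
    | add u v hu hv hu' hv' =>
        exact ⟨Submodule.add_mem _ hu'.1 hv'.1,
          by rw [map_add]; exact Submodule.add_mem _ hu'.2 hv'.2⟩
    | smul t u hu hu' =>
        refine ⟨Submodule.smul_mem _ t hu'.1, ?_⟩
        rw [Dh_smul Dh δ hDhR]
        exact Submodule.add_mem _
          (Submodule.smul_mem _ _ (GMod_mono (by omega) hu'.1))
          (Submodule.smul_mem _ t hu'.2)
  exact main.2

/-- product of two graded pieces lands in the Y-module of the sum -/
theorem GMod_mul_GMod {b : (Fin κ → ℕ) → ℤ} {m m' : Fin κ → ℕ}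
    (hm : m ≠ 0) (hm' : m' ≠ 0) {H H' g : ℤ}
    (hg : H + H' + (b m + b m' - b (m + m')) = g)
    {x y : MAlg R κ} (hx : x ∈ GMod b m (3 * H)) (hy : y ∈ GMod b m' (3 * H')) :
    x * y ∈ YMod (R := R) b (m + m') g := by
  have h1 : x * y ∈ GMod (R := R) b m (3 * H) * GMod (R := R) b m' (3 * H') :=
    Submodule.mul_mem_mul hx hy
  rw [GMod, GMod, Submodule.span_mul_span] at h1
  refine Submodule.span_le.mpr ?_ h1
  rintro z hz
  rw [Set.mem_mul] at hz
  obtain ⟨u, hu, v, hv, rfl⟩ := hz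
  obtain ⟨r, pu, hvp, hpu, rfl⟩ := hu
  obtain ⟨r', pv, hvp', hpv, rfl⟩ := hv
  rw [AddMonoidAlgebra.single_mul_single, ← AMatS_add]
  apply Submodule.subset_span
  refine ⟨r + r', pu * pv, vp_add hvp hvp', ?_, rfl⟩
  have hmul := mem_dLE_mul hpu hpv
  apply dLE_mono ?_ hmul
  unfold YBnd
  rw [if_neg (vp_add_A_ne hm hm' hvp hvp')]
  rw [show bsum b (r + r') = bsum b r + bsum b r' from bsum_add b r r']
  omega

/-! ### The linear operators -/

theorem Dop4_mem (δ : Derivation ℚ R R) (A : Fin κ → R) (c f ft al : R)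
    (p : ℕ → Polynomial R) (hp : ∀ h : ℕ, 2 ≤ h → (p h).natDegree ≤ 3 * h - 2)
    (Dh : Derivation ℚ (MAlg R κ) (MAlg R κ)) (V W : SymmMat κ → R)
    (hDhR : ∀ r : R, Dh (cR r) = cR (δ r))
    (hDhS : Dh (SP (R := R) (κ := κ)) = cR f - cR c * SP ^ 2)
    (hDhT : ∀ q : SymmMat κ, Dh (Tq (R := R) q)
      = (cR (V q) * SP + cR (W q) * (cR f - cR c * SP ^ 2)) * Tq q)
    (b : (Fin κ → ℕ) → ℤ) (n : Fin κ → ℕ) (g : ℤ) (h : ℕ) (hh : 1 ≤ h)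
    {x : MAlg R κ} (hx : x ∈ GMod b n (3 * (g - h))) :
    Dop4 (fun α => δ (A α)) (fun β => δ (δ (A β))) c ft al p Dh n h x
      ∈ GMod (R := R) b n (3 * g - 1) := by
  have hDh : ∀ {c' : ℤ} {z : MAlg R κ}, z ∈ GMod (R := R) b n c' → Dh z ∈ GMod b n (c' + 2) :=
    fun hz => Dh_mem_GMod Dh δ V W f c hDhR hDhS hDhT hz
  have hq1 : ((2 : ℚ)⁻¹ • (cR c * SP) + cR al : MAlg R κ) ∈ Cmp 0 1 :=
    Submodule.add_mem _
      (Cmp_qsmul _ (Cmp_mul' (cR_mem_Cmp _ le_rfl) (SP_mem_Cmp le_rfl) (by simp) (by omega)))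
      (cR_mem_Cmp _ (by omega))
  have hftc : (cR ft - cR c * SP : MAlg R κ) ∈ Cmp 0 1 :=
    Submodule.sub_mem _ (cR_mem_Cmp _ (by omega))
      (Cmp_mul' (cR_mem_Cmp _ le_rfl) (SP_mem_Cmp le_rfl) (by simp) (by omega))
  rw [Dop4]
  split_ifs with h1 h2 hodd
  · -- h = 1
    subst h1
    apply Submodule.add_mem
    · apply GMod_mono (show (3 * (g - 1) + 1 : ℤ) ≤ 3 * g - 1 by omega)
      apply qsmul_mem
      refine mul_mem_GMod ?_ hx
      exact Submodule.sub_mem _ (cR_mem_Cmp _ (by omega))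
        (Cmp_mul' hftc (cR_mem_Cmp _ le_rfl) (by simp) (by omega))
    · rw [show (3 * g - 1 : ℤ) = (3 * g - 1) + 0 by ring]
      refine mul_mem_GMod (cR_mem_Cmp _ le_rfl) ?_
      apply Submodule.add_mem
      · exact GMod_mono (by omega) (hDh hx)
      · exact GMod_mono (show (3 * (g - 1) + 1 : ℤ) ≤ 3 * g - 1 by omega)
          (mul_mem_GMod hq1 hx)
  · -- h = 2
    subst h2
    apply Submodule.sub_mem
    · apply Submodule.neg_mem
      apply qsmul_mem
      apply Submodule.sub_mem
      · exact GMod_mono (show (3 * (g - 2) + 2 + 2 : ℤ) ≤ 3 * g - 1 by omega) (hDh (hDh hx))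
      · exact GMod_mono (show (3 * (g - 2) + 2 + 1 : ℤ) ≤ 3 * g - 1 by omega)
          (mul_mem_GMod hftc (hDh hx))
    · exact GMod_mono (show (3 * (g - 2) + 2 + 1 : ℤ) ≤ 3 * g - 1 by omega)
        (mul_mem_GMod hq1 (hDh hx))
  · -- h odd, h ≥ 3
    have hk : 2 ≤ (h + 1) / 2 := by omega
    have hpk : ((p ((h + 1) / 2)).natDegree : ℤ) ≤ 3 * (((h + 1) / 2 : ℕ) : ℤ) - 2 := by
      have := hp ((h + 1) / 2) hk
      omega
    have hcp : (cP (p ((h + 1) / 2)) : MAlg R κ) ∈ Cmp 0 (3 * (((h + 1) / 2 : ℕ) : ℤ) - 2) :=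
      cP_mem_Cmp hpk
    have inner := mul_mem_GMod hcp hx
    have outer := mul_mem_GMod (cR_mem_Cmp (dAn (fun α => δ (A α)) n) le_rfl) inner
    rw [mul_assoc]
    exact GMod_mono (by omega) outer
  · -- h even, h ≥ 4
    have hk : 2 ≤ h / 2 := by omega
    have hpk : ((p (h / 2)).natDegree : ℤ) ≤ 3 * ((h / 2 : ℕ) : ℤ) - 2 := by
      have := hp (h / 2) hk
      omega
    apply Submodule.neg_mem
    apply GMod_mono (show (3 * (g - h) + 2 + (3 * ((h / 2 : ℕ) : ℤ) - 2) : ℤ) ≤ 3 * g - 1 by omega)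
    exact mul_mem_GMod (cP_mem_Cmp hpk) (hDh hx)

/-- the quadratic factor `𝔇F_{H-1} - δA·F_H` -/
theorem factor_mem (δ : Derivation ℚ R R) (Dh : Derivation ℚ (MAlg R κ) (MAlg R κ))
    (V W : SymmMat κ → R) (f c : R)
    (hDhR : ∀ r : R, Dh (cR r) = cR (δ r))
    (hDhS : Dh (SP (R := R) (κ := κ)) = cR f - cR c * SP ^ 2)
    (hDhT : ∀ q : SymmMat κ, Dh (Tq (R := R) q)
      = (cR (V q) * SP + cR (W q) * (cR f - cR c * SP ^ 2)) * Tq q)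
    (b : (Fin κ → ℕ) → ℤ) (m : Fin κ → ℕ) (H : ℤ) (w : R)
    {x1 x0 : MAlg R κ} (hx1 : x1 ∈ GMod b m (3 * (H - 1))) (hx0 : x0 ∈ GMod b m (3 * H)) :
    Dh x1 - cR w * x0 ∈ GMod (R := R) b m (3 * H) := by
  apply Submodule.sub_mem
  · exact GMod_mono (by omega) (Dh_mem_GMod Dh δ V W f c hDhR hDhS hDhT hx1)
  · exact GMod_mono (by omega) (mul_mem_GMod (cR_mem_Cmp _ le_rfl) hx0)

/-! ### Solving the torus equation componentwise -/

theorem solve_ode (δ : Derivation ℚ R R) (A : Fin κ → R)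
    (hgen : ∀ d : Matrix (Fin κ) (Fin κ) ℤ, d.IsSymm → d ≠ 0 →
      (∑ α : Fin κ, ∑ β : Fin κ, (d α β : R) * δ (A α) * δ (A β)) ≠ 0)
    (Dp : Derivation ℚ (MAlg R κ) (MAlg R κ))
    (hDpR : ∀ r : R, Dp (cR r) = 0)
    (hDpS : Dp (SP (R := R) (κ := κ)) = 1)
    (hDpT : ∀ q : SymmMat κ, Dp (Tq (R := R) q) = cR (wgt (fun α => δ (A α)) q) * Tq q)
    (b : (Fin κ → ℕ) → ℤ) {n : Fin κ → ℕ} (hn : n ≠ 0) (g : ℕ)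
    {x y : MAlg R κ}
    (hxy : Dp x - cR (wgt (fun α => δ (A α)) (nTensor n)) * x = y)
    (hy : y ∈ YMod b n g) :
    x ∈ GMod (R := R) b n (3 * (g : ℤ)) := by
  set W : SymmMat κ → R := wgt (fun α => δ (A α)) with hW
  have hode : ∀ q : SymmMat κ,
      Polynomial.derivative (x.coeff q) + Polynomial.C (W q - W (nTensor n)) * x.coeff q = y.coeff q :=
    ode_component Dp W hDpR hDpS hDpT x y _ hxy
  -- component information for y
  have hyq : ∀ q : SymmMat κ, y.coeff q ∈
      ⨆ (r : {r : (Fin κ → ℕ) →₀ ℕ // IsVPartition n r ∧ AMatS r = q}),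
        dLE R (YBnd b n g r.1) := by
    intro q
    have himg := Submodule.apply_mem_span_image_of_mem_span
      ((Finsupp.lapply q).comp (AddMonoidAlgebra.coeffLinearEquiv R).toLinearMap : MAlg R κ →ₗ[R] Polynomial R) hy
    refine Submodule.span_le.mpr ?_ himg
    rintro pz ⟨z, hz, rfl⟩
    obtain ⟨r, p', hvp, hp', rfl⟩ := hz
    by_cases hAr : AMatS r = q
    · subst hAr
      have : ((Finsupp.lapply (AMatS r)).comp (AddMonoidAlgebra.coeffLinearEquiv R).toLinearMap : MAlg R κ →ₗ[R] Polynomial R)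
          (AddMonoidAlgebra.single (AMatS r) p') = p' := Finsupp.single_eq_same
      rw [this]
      exact Submodule.mem_iSup_of_mem ⟨r, hvp, rfl⟩ hp'
    · have : ((Finsupp.lapply q).comp (AddMonoidAlgebra.coeffLinearEquiv R).toLinearMap : MAlg R κ →ₗ[R] Polynomial R)
          (AddMonoidAlgebra.single (AMatS r) p') = 0 := Finsupp.single_eq_of_ne (Ne.symm hAr)
      rw [this]
      exact Submodule.zero_mem _
  have hdir : ∀ q : SymmMat κ, Directed (· ≤ ·)
      (fun r : {r : (Fin κ → ℕ) →₀ ℕ // IsVPartition n r ∧ AMatS r = q} =>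
        dLE R (YBnd b n g r.1)) := by
    intro q r r'
    rcases le_total (YBnd b n g r.1) (YBnd b n g r'.1) with h | h
    · exact ⟨r', dLE_mono h, le_rfl⟩
    · exact ⟨r, le_rfl, dLE_mono h⟩
  -- componentwise membership of x
  have key : ∀ q : SymmMat κ,
      (AddMonoidAlgebra.single q (x.coeff q) : MAlg R κ) ∈ GMod (R := R) b n (3 * (g : ℤ)) := by
    intro q
    by_cases hq : q = nTensor n
    · subst hq
      have e := hode (nTensor n)
      rw [sub_self, map_zero, zero_mul, add_zero] at e
      haveI : Nonempty {r : (Fin κ → ℕ) →₀ ℕ // IsVPartition n r ∧ AMatS r = nTensor n} :=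
        ⟨⟨Finsupp.single n 1, vp_single_self hn, AMatS_single⟩⟩
      obtain ⟨r0, hyr⟩ := (Submodule.mem_iSup_of_directed _ (hdir (nTensor n))).mp
        (hyq (nTensor n))
      have hr0 : r0.1 = Finsupp.single n 1 := vp_eq_single hn r0.2.1 r0.2.2
      have hbnd : YBnd b n g r0.1 = 3 * (g : ℤ) - 1 := by
        unfold YBnd
        rw [if_pos r0.2.2, hr0]
        unfold bsum
        rw [Finsupp.sum_single_index (by simp)]
        push_cast
        ring
      rw [hbnd] at hyr
      have hx' : x.coeff (nTensor n) ∈ dLE R (3 * (g : ℤ)) := by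
        apply mem_dLE_of_derivative (by positivity)
        rw [e]
        exact dLE_mono (by omega) hyr
      have hCmp : (AddMonoidAlgebra.single (nTensor n) (x.coeff (nTensor n)) : MAlg R κ)
          ∈ Cmp (AMatS (Finsupp.single n 1))
              (3 * (b n - bsum b (Finsupp.single n 1)) + 3 * (g : ℤ)) := by
        rw [AMatS_single]
        apply single_mem_Cmp
        apply dLE_mono ?_ hx'
        unfold bsum
        rw [Finsupp.sum_single_index (by simp)]
        push_cast
        omega
      exact Cmp_le_GMod (vp_single_self hn) hCmp
    · have hWne : W q - W (nTensor n) ≠ 0 := sub_ne_zero.2 (wgt_inj δ A hgen hq)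
      by_cases hI : Nonempty {r : (Fin κ → ℕ) →₀ ℕ // IsVPartition n r ∧ AMatS r = q}
      · obtain ⟨r0, hyr⟩ := (Submodule.mem_iSup_of_directed _ (hdir q)).mp (hyq q)
        have hbnd : YBnd b n g r0.1 = 3 * ((g : ℤ) + b n - bsum b r0.1) := by
          unfold YBnd
          rw [if_neg (by rw [r0.2.2]; exact hq)]
          ring
        rw [hbnd] at hyr
        have hx' : x.coeff q ∈ dLE R (3 * ((g : ℤ) + b n - bsum b r0.1)) := by
          apply mem_dLE_of_ode hWne
          rw [hode q]
          exact hyr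
        have hCmp : (AddMonoidAlgebra.single q (x.coeff q) : MAlg R κ)
            ∈ Cmp (AMatS r0.1) (3 * (b n - bsum b r0.1) + 3 * (g : ℤ)) := by
          rw [r0.2.2]
          apply single_mem_Cmp
          exact dLE_mono (by omega) hx'
        exact Cmp_le_GMod r0.2.1 hCmp
      · haveI := not_nonempty_iff.mp hI
        have hy0 : y.coeff q = 0 := by
          have := hyq q
          rw [iSup_of_empty] at this
          simpa using this
        have e := hode q
        rw [hy0] at e
        have hder : Polynomial.derivative (x.coeff q) = Polynomial.C (-(W q - W (nTensor n))) * x.coeff q := by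
          rw [map_neg]
          linear_combination e
        have hx0 : x.coeff q = 0 := eq_zero_of_derivative_eq_C_mul (neg_ne_zero.2 hWne) hder
        rw [hx0]
        rw [show (AddMonoidAlgebra.single q (0 : Polynomial R) : MAlg R κ) = 0 from
          AddMonoidAlgebra.single_zero q]
        exact Submodule.zero_mem _
  have hxsum : x = ∑ q ∈ x.coeff.support, AddMonoidAlgebra.single q (x.coeff q) := by
    conv_lhs => rw [← AddMonoidAlgebra.sum_coeff_single x]
    rfl
  rw [hxsum]
  exact Submodule.sum_mem _ (fun q _ => key q)

end MPS

/-- Structure theorem for multi-parameter transseries solutions of the holomorphic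
anomaly equations: every nonperturbative free energy `F^{(n)}_g` lies in the
`R`-submodule `Σ_{r ∈ P(n)} T^{A(r)}·{p ∈ R[S] : deg p ≤ 3(g + b(n) − Σ_m r(m)b(m))}`,
summands with a negative degree bound being zero. -/
theorem multi_parameter_structure
    {R : Type*} [CommRing R] [IsDomain R] [Algebra ℚ R] {κ : ℕ} (hκ : 1 ≤ κ)
    (δ : Derivation ℚ R R) (c f ft al : R) (A : Fin κ → R)
    (hgen : ∀ d : Matrix (Fin κ) (Fin κ) ℤ, d.IsSymm → d ≠ 0 →
      (∑ α : Fin κ, ∑ β : Fin κ, (d α β : R) * δ (A α) * δ (A β)) ≠ 0)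
    (p : ℕ → Polynomial R) (hp : ∀ h : ℕ, 2 ≤ h → (p h).natDegree ≤ 3 * h - 2)
    (Dp Dh : Derivation ℚ (MAlg R κ) (MAlg R κ))
    (hDpR : ∀ r : R, Dp (cR r) = 0)
    (hDpS : Dp (SP (R := R) (κ := κ)) = 1)
    (hDpT : ∀ q : SymmMat κ, Dp (Tq (R := R) q) = cR (wgt (fun α => δ (A α)) q) * Tq q)
    (hDhR : ∀ r : R, Dh (cR r) = cR (δ r))
    (hDhS : Dh (SP (R := R) (κ := κ)) = cR f - cR c * SP ^ 2)
    (hDhT : ∀ q : SymmMat κ, Dh (Tq (R := R) q)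
      = (cR (vgt (fun α => δ (A α)) (fun β => δ (δ (A β))) q) * SP
          + cR (wgt (fun α => δ (A α)) q) * (cR f - cR c * SP ^ 2)) * Tq q)
    (b : (Fin κ → ℕ) → ℤ)
    (hb : ∀ m m' : Fin κ → ℕ, m ≠ 0 → m' ≠ 0 → b (m + m') ≤ b m + b m')
    (F : (Fin κ → ℕ) → ℤ → MAlg R κ)
    (hFneg : ∀ (n : Fin κ → ℕ) (j : ℤ), j < 0 → F n j = 0)
    (heq : ∀ n : Fin κ → ℕ, n ≠ 0 → ∀ g : ℕ,
      Dp (F n (g : ℤ)) - cR (wgt (fun α => δ (A α)) (nTensor n)) * F n (g : ℤ)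
        = -(∑ h ∈ Finset.Icc 1 g,
              Dop4 (fun α => δ (A α)) (fun β => δ (δ (A β))) c ft al p Dh n h
                (F n ((g : ℤ) - (h : ℤ))))
          + (2 : ℚ)⁻¹ •
            ∑ m ∈ (Finset.Iic n).filter (fun m => m ≠ 0 ∧ m ≠ n),
              ∑ h ∈ Finset.Icc (0 : ℤ) ((g : ℤ) - (b m + b (n - m) - b n)),
                (Dh (F m (h - 1)) - cR (dAn (fun α => δ (A α)) m) * F m h)
                * (Dh (F (n - m) ((g : ℤ) - 1 - (b m + b (n - m) - b n) - h))
                    - cR (dAn (fun α => δ (A α)) (n - m))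
                        * F (n - m) ((g : ℤ) - (b m + b (n - m) - b n) - h))) :
    ∀ n : Fin κ → ℕ, n ≠ 0 → ∀ g : ℕ,
      F n (g : ℤ) ∈ Submodule.span R
        {x : MAlg R κ | ∃ (r : (Fin κ → ℕ) →₀ ℕ) (q : Polynomial R),
          IsVPartition n r ∧
          x = Tq (AMatS r) * cP q ∧
          (3 * ((g : ℤ) + b n - r.sum fun m k => (k : ℤ) * b m) < 0 → q = 0) ∧
          (0 ≤ 3 * ((g : ℤ) + b n - r.sum fun m k => (k : ℤ) * b m) →
            (q.natDegree : ℤ) ≤ 3 * ((g : ℤ) + b n - r.sum fun m k => (k : ℤ) * b m))} := by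
  intro n hn g
  have main : ∀ (Nw : ℕ), ∀ n : Fin κ → ℕ, n ≠ 0 → (∑ α : Fin κ, n α) ≤ Nw →
      ∀ G : ℤ, F n G ∈ MPS.GMod b n (3 * G) := by
    intro Nw
    induction Nw with
    | zero =>
        intro n hn hw
        exfalso
        apply hn
        funext α
        rw [Pi.zero_apply]
        have h0 : ∑ α : Fin κ, n α = 0 := Nat.le_zero.mp hw
        exact (Finset.sum_eq_zero_iff.mp h0) α (Finset.mem_univ α)
    | succ Nw IH =>
        intro n hn hw
        have inner : ∀ g : ℕ, F n (g : ℤ) ∈ MPS.GMod b n (3 * (g : ℤ)) := by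
          intro g
          induction g using Nat.strong_induction_on with
          | _ g IHg =>
          apply MPS.solve_ode δ A hgen Dp hDpR hDpS hDpT b hn g (heq n hn g)
          apply Submodule.add_mem
          · apply Submodule.neg_mem
            apply Submodule.sum_mem
            intro h hh
            obtain ⟨hh1, hh2⟩ := Finset.mem_Icc.mp hh
            have hFprev : F n ((g : ℤ) - (h : ℤ)) ∈ MPS.GMod b n (3 * ((g : ℤ) - (h : ℤ))) := by
              have e : (g : ℤ) - (h : ℤ) = ((g - h : ℕ) : ℤ) := by
                rw [Nat.cast_sub hh2]
              rw [e]
              exact IHg (g - h) (by omega)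
            have := MPS.Dop4_mem δ A c f ft al p hp Dh
              (vgt (fun α => δ (A α)) (fun β => δ (δ (A β)))) (wgt (fun α => δ (A α)))
              hDhR hDhS hDhT b n (g : ℤ) h hh1 hFprev
            exact MPS.GMod_le_YMod le_rfl this
          · apply MPS.qsmul_mem
            apply Submodule.sum_mem
            intro m hm
            have hmf := Finset.mem_filter.mp hm
            have hmIic : m ≤ n := Finset.mem_Iic.mp hmf.1
            have hm0 : m ≠ 0 := hmf.2.1
            have hmn : m ≠ n := hmf.2.2
            have hle : ∀ α, m α ≤ n α := fun α => hmIic α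
            have hm' : n - m ≠ 0 := by
              intro h0
              apply hmn
              funext α
              have := congrFun h0 α
              have h2 : n α - m α = 0 := this
              have := hle α
              omega
            have hmm' : m + (n - m) = n := by
              funext α
              have := hle α
              show m α + (n α - m α) = n α
              omega
            have hwm : (∑ α : Fin κ, m α) ≤ Nw := by
              have hlt : (∑ α : Fin κ, m α) < ∑ α : Fin κ, n α := by
                apply Finset.sum_lt_sum (fun α _ => hle α)
                by_contra hcon
                push_neg at hcon
                apply hmn
                funext α
                have h1 := hcon α (Finset.mem_univ α)
                have h2 := hle α
                omega
              omega
            have hwm' : (∑ α : Fin κ, (n - m) α) ≤ Nw := by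
              obtain ⟨α₀, hα₀⟩ : ∃ α, m α ≠ 0 := by
                by_contra hcon
                push_neg at hcon
                exact hm0 (funext fun α => hcon α)
              have hlt : (∑ α : Fin κ, (n - m) α) < ∑ α : Fin κ, n α := by
                apply Finset.sum_lt_sum
                · intro α _
                  show n α - m α ≤ n α
                  omega
                · refine ⟨α₀, Finset.mem_univ α₀, ?_⟩
                  have h2 := hle α₀
                  show n α₀ - m α₀ < n α₀
                  omega
              omega
            apply Submodule.sum_mem
            intro h hhI
            obtain ⟨hh0, hh1⟩ := Finset.mem_Icc.mp hhI
            have f1 : Dh (F m (h - 1)) - cR (dAn (fun α => δ (A α)) m) * F m h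
                ∈ MPS.GMod b m (3 * h) := by
              apply MPS.factor_mem δ Dh _ _ f c hDhR hDhS hDhT b m h
              · exact IH m hm0 hwm (h - 1)
              · exact IH m hm0 hwm h
            set B : ℤ := b m + b (n - m) - b n with hB
            have f2 : Dh (F (n - m) ((g : ℤ) - 1 - B - h))
                - cR (dAn (fun α => δ (A α)) (n - m)) * F (n - m) ((g : ℤ) - B - h)
                ∈ MPS.GMod b (n - m) (3 * ((g : ℤ) - B - h)) := by
              apply MPS.factor_mem δ Dh _ _ f c hDhR hDhS hDhT b (n - m) ((g : ℤ) - B - h)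
              · have e : (g : ℤ) - 1 - B - h = ((g : ℤ) - B - h) - 1 := by ring
                rw [e]
                exact IH (n - m) hm' hwm' _
              · exact IH (n - m) hm' hwm' _
            have hprod := MPS.GMod_mul_GMod hm0 hm'
              (H := (h : ℤ)) (H' := (g : ℤ) - B - h) (g := (g : ℤ))
              (by rw [hmm']; omega) f1 f2
            rw [hmm'] at hprod
            exact hprod
        intro G
        rcases lt_or_ge G 0 with hG | hG
        · rw [hFneg n G hG]
          exact Submodule.zero_mem _
        · obtain ⟨g, rfl⟩ := Int.eq_ofNat_of_zero_le hG
          exact inner g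
  have hmem := main (∑ α : Fin κ, n α) n hn le_rfl (g : ℤ)
  refine Submodule.span_le.mpr ?_ hmem
  rintro x ⟨r, p', hvp, hp', rfl⟩
  apply Submodule.subset_span
  refine ⟨r, p', hvp, ?_, ?_, ?_⟩
  · unfold Tq cP
    rw [AddMonoidAlgebra.single_mul_single, add_zero, one_mul]
  · intro hneg
    have e : 3 * (b n - MPS.bsum b r) + 3 * (g : ℤ)
        = 3 * ((g : ℤ) + b n - MPS.bsum b r) := by ring
    rw [e] at hp'
    exact (MPS.mem_dLE_of_neg hneg).mp hp'
  · intro hpos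
    have e : 3 * (b n - MPS.bsum b r) + 3 * (g : ℤ)
        = 3 * ((g : ℤ) + b n - MPS.bsum b r) := by ring
    rw [e] at hp'
    rcases (MPS.mem_dLE_natDegree_iff hpos).mp hp' with h | h
    · exact h
    · rw [h]
      simpa using hpos

end
end

section
/- In the transseries model described in the context, fix n ≥ 1 and let (y_g)_{g≥0} be a sequence in M = R[S,T] satisfying the homogeneous equations (∂ − (1/2)n²(δA)²) y_g = − Σ_{h=1}^{g} 𝒟^{(n)}_h y_{g−h} for every g ≥ 0. If ev₀(y_g) = 0 for every g, where ev₀ : R[S,T] → R[T] is the R[T]-algebra evaluation map sending S to 0 (setting the propagator to zero, i.e. extracting the holomorphic ambiguity part), then y_g = 0 for every g. -/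
open Polynomial

noncomputable section

section aux
variable {R : Type*} [CommRing R] [Algebra ℚ R] (δ : Derivation ℚ R R) (A : R)
variable (Dp : Derivation ℚ (TS R) (TS R))
  (hDpC : ∀ r : R, Dp (cc r) = 0)
  (hDpS : Dp (Sv (R := R)) = 1)
  (hDpT : Dp (Tv (R := R)) = (2 : ℚ)⁻¹ • (cc (δ A) ^ 2 * Tv))

include hDpC hDpS in
lemma dpC (a : Polynomial R) : Dp (Polynomial.C a) = Polynomial.C (derivative a) := by
  induction a using Polynomial.induction_on' with
  | add p q hp hq => simp [hp, hq]
  | monomial m r =>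
    rw [← Polynomial.C_mul_X_pow_eq_monomial]
    rw [map_mul, map_pow, Derivation.leibniz, Derivation.leibniz_pow]
    have e1 : (Polynomial.C Polynomial.X : TS R) = Sv := rfl
    have e2 : (Polynomial.C (Polynomial.C r) : TS R) = cc r := rfl
    rw [e1, e2, hDpS, hDpC, smul_zero, add_zero, derivative_C_mul, derivative_X_pow,
      map_mul]
    cases m with
    | zero => simp
    | succ m =>
      simp only [smul_eq_mul, smul_smul, mul_one, Nat.add_sub_cancel, map_mul, map_pow,
        map_natCast]
      push_cast
      rw [e1, e2]
      ring

include hDpT in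
lemma dpTpow (m : ℕ) :
    Dp ((Polynomial.X : TS R) ^ m)
      = (2 : ℚ)⁻¹ • ((m : ℚ) • (cc (δ A) ^ 2 * Polynomial.X ^ m)) := by
  rw [show (Tv : TS R) = Polynomial.X from rfl] at hDpT
  induction m with
  | zero => simp
  | succ m ih =>
    rw [pow_succ, Derivation.leibniz, ih, hDpT]
    simp only [smul_eq_mul, smul_smul, Algebra.smul_def, Polynomial.algebraMap_apply]
    push_cast
    simp only [map_add, map_one, map_natCast]
    ring

include hDpC hDpS hDpT in
lemma dpCoeff (x : TS R) (k : ℕ) :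
    (Dp x).coeff k = derivative (x.coeff k)
      + (2 : ℚ)⁻¹ • ((k : ℚ) • ((Polynomial.C (δ A)) ^ 2 * x.coeff k)) := by
  induction x using Polynomial.induction_on' with
  | add u v hu hv => simp [hu, hv, smul_add, mul_add, add_add_add_comm]
  | monomial m a =>
    rw [← Polynomial.C_mul_X_pow_eq_monomial, Derivation.leibniz,
      dpC Dp hDpC hDpS, dpTpow δ A Dp hDpT]
    have e3 : (cc (δ A) : TS R) ^ 2 = Polynomial.C ((Polynomial.C (δ A))^2) := by
      simp [cc]
    simp only [smul_eq_mul, e3, coeff_add, coeff_smul, Polynomial.coeff_C_mul,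
      Polynomial.coeff_X_pow, coeff_mul_C, mul_ite, mul_one, mul_zero, ite_mul, zero_mul,
      coeff_C_mul]
    by_cases h : k = m
    · subst h; simp [mul_comm]; exact add_comm _ _
    · simp [h, Ne.symm h]
end aux

lemma Dop_zero {R : Type*} [CommRing R] [Algebra ℚ R] (δ : Derivation ℚ R R)
    (c ft al A : R) (p : ℕ → Polynomial R) (Dh : Derivation ℚ (TS R) (TS R))
    (n h : ℕ) : Dop δ c ft al A p Dh n h 0 = 0 := by
  unfold Dop; split_ifs <;> simp

lemma ode_zero {R : Type*} [CommRing R] [IsDomain R] (a : Polynomial R) (r : R)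
    (hr : r ≠ 0) (h : derivative a = Polynomial.C r * a) : a = 0 := by
  by_contra ha
  have h1 : (derivative a).coeff a.natDegree = 0 := by
    rw [coeff_derivative, coeff_eq_zero_of_natDegree_lt (lt_add_one _), zero_mul]
  rw [h, coeff_C_mul] at h1
  exact mul_ne_zero hr (leadingCoeff_ne_zero.2 ha) h1

/-- Kernel lemma for the nonperturbative holomorphic anomaly operator: a formal solution
`(y_g)` of the homogeneous equations `(∂ − (1/2)n²(δA)²) y_g = −Σ_{h=1}^g 𝒟^{(n)}_h y_{g−h}`
whose holomorphic ambiguity part (the propagator `S` set to zero) vanishes at every order,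
is identically zero. -/
theorem homogeneous_solution_vanishes
    {R : Type*} [CommRing R] [IsDomain R] [Algebra ℚ R]
    (δ : Derivation ℚ R R) (c f ft al A : R) (hA : δ A ≠ 0)
    (p : ℕ → Polynomial R) (hp : ∀ h : ℕ, 2 ≤ h → (p h).natDegree ≤ 3 * h - 2)
    (Dp Dh : Derivation ℚ (TS R) (TS R))
    (hDpC : ∀ r : R, Dp (cc r) = 0)
    (hDpS : Dp (Sv (R := R)) = 1)
    (hDpT : Dp (Tv (R := R)) = (2 : ℚ)⁻¹ • (cc (δ A) ^ 2 * Tv))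
    (hDhC : ∀ r : R, Dh (cc r) = cc (δ r))
    (hDhS : Dh (Sv (R := R)) = cc f - cc c * Sv ^ 2)
    (hDhT : Dh (Tv (R := R)) = (cc (δ A) * cc (δ (δ A)) * Sv
        + (2 : ℚ)⁻¹ • (cc (δ A) ^ 2 * (cc f - cc c * Sv ^ 2))) * Tv)
    (n : ℕ) (hn : 1 ≤ n) (y : ℕ → TS R)
    (heq : ∀ g : ℕ,
      Dp (y g) - (2 : ℚ)⁻¹ • ((n : TS R) ^ 2 * cc (δ A) ^ 2 * y g)
        = -(∑ h ∈ Finset.Icc 1 g, Dop δ c ft al A p Dh n h (y (g - h))))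
    (hev : ∀ g : ℕ, (y g).map (Polynomial.evalRingHom (0 : R)) = 0) :
    ∀ g : ℕ, y g = 0 := by
  have hinj : Function.Injective (algebraMap ℚ R) := (algebraMap ℚ R).injective
  have _ : CharZero R := charZero_of_injective_algebraMap hinj
  intro g
  induction g using Nat.strong_induction_on with
  | _ g ih =>
  have hsum : ∑ h ∈ Finset.Icc 1 g, Dop δ c ft al A p Dh n h (y (g - h)) = 0 := by
    refine Finset.sum_eq_zero fun h hh => ?_
    rw [Finset.mem_Icc] at hh
    have hlt : g - h < g :=
      Nat.sub_lt (lt_of_lt_of_le (lt_of_lt_of_le Nat.zero_lt_one hh.1) hh.2)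
        (lt_of_lt_of_le Nat.zero_lt_one hh.1)
    rw [ih (g - h) hlt, Dop_zero]
  have hmain : Dp (y g) = (2 : ℚ)⁻¹ • ((n : TS R) ^ 2 * cc (δ A) ^ 2 * y g) := by
    have h0 := heq g
    rw [hsum, neg_zero, sub_eq_zero] at h0
    exact h0
  apply Polynomial.ext
  intro k
  rw [coeff_zero]
  set a := (y g).coeff k with hak
  have hsm : ∀ (q : ℚ) (z : Polynomial R),
      q • z = Polynomial.C (algebraMap ℚ R q) * z := by
    intro q z
    rw [Algebra.smul_def, Polynomial.algebraMap_apply]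
  have hc : derivative a + (2 : ℚ)⁻¹ • ((k : ℚ) • ((Polynomial.C (δ A)) ^ 2 * a))
      = (2 : ℚ)⁻¹ • (((n : Polynomial R)) ^ 2 * (Polynomial.C (δ A)) ^ 2 * a) := by
    have h0 := congrArg (fun z => z.coeff k) hmain
    replace h0 : (Dp (y g)).coeff k
        = ((2 : ℚ)⁻¹ • ((n : TS R) ^ 2 * cc (δ A) ^ 2 * y g)).coeff k := h0
    rw [dpCoeff δ A Dp hDpC hDpS hDpT] at h0
    have e : ((n : TS R) ^ 2 * cc (δ A) ^ 2 : TS R)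
        = Polynomial.C ((n : Polynomial R) ^ 2 * (Polynomial.C (δ A)) ^ 2) := by
      simp [cc]
    rw [e, coeff_smul, coeff_C_mul] at h0
    exact h0
  set r : R := algebraMap ℚ R (2 : ℚ)⁻¹ * (((n : R)) ^ 2 - (k : R)) * (δ A) ^ 2 with hr
  have hkey : derivative a = Polynomial.C r * a := by
    rw [hsm, hsm, hsm] at hc
    simp only [map_natCast] at hc
    simp only [hr, map_mul, map_sub, map_pow, map_natCast]
    linear_combination hc
  by_cases hk : k = n ^ 2
  · have hr0 : r = 0 := by
      subst hk
      rw [hr]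
      push_cast
      ring
    rw [hr0, map_zero, zero_mul] at hkey
    have hdeg := natDegree_eq_zero_of_derivative_eq_zero hkey
    have ha0 : a.coeff 0 = 0 := by
      have h1 := congrArg (fun z => z.coeff k) (hev g)
      simp only [coeff_map, coeff_zero] at h1
      rwa [coe_evalRingHom, ← Polynomial.coeff_zero_eq_eval_zero] at h1
    rw [eq_C_of_natDegree_eq_zero hdeg, ha0, map_zero]
  · have hne : ((n : R)) ^ 2 - (k : R) ≠ 0 := by
      rw [sub_ne_zero]
      intro hcast
      apply hk
      have : ((n ^ 2 : ℕ) : R) = ((k : ℕ) : R) := by push_cast; rw [hcast]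
      exact (Nat.cast_injective this).symm
    have hrne : r ≠ 0 := by
      rw [hr]
      exact mul_ne_zero (mul_ne_zero ((map_ne_zero_iff _ hinj).2 (by norm_num)) hne)
        (pow_ne_zero 2 hA)
    exact ode_zero a r hrne hkey


end
end

section
/- In the two-parameter resonant transseries model described in the context, suppose the family (F^{(n)}_g) satisfies the equations, and let ε : ℕ² → {1, −1} be a homomorphism of additive-to-multiplicative monoids (ε(m + m') = ε(m)·ε(m') for all m, m'). Assume the holomorphic ambiguities respect the symmetry: ev₀(F^{(n₁,n₂)}_g) = ε(n)·(−1)^{g+1}·ev₀(F^{(n₂,n₁)}_g) for every sector n = (n₁,n₂) and every g ≥ 0. Then F^{(n₁,n₂)}_g = ε(n)·(−1)^{g+1}·F^{(n₂,n₁)}_g for every sector n and every g ≥ 0; equivalently, the sector series F^{(n)}(g_s) = Σ_{g≥0} g_s^{g+1} F^{(n)}_g satisfy F^{(n)}(−g_s) = ε(n)·F^{(n*)}(g_s), where n* := (n₂,n₁). -/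
open Polynomial

noncomputable section

/-- `n̄ = n₁ − n₂`, so that the total instanton action of the sector `n = (n₁,n₂)`
is `n̄·A` (the actions being `A₁ = A`, `A₂ = −A`). -/
def nbar (n : ℕ × ℕ) : ℤ := (n.1 : ℤ) - (n.2 : ℤ)

/-- The operators `𝒟^{(n)}_h` of the nonperturbative holomorphic anomaly equations in the
two-parameter resonant model, for the sector with `n̄ = nb`. -/
def Dop2 {R : Type*} [CommRing R] [Algebra ℚ R] (δ : Derivation ℚ R R)
    (c ft al A : R) (p : ℕ → Polynomial R) (Dh : Derivation ℚ (TS R) (TS R))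
    (nb : ℤ) (h : ℕ) (x : TS R) : TS R :=
  if h = 1 then
    (2 : ℚ)⁻¹ • ((nb : TS R) * (cc (δ (δ A)) - (cc ft - cc c * Sv) * cc (δ A)) * x)
      + (nb : TS R) * cc (δ A) * (Dh x + ((2 : ℚ)⁻¹ • (cc c * Sv) + cc al) * x)
  else if h = 2 then
    -((2 : ℚ)⁻¹ • (Dh (Dh x) - (cc ft - cc c * Sv) * Dh x))
      - ((2 : ℚ)⁻¹ • (cc c * Sv) + cc al) * Dh x
  else if h % 2 = 1 then
    (nb : TS R) * cc (δ A) * Polynomial.C (p ((h + 1) / 2)) * x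
  else
    -(Polynomial.C (p (h / 2)) * Dh x)

section Helpers

variable {R : Type*} [CommRing R] [Algebra ℚ R]

lemma Dzsmul (D : Derivation ℚ (TS R) (TS R)) (a : ℤ) (x : TS R) :
    D (a • x) = a • D x := by
  simp [zsmul_eq_mul, Derivation.leibniz]

lemma Dmul_int (D : Derivation ℚ (TS R) (TS R)) (a : ℤ) (x : TS R) :
    D ((a : TS R) * x) = (a : TS R) * D x := by
  have h := Dzsmul D a x
  simpa [zsmul_eq_mul] using h

lemma Dalg_int (D : Derivation ℚ (TS R) (TS R)) (a : ℤ) (x : TS R) :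
    D ((algebraMap ℤ (TS R)) a * x) = (algebraMap ℤ (TS R)) a * D x := by
  simpa [algebraMap_int_eq, eq_intCast] using Dmul_int D a x

lemma DpC_eq (Dp : Derivation ℚ (TS R) (TS R)) (hDpC : ∀ r : R, Dp (cc r) = 0)
    (hDpS : Dp (Sv (R := R)) = 1) (q : Polynomial R) :
    Dp (Polynomial.C q) = Polynomial.C (derivative q) := by
  induction q using Polynomial.induction_on' with
  | add p q hp hq => simp [hp, hq]
  | monomial i a =>
    have h1 : (Polynomial.C (Polynomial.monomial i a) : TS R) = cc a * Sv ^ i := by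
      rw [← Polynomial.C_mul_X_pow_eq_monomial]
      simp [cc, Sv]
    rw [h1, Derivation.leibniz, hDpC, Derivation.leibniz_pow, hDpS]
    simp only [Polynomial.derivative_monomial, smul_zero, zero_add, mul_one]
    rw [← Polynomial.C_mul_X_pow_eq_monomial]
    simp only [map_mul, map_natCast, map_pow, smul_eq_mul, nsmul_eq_mul, cc, Sv]
    ring

lemma Dp_coeff (Dp : Derivation ℚ (TS R) (TS R)) (w : R) (hDpC : ∀ r : R, Dp (cc r) = 0)
    (hDpS : Dp (Sv (R := R)) = 1)
    (hDpT : Dp (Tv (R := R)) = (2 : ℚ)⁻¹ • (cc w ^ 2 * Tv)) (x : TS R) (b : ℕ) :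
    (Dp x).coeff b = derivative (x.coeff b)
      + ((b : ℚ) * 2⁻¹) • (Polynomial.C (w ^ 2) * x.coeff b) := by
  simp only [Tv] at hDpT
  induction x using Polynomial.induction_on' with
  | add p q hp hq => simp [hp, hq, mul_add]; ring
  | monomial i a =>
    have key : Dp ((Polynomial.monomial i a : TS R))
        = Polynomial.monomial i (derivative a)
          + ((i : ℚ) * 2⁻¹) • (Polynomial.monomial i (Polynomial.C (w ^ 2) * a)) := by
      rw [← Polynomial.C_mul_X_pow_eq_monomial, Derivation.leibniz,
        DpC_eq Dp hDpC hDpS, Derivation.leibniz_pow, hDpT]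
      cases i with
      | zero => simp [← Polynomial.C_mul_X_pow_eq_monomial]
      | succ i =>
        rw [← Polynomial.C_mul_X_pow_eq_monomial, ← Polynomial.C_mul_X_pow_eq_monomial]
        simp only [smul_eq_mul, nsmul_eq_mul, cc, smul_smul, Nat.add_sub_cancel,
          map_mul, map_pow, Algebra.smul_def, map_natCast, eq_natCast]
        ring
    rw [key]
    simp only [Polynomial.coeff_add, Polynomial.coeff_smul, Polynomial.coeff_monomial]
    split_ifs with hib
    · subst hib; simp
    · simp

lemma rat_smul_eq_C_mul (r : ℚ) (y : Polynomial R) :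
    r • y = Polynomial.C (algebraMap ℚ R r) * y := by
  rw [← algebraMap_smul R r y, Polynomial.smul_eq_C_mul]

lemma ode_zero_s6 [IsDomain R] (c0 : R) (hc : c0 ≠ 0) (q : Polynomial R)
    (hq : derivative q = (2 : ℚ)⁻¹ • (Polynomial.C c0 * q)) : q = 0 := by
  haveI : CharZero R := charZero_of_injective_algebraMap (algebraMap ℚ R).injective
  by_contra hq0
  rw [rat_smul_eq_C_mul, ← mul_assoc, ← map_mul] at hq
  have hc2 : algebraMap ℚ R 2⁻¹ * c0 ≠ 0 := by
    apply mul_ne_zero _ hc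
    exact (map_ne_zero_iff _ (algebraMap ℚ R).injective).2 (by norm_num)
  have hdeg : degree (Polynomial.C (algebraMap ℚ R 2⁻¹ * c0) * q) = degree q := by
    rw [degree_mul, degree_C hc2, zero_add]
  have h4 := degree_derivative_lt hq0
  rw [hq, hdeg] at h4
  exact lt_irrefl _ h4

lemma ode_const [CharZero R] [NoZeroDivisors R] (q : Polynomial R)
    (hq : derivative q = 0) (h0 : q.eval 0 = 0) : q = 0 := by
  have h5 := Polynomial.eq_C_of_derivative_eq_zero hq
  have h6 : q.coeff 0 = 0 := by rwa [h5, Polynomial.eval_C] at h0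
  rw [h5, h6, map_zero]

lemma coeff_ode [IsDomain R] {w : R} (hw : w ≠ 0) (nb : ℤ) (b : ℕ) (q : Polynomial R)
    (hco : derivative q + ((b : ℚ) * 2⁻¹) • (Polynomial.C (w ^ 2) * q)
      = (2 : ℚ)⁻¹ • (Polynomial.C (((nb : R)) ^ 2 * w ^ 2) * q))
    (hev : q.eval 0 = 0) : q = 0 := by
  haveI : CharZero R := charZero_of_injective_algebraMap (algebraMap ℚ R).injective
  have hsm : ((b : ℚ) * 2⁻¹) • (Polynomial.C (w ^ 2) * q)
      = (2 : ℚ)⁻¹ • (Polynomial.C ((b : R) * w ^ 2) * q) := by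
    rw [mul_comm ((b : ℚ)) _, mul_smul]
    congr 1
    rw [Nat.cast_smul_eq_nsmul ℚ b (Polynomial.C (w ^ 2) * q), nsmul_eq_mul, map_mul,
      Polynomial.C_eq_natCast, mul_assoc]
  have hq : derivative q = (2 : ℚ)⁻¹ • (Polynomial.C ((((nb : R)) ^ 2 - (b : R)) * w ^ 2) * q) := by
    have h7 : derivative q = (2 : ℚ)⁻¹ • (Polynomial.C (((nb : R)) ^ 2 * w ^ 2) * q)
        - (2 : ℚ)⁻¹ • (Polynomial.C ((b : R) * w ^ 2) * q) := by
      rw [← hsm, eq_sub_iff_add_eq, hco]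
    rw [h7, ← smul_sub, ← sub_mul, ← map_sub]
    ring_nf
  by_cases hb : nb ^ 2 = (b : ℤ)
  · have hc0 : (((nb : R)) ^ 2 - (b : R)) = 0 := by
      have h8 : ((nb : R)) ^ 2 = ((b : ℕ) : R) := by
        exact_mod_cast congrArg (fun t : ℤ => ((t : R))) hb
      rw [h8]; ring
    rw [hc0, zero_mul, map_zero, zero_mul, smul_zero] at hq
    exact ode_const q hq hev
  · refine ode_zero_s6 _ ?_ q hq
    apply mul_ne_zero _ (pow_ne_zero _ hw)
    intro h
    apply hb
    have h9 : ((nb ^ 2 - b : ℤ) : R) = 0 := by push_cast; linear_combination h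
    have h10 := (Int.cast_injective (α := R))
      (by simpa using h9 : ((nb ^ 2 - b : ℤ) : R) = ((0 : ℤ) : R))
    omega

lemma kernel_lemma [IsDomain R] (Dp : Derivation ℚ (TS R) (TS R)) (w : R) (hw : w ≠ 0)
    (hDpC : ∀ r : R, Dp (cc r) = 0) (hDpS : Dp (Sv (R := R)) = 1)
    (hDpT : Dp (Tv (R := R)) = (2 : ℚ)⁻¹ • (cc w ^ 2 * Tv)) (nb : ℤ) (x : TS R)
    (hx : Dp x = (2 : ℚ)⁻¹ • ((nb : TS R) ^ 2 * cc w ^ 2 * x))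
    (h0 : x.map (Polynomial.evalRingHom (0 : R)) = 0) : x = 0 := by
  ext1 b
  rw [Polynomial.coeff_zero]
  refine coeff_ode hw nb b _ ?_ ?_
  · have h1 := congrArg (fun y => Polynomial.coeff y b) hx
    rw [Dp_coeff Dp w hDpC hDpS hDpT] at h1
    rw [h1, Polynomial.coeff_smul]
    congr 1
    have hnb : ((nb : TS R)) = Polynomial.C ((nb : Polynomial R)) := by simp
    rw [hnb, ← map_pow, show (cc w ^ 2 : TS R) = Polynomial.C (Polynomial.C w ^ 2) by simp [cc],
      ← map_mul, Polynomial.coeff_C_mul, map_mul, map_pow, Polynomial.C_eq_intCast, map_pow]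
  · have h2 := congrArg (fun y => Polynomial.coeff y b) h0
    simpa [Polynomial.coeff_map] using h2

lemma Dop2_zsmul (δ : Derivation ℚ R R) (c ft al A : R) (p : ℕ → Polynomial R)
    (Dh : Derivation ℚ (TS R) (TS R)) (nb : ℤ) (h : ℕ) (a : ℤ) (x : TS R) :
    Dop2 δ c ft al A p Dh nb h (a • x) = a • Dop2 δ c ft al A p Dh nb h x := by
  unfold Dop2
  split_ifs <;>
    (simp only [zsmul_eq_mul, Algebra.smul_def, Dmul_int, Dalg_int]; ring)

lemma Dop2_neg (δ : Derivation ℚ R R) (c ft al A : R) (p : ℕ → Polynomial R)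
    (Dh : Derivation ℚ (TS R) (TS R)) (nb : ℤ) (h : ℕ) (x : TS R) :
    Dop2 δ c ft al A p Dh (-nb) h x = ((-1 : ℤ) ^ h) • Dop2 δ c ft al A p Dh nb h x := by
  unfold Dop2
  split_ifs with h1 h2 h3
  · subst h1
    simp only [pow_one, Algebra.smul_def, zsmul_eq_mul, Int.cast_neg, map_neg]
    push_cast
    ring
  · subst h2
    norm_num
  · have hodd : Odd h := Nat.odd_iff.mpr h3
    rw [hodd.neg_one_pow]
    simp only [Algebra.smul_def, zsmul_eq_mul, Int.cast_neg, map_neg]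
    push_cast
    ring
  · have heven : Even h := Nat.even_iff.mpr (by omega)
    rw [heven.neg_one_pow, one_smul]

lemma nbar_swap (n : ℕ × ℕ) : nbar (n.2, n.1) = -nbar n := by
  simp only [nbar]
  omega

end Helpers

/-- In the two-parameter resonant model, if the holomorphic ambiguities respect the
`ℤ₂`-symmetry, then so do the full sector free energies:
`F^{(n₁,n₂)}_g = ε(n)·(−1)^{g+1}·F^{(n₂,n₁)}_g` for every sector and every `g`, i.e.
the sector series satisfy `F^{(n)}(−g_s) = ε(n)·F^{(n*)}(g_s)`. -/

theorem two_parameter_sector_symmetry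
    {R : Type*} [CommRing R] [IsDomain R] [Algebra ℚ R]
    (δ : Derivation ℚ R R) (c f ft al A : R) (hA : δ A ≠ 0)
    (p : ℕ → Polynomial R) (hp : ∀ h : ℕ, 2 ≤ h → (p h).natDegree ≤ 3 * h - 2)
    (Dp Dh : Derivation ℚ (TS R) (TS R))
    (hDpC : ∀ r : R, Dp (cc r) = 0)
    (hDpS : Dp (Sv (R := R)) = 1)
    (hDpT : Dp (Tv (R := R)) = (2 : ℚ)⁻¹ • (cc (δ A) ^ 2 * Tv))
    (hDhC : ∀ r : R, Dh (cc r) = cc (δ r))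
    (hDhS : Dh (Sv (R := R)) = cc f - cc c * Sv ^ 2)
    (hDhT : Dh (Tv (R := R)) = (cc (δ A) * cc (δ (δ A)) * Sv
        + (2 : ℚ)⁻¹ • (cc (δ A) ^ 2 * (cc f - cc c * Sv ^ 2))) * Tv)
    (F : ℕ × ℕ → ℤ → TS R)
    (hFneg : ∀ (n : ℕ × ℕ) (j : ℤ), j < 0 → F n j = 0)
    (heq : ∀ n : ℕ × ℕ, n ≠ 0 → ∀ g : ℕ,
      Dp (F n (g : ℤ)) - (2 : ℚ)⁻¹ • (((nbar n : TS R)) ^ 2 * cc (δ A) ^ 2 * F n (g : ℤ))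
        = -(∑ h ∈ Finset.Icc 1 g, Dop2 δ c ft al A p Dh (nbar n) h (F n ((g : ℤ) - (h : ℤ))))
          + (2 : ℚ)⁻¹ •
            ∑ m ∈ (Finset.range (n.1 + 1) ×ˢ Finset.range (n.2 + 1)).filter
                (fun m => m ≠ 0 ∧ m ≠ n),
              ∑ h ∈ Finset.range g,
                (Dh (F m ((h : ℤ) - 1)) - (nbar m : TS R) * cc (δ A) * F m (h : ℤ))
                * (Dh (F (n - m) ((g : ℤ) - 2 - (h : ℤ)))
                    - (nbar (n - m) : TS R) * cc (δ A) * F (n - m) ((g : ℤ) - 1 - (h : ℤ))))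
    (ε : ℕ × ℕ → ℤ)
    (hεpm : ∀ m : ℕ × ℕ, ε m = 1 ∨ ε m = -1)
    (hεadd : ∀ m m' : ℕ × ℕ, ε (m + m') = ε m * ε m')
    (hamb : ∀ n : ℕ × ℕ, n ≠ 0 → ∀ g : ℕ,
      (F n (g : ℤ)).map (Polynomial.evalRingHom (0 : R))
        = (ε n * (-1) ^ (g + 1)) • (F (n.2, n.1) (g : ℤ)).map (Polynomial.evalRingHom (0 : R))) :
    ∀ n : ℕ × ℕ, n ≠ 0 → ∀ g : ℕ,
      F n (g : ℤ) = (ε n * (-1) ^ (g + 1)) • F (n.2, n.1) (g : ℤ) := by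
  have hswapne : ∀ n : ℕ × ℕ, n ≠ 0 → ((n.2, n.1) : ℕ × ℕ) ≠ 0 := by
    intro n hn h
    apply hn
    rw [Prod.ext_iff] at h ⊢
    exact ⟨h.2, h.1⟩
  suffices H : ∀ g : ℕ, ∀ n : ℕ × ℕ, n ≠ 0 →
      F n (g : ℤ) = (ε n * (-1) ^ (g + 1)) • F (n.2, n.1) (g : ℤ) by
    intro n hn g; exact H g n hn
  intro g
  induction g using Nat.strong_induction_on with
  | _ g IH =>
  intro n hn
  -- extended induction hypothesis, for all integer indices below `g`
  have IHZ : ∀ (j : ℤ), j < (g : ℤ) → ∀ m : ℕ × ℕ, m ≠ 0 →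
      F m j = (((ε m * ((j + 1).negOnePow : ℤ) : ℤ)) : TS R) * F (m.2, m.1) j := by
    intro j hj m hm
    rcases lt_or_ge j 0 with hneg | hpos
    · rw [hFneg m j hneg, hFneg (m.2, m.1) j hneg, mul_zero]
    · obtain ⟨k, rfl⟩ := Int.eq_ofNat_of_zero_le hpos
      have hk : k < g := by exact_mod_cast hj
      have h1 := IH k hk m hm
      rw [h1, zsmul_eq_mul]
      have h2 : (ε m * (-1) ^ (k + 1) : ℤ) = ε m * (((k : ℤ) + 1).negOnePow : ℤ) := by
        rw [show ((k : ℤ) + 1) = ((k + 1 : ℕ) : ℤ) by push_cast; ring,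
          Int.coe_negOnePow_natCast]
      rw [h2]
  -- the global sign for genus `g`
  set s : ℤ := ε n * (-1) ^ (g + 1) with hs
  -- the sign-flip of the basic bilinear blocks
  have factor : ∀ m : ℕ × ℕ, m ≠ 0 → ∀ j : ℤ, j < (g : ℤ) →
      Dh (F m (j - 1)) - (nbar m : TS R) * cc (δ A) * F m j
      = ((ε m * (j.negOnePow : ℤ) : ℤ) : TS R) *
        (Dh (F (m.2, m.1) (j - 1)) - (nbar (m.2, m.1) : TS R) * cc (δ A) * F (m.2, m.1) j) := by
    intro m hm j hj
    have h1 : F m (j - 1) = ((ε m * (j.negOnePow : ℤ) : ℤ) : TS R) * F (m.2, m.1) (j - 1) := by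
      have h2 := IHZ (j - 1) (by omega) m hm
      rwa [show j - 1 + 1 = j by ring] at h2
    have h2 := IHZ j hj m hm
    rw [h1, h2, Dmul_int]
    have h3 : ((nbar (m.2, m.1)) : TS R) = -((nbar m : ℤ) : TS R) := by
      rw [nbar_swap]; push_cast; ring
    rw [h3, Int.negOnePow_succ]
    simp only [Units.val_neg]
    push_cast
    ring
  -- Part 1: the linear (one-sector) terms
  have P1 : (∑ h ∈ Finset.Icc 1 g, Dop2 δ c ft al A p Dh (nbar n) h (F n ((g : ℤ) - (h : ℤ))))
      = (s : TS R) * ∑ h ∈ Finset.Icc 1 g,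
          Dop2 δ c ft al A p Dh (nbar (n.2, n.1)) h (F (n.2, n.1) ((g : ℤ) - (h : ℤ))) := by
    rw [Finset.mul_sum]
    refine Finset.sum_congr rfl ?_
    intro h hh
    rw [Finset.mem_Icc] at hh
    have hFh := IHZ ((g : ℤ) - (h : ℤ)) (by omega) n hn
    have hzs : F n ((g : ℤ) - (h : ℤ))
        = ((ε n * (((g : ℤ) - (h : ℤ) + 1).negOnePow : ℤ) : ℤ))
            • F (n.2, n.1) ((g : ℤ) - (h : ℤ)) := by
      rw [zsmul_eq_mul]; exact hFh
    rw [hzs, Dop2_zsmul, nbar_swap, Dop2_neg, zsmul_eq_mul, zsmul_eq_mul]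
    have hsc : ε n * (((g : ℤ) - (h : ℤ) + 1).negOnePow : ℤ) = s * (-1) ^ h := by
      have he : (((g : ℤ) - (h : ℤ) + 1).negOnePow) = (((g + 1 + h : ℕ) : ℤ).negOnePow) := by
        rw [Int.negOnePow_eq_iff]
        exact ⟨-(h : ℤ), by push_cast; ring⟩
      have h7 : ((((g : ℤ) - (h : ℤ) + 1).negOnePow : ℤ)) = (-1 : ℤ) ^ (g + 1 + h) := by
        rw [he, Int.coe_negOnePow_natCast]
      rw [h7, hs, pow_add]
      ring
    rw [hsc]
    push_cast
    ring
  -- Part 2: the quadratic terms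
  have P2 : (∑ m ∈ (Finset.range (n.1 + 1) ×ˢ Finset.range (n.2 + 1)).filter
        (fun m => m ≠ 0 ∧ m ≠ n),
        ∑ h ∈ Finset.range g,
          (Dh (F m ((h : ℤ) - 1)) - (nbar m : TS R) * cc (δ A) * F m (h : ℤ))
          * (Dh (F (n - m) ((g : ℤ) - 2 - (h : ℤ)))
              - (nbar (n - m) : TS R) * cc (δ A) * F (n - m) ((g : ℤ) - 1 - (h : ℤ))))
      = (s : TS R) * ∑ m ∈ (Finset.range (n.2 + 1) ×ˢ Finset.range (n.1 + 1)).filter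
          (fun m => m ≠ 0 ∧ m ≠ (n.2, n.1)),
          ∑ h ∈ Finset.range g,
            (Dh (F m ((h : ℤ) - 1)) - (nbar m : TS R) * cc (δ A) * F m (h : ℤ))
            * (Dh (F ((n.2, n.1) - m) ((g : ℤ) - 2 - (h : ℤ)))
                - (nbar ((n.2, n.1) - m) : TS R) * cc (δ A)
                    * F ((n.2, n.1) - m) ((g : ℤ) - 1 - (h : ℤ))) := by
    rw [Finset.mul_sum]
    refine Finset.sum_nbij' (i := fun m => ((m.2, m.1) : ℕ × ℕ))
      (j := fun m => ((m.2, m.1) : ℕ × ℕ)) ?_ ?_ ?_ ?_ ?_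
    · intro a ha
      simp only [Finset.mem_filter, Finset.mem_product, Finset.mem_range] at ha ⊢
      obtain ⟨⟨ha1, ha2⟩, ha3, ha4⟩ := ha
      refine ⟨⟨ha2, ha1⟩, ?_, ?_⟩
      · intro hcon; apply ha3
        rw [Prod.ext_iff] at hcon ⊢
        exact ⟨by simpa using hcon.2, by simpa using hcon.1⟩
      · intro hcon; apply ha4
        rw [Prod.ext_iff] at hcon ⊢
        exact ⟨by simpa using hcon.2, by simpa using hcon.1⟩
    · intro a ha
      simp only [Finset.mem_filter, Finset.mem_product, Finset.mem_range] at ha ⊢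
      obtain ⟨⟨ha1, ha2⟩, ha3, ha4⟩ := ha
      refine ⟨⟨ha2, ha1⟩, ?_, ?_⟩
      · intro hcon; apply ha3
        rw [Prod.ext_iff] at hcon ⊢
        exact ⟨by simpa using hcon.2, by simpa using hcon.1⟩
      · intro hcon; apply ha4
        rw [Prod.ext_iff] at hcon ⊢
        exact ⟨by simpa using hcon.2, by simpa using hcon.1⟩
    · intro a _; rfl
    · intro a _; rfl
    · intro m hm
      simp only [Finset.mem_filter, Finset.mem_product, Finset.mem_range] at hm
      obtain ⟨⟨hm1, hm2⟩, hm3, hm4⟩ := hm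
      have hmle1 : m.1 ≤ n.1 := by omega
      have hmle2 : m.2 ≤ n.2 := by omega
      have hmadd : m + (n - m) = n := by
        rw [Prod.ext_iff]
        exact ⟨by simpa using Nat.add_sub_cancel' hmle1,
          by simpa using Nat.add_sub_cancel' hmle2⟩
      have hnm0 : n - m ≠ 0 := by
        intro hcon
        apply hm4
        have c1 : n.1 - m.1 = 0 := by simpa using congrArg Prod.fst hcon
        have c2 : n.2 - m.2 = 0 := by simpa using congrArg Prod.snd hcon
        rw [Prod.ext_iff]
        omega
      have hsw : ((n.2, n.1) : ℕ × ℕ) - (m.2, m.1) = ((n - m).2, (n - m).1) := rfl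
      rw [hsw, Finset.mul_sum]
      refine Finset.sum_congr rfl ?_
      intro h hh
      rw [Finset.mem_range] at hh
      rw [show (g : ℤ) - 2 - (h : ℤ) = ((g : ℤ) - 1 - (h : ℤ)) - 1 by ring]
      rw [factor m hm3 (h : ℤ) (by exact_mod_cast hh),
        factor (n - m) hnm0 ((g : ℤ) - 1 - (h : ℤ)) (by omega)]
      have hε : ε m * ε (n - m) = ε n := by rw [← hεadd, hmadd]
      have hnp : (((h : ℤ).negOnePow : ℤ)) * ((((g : ℤ) - 1 - (h : ℤ)).negOnePow : ℤ))
          = (-1 : ℤ) ^ (g + 1) := by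
        have h6 : ((h : ℤ).negOnePow) * (((g : ℤ) - 1 - (h : ℤ)).negOnePow)
            = (((g + 1 : ℕ) : ℤ)).negOnePow := by
          rw [← Int.negOnePow_add, Int.negOnePow_eq_iff]
          exact ⟨-1, by push_cast; ring⟩
        have h7 := congrArg (fun u : ℤˣ => (u : ℤ)) h6
        simp only [Units.val_mul, Int.coe_negOnePow_natCast] at h7
        exact h7
      have hsign : (ε m * ((h : ℤ).negOnePow : ℤ))
          * (ε (n - m) * (((g : ℤ) - 1 - (h : ℤ)).negOnePow : ℤ)) = s := by
        rw [hs, ← hε, ← hnp]; ring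
      have hc : ((ε m * ((h : ℤ).negOnePow : ℤ) : ℤ) : TS R)
          * ((ε (n - m) * (((g : ℤ) - 1 - (h : ℤ)).negOnePow : ℤ) : ℤ) : TS R)
          = ((s : ℤ) : TS R) := by
        rw [← Int.cast_mul, hsign]
      rw [mul_mul_mul_comm, hc]
  -- assemble the two equations
  have hnn := hswapne n hn
  have E1 := heq n hn g
  have E2 : Dp (F (n.2, n.1) (g : ℤ))
      - (2 : ℚ)⁻¹ • (((nbar (n.2, n.1) : TS R)) ^ 2 * cc (δ A) ^ 2 * F (n.2, n.1) (g : ℤ))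
      = -(∑ h ∈ Finset.Icc 1 g,
            Dop2 δ c ft al A p Dh (nbar (n.2, n.1)) h (F (n.2, n.1) ((g : ℤ) - (h : ℤ))))
        + (2 : ℚ)⁻¹ • ∑ m ∈ (Finset.range (n.2 + 1) ×ˢ Finset.range (n.1 + 1)).filter
            (fun m => m ≠ 0 ∧ m ≠ (n.2, n.1)),
            ∑ h ∈ Finset.range g,
              (Dh (F m ((h : ℤ) - 1)) - (nbar m : TS R) * cc (δ A) * F m (h : ℤ))
              * (Dh (F ((n.2, n.1) - m) ((g : ℤ) - 2 - (h : ℤ)))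
                  - (nbar ((n.2, n.1) - m) : TS R) * cc (δ A)
                      * F ((n.2, n.1) - m) ((g : ℤ) - 1 - (h : ℤ))) := heq (n.2, n.1) hnn g
  rw [P1, P2] at E1
  have hb2 : ((nbar (n.2, n.1) : TS R)) ^ 2 = ((nbar n : TS R)) ^ 2 := by
    rw [nbar_swap]; push_cast; ring
  rw [hb2] at E2
  have hx : Dp (F n (g : ℤ) - (s : TS R) * F (n.2, n.1) (g : ℤ))
      = (2 : ℚ)⁻¹ • (((nbar n : TS R)) ^ 2 * cc (δ A) ^ 2
          * (F n (g : ℤ) - (s : TS R) * F (n.2, n.1) (g : ℤ))) := by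
    rw [map_sub, Dmul_int]
    simp only [Algebra.smul_def] at E1 E2 ⊢
    linear_combination E1 - (s : TS R) * E2
  have h0 : (F n (g : ℤ) - (s : TS R) * F (n.2, n.1) (g : ℤ)).map
      (Polynomial.evalRingHom (0 : R)) = 0 := by
    rw [Polynomial.map_sub, Polynomial.map_mul, Polynomial.map_intCast, hamb n hn g, ← hs,
      zsmul_eq_mul, sub_self]
  have hy := kernel_lemma Dp (δ A) hA hDpC hDpS hDpT (nbar n) _ hx h0
  rw [sub_eq_zero] at hy
  rw [zsmul_eq_mul]
  exact hy


end
end
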